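/- arXiv:math/9810143 — 4 statements merged into one kernel-verified Lean document; each statement's English description precedes it below -/
import Mathlib

section
/- The number of tilings by lozenges of a (k,q,k) dented upper semi-hexagon with dents at positions 0 ≤ r_0 < r_1 < ... < r_{k-1} < q+k equals (1/V_{k-1}) · ∏_{0 ≤ i < j < k} (r_j - r_i), where V_n = 1!·2!···n!. -/
/-- The superfactorial `V n = 1! · 2! ⋯ n!`. -/
def V (n : ℕ) : ℕ := ∏ i ∈ Finset.range (n + 1), Nat.factorial i

/-- Unit triangles in the triangular lattice, living in horizontal rows indexed
by integers.  An upward-pointing triangle in row `i ≥ 0` at position `p` has its base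
`[i/2 + p, i/2 + p + 1]` at height `i`; a downward-pointing triangle in row `i ≥ 0`
at position `p` has its top edge `[(i+1)/2 + p, (i+1)/2 + p + 1]` at height `i+1`.
Rows `i < 0` are indexed as the mirror image (through the axis `y = 0`) of row `-1-i`.
`TriAdj u d` says the upward triangle `u` and the downward triangle `d` share an edge,
i.e. together they form a lozenge. -/
def TriAdj (u d : ℤ × ℕ) : Prop :=
  (u.1 = d.1 ∧ 0 ≤ u.1 ∧ (d.2 = u.2 ∨ d.2 + 1 = u.2)) ∨
  (u.1 = d.1 ∧ u.1 < 0 ∧ (d.2 = u.2 ∨ d.2 = u.2 + 1)) ∨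
  (u.1 = d.1 + 1 ∧ d.2 = u.2)

/-- `IsLozengeTiling Up Down T`: `T` is a lozenge tiling of the region whose
upward-pointing triangles are given by the predicate `Up` and whose
downward-pointing triangles are given by `Down`.  Each member of `T` is a lozenge
(an adjacent up/down pair of triangles of the region) and every triangle of the
region is covered by exactly one lozenge of `T`. -/
def IsLozengeTiling (Up Down : ℤ × ℕ → Prop)
    (T : Finset ((ℤ × ℕ) × (ℤ × ℕ))) : Prop :=
  (∀ c ∈ T, Up c.1 ∧ Down c.2 ∧ TriAdj c.1 c.2) ∧
  (∀ u, Up u → ∃! c, c ∈ T ∧ c.1 = u) ∧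
  (∀ d, Down d → ∃! c, c ∈ T ∧ c.2 = d)

/-- Upward triangles of the `(k,q,k)` dented upper semi-hexagon: rows `0,…,k-1`,
row `i` having `q+k-i` upward triangles, with the upward triangles at positions
`r 0, …, r (k-1)` removed from the bottom row (the side of length `q+k`). -/
def SemiHexUp (k q : ℕ) (r : Fin k → ℕ) (u : ℤ × ℕ) : Prop :=
  0 ≤ u.1 ∧ u.1 < (k : ℤ) ∧ (u.2 : ℤ) + u.1 < (q : ℤ) + k ∧
    (u.1 = 0 → ∀ t : Fin k, r t ≠ u.2)

/-- Downward triangles of the `(k,q,k)` upper semi-hexagon: rows `0,…,k-1`,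
row `i` having `q+k-i-1` downward triangles. -/
def SemiHexDown (k q : ℕ) (d : ℤ × ℕ) : Prop :=
  0 ≤ d.1 ∧ d.1 < (k : ℤ) ∧ (d.2 : ℤ) + d.1 + 1 < (q : ℤ) + k

set_option linter.unusedSectionVars false
set_option linter.unusedTactic false
set_option maxHeartbeats 1000000

open Finset



def detB (k : ℕ) (r : Fin k → ℕ) : ℚ :=
  (Matrix.of (fun i j : Fin k => ((r i).choose (j : ℕ) : ℚ))).det

@[simp] lemma detB_zero (r : Fin 0 → ℕ) : detB 0 r = 1 := Matrix.det_fin_zero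

lemma hockey (a j : ℕ) : ∀ b, a ≤ b →
    ∑ x ∈ Ico a b, ((x.choose j : ℚ)) = (b.choose (j+1) : ℚ) - (a.choose (j+1)) := by
  intro b hb
  induction b, hb using Nat.le_induction with
  | base => simp
  | succ n hn ih =>
      rw [Finset.sum_Ico_succ_top hn, ih, Nat.choose_succ_succ n j]
      push_cast; ring

lemma detB_succ (k : ℕ) (r : Fin (k+1) → ℕ) (hr : Monotone r) :
    detB (k+1) r = ∑ s ∈ Fintype.piFinset
      (fun i : Fin k => Finset.Ico (r i.castSucc) (r i.succ)), detB k s := by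
  classical
  set L : Matrix (Fin (k+1)) (Fin (k+1)) ℚ :=
    Matrix.of (fun i j : Fin (k+1) =>
      (if i = j then (1:ℚ) else 0) - (if (j:ℕ)+1 = (i:ℕ) then 1 else 0)) with hL
  have hLtri : L.BlockTriangular OrderDual.toDual := by
    intro i j hij
    have hij' : (i:ℕ) < (j:ℕ) := hij
    have h1 : ¬ (i = j) := by intro h; subst h; omega
    have h2 : ¬ ((j:ℕ)+1 = (i:ℕ)) := by omega
    simp [hL, h1, h2]
  have hdetL : L.det = 1 := by
    rw [Matrix.det_of_lowerTriangular L hLtri]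
    have : ∀ i : Fin (k+1), L i i = 1 := by
      intro i
      have : ¬ ((i:ℕ)+1 = (i:ℕ)) := by omega
      simp [hL, this]
    simp [this]
  set M : Matrix (Fin (k+1)) (Fin (k+1)) ℚ :=
    Matrix.of (fun i j : Fin (k+1) => ((r i).choose (j : ℕ) : ℚ)) with hM
  have h1 : detB (k+1) r = (L * M).det := by
    rw [Matrix.det_mul, hdetL, one_mul]; rfl
  -- entries of L * M
  have hN0 : ∀ j, (L * M) 0 j = M 0 j := by
    intro j
    rw [Matrix.mul_apply]
    have : ∀ l : Fin (k+1), L 0 l * M l j = (if l = 0 then M 0 j else 0) := by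
      intro l
      rcases eq_or_ne l 0 with h | h
      · subst h; simp [hL]
      · have h1 : ¬ ((0:Fin (k+1)) = l) := fun hh => h hh.symm
        have h2 : ¬ ((l:ℕ)+1 = ((0:Fin (k+1)):ℕ)) := by simp
        rw [if_neg (fun hh => h hh)]
        simp [hL, h1, h2]
    rw [Finset.sum_congr rfl (fun l _ => this l)]
    simp
  have hNs : ∀ (t : Fin k) (j : Fin (k+1)),
      (L * M) t.succ j = M t.succ j - M t.castSucc j := by
    intro t j
    rw [Matrix.mul_apply]
    have : ∀ l : Fin (k+1), L t.succ l * M l j =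
        (if l = t.succ then M t.succ j else 0) - (if l = t.castSucc then M t.castSucc j else 0) := by
      intro l
      rcases eq_or_ne l t.succ with h | h
      · subst h
        have h2 : ¬ ((t.succ:ℕ)+1 = (t.succ:ℕ)) := by omega
        have h3 : (t.succ : Fin (k+1)) ≠ t.castSucc := by
          intro hh
          have := congrArg (Fin.val) hh
          simp at this
        simp [hL, h2, h3]
      · rcases eq_or_ne l t.castSucc with h' | h'
        · subst h'
          have h2 : (t.castSucc:ℕ)+1 = (t.succ:ℕ) := by simp
          have h3 : ¬ (t.succ = t.castSucc) := by
            intro hh; have := congrArg (Fin.val) hh; simp at this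
          simp [hL, h2, h3]
          rw [if_neg h]
          ring
        · have h2 : ¬ (t.succ = l) := fun hh => h hh.symm
          have h3 : ¬ ((l:ℕ)+1 = (t.succ:ℕ)) := by
            intro hh
            apply h'
            have : (l:ℕ) = (t.castSucc:ℕ) := by simp at hh ⊢; omega
            exact Fin.ext this
          have h4 : ¬ ((l:ℕ) = (t:ℕ)) := by
            intro hh; exact h' (Fin.ext (by simpa using hh))
          simp [hL, h2, h3, h, h', h4]
    rw [Finset.sum_congr rfl (fun l _ => this l), Finset.sum_sub_distrib]
    simp
  -- expand along column 0
  have h2 : (L * M).det = ((L * M).submatrix Fin.succ Fin.succ).det := by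
    rw [Matrix.det_succ_column_zero]
    rw [Finset.sum_eq_single 0]
    · simp only [Fin.val_zero, pow_zero, one_mul, Fin.succAbove_zero]
      rw [hN0]
      simp [hM]
    · intro i _ hi
      obtain ⟨t, rfl⟩ := Fin.eq_succ_of_ne_zero hi
      rw [hNs]
      simp [hM]
    · intro h; exact absurd (Finset.mem_univ _) h
  -- the submatrix as a sum
  have h3 : ∀ (i j : Fin k), ((L * M).submatrix Fin.succ Fin.succ) i j
      = ∑ x ∈ Ico (r i.castSucc) (r i.succ), ((x.choose (j:ℕ) : ℚ)) := by
    intro i j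
    rw [Matrix.submatrix_apply, hNs]
    rw [hockey _ _ _ (hr (by exact (Fin.castSucc_le_succ i)))]
    simp [hM]
  rw [h1, h2]
  -- multilinearity
  have h4 : ((L * M).submatrix Fin.succ Fin.succ) =
      Matrix.of (fun i => ∑ x ∈ Ico (r i.castSucc) (r i.succ), (fun j : Fin k => ((x.choose (j:ℕ) : ℚ)))) := by
    ext i j
    rw [h3]
    simp only [Matrix.of_apply]
    rw [Finset.sum_apply]
  rw [h4]
  have := (Matrix.detRowAlternating : (Fin k → ℚ) [⋀^Fin k]→ₗ[ℚ] ℚ).toMultilinearMap.map_sum_finset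
    (fun i x => (fun j : Fin k => ((x.choose (j:ℕ) : ℚ)))) (fun i => Ico (r i.castSucc) (r i.succ))
  exact this





lemma prod_pairs (k : ℕ) (f : Fin k → Fin k → ℚ) :
    ∏ p ∈ Finset.univ.filter (fun p : Fin k × Fin k => p.1 < p.2), f p.1 p.2
      = ∏ i : Fin k, ∏ j ∈ Ioi i, f i j := by
  have hs := Finset.prod_sigma (univ : Finset (Fin k)) (fun i => Ioi i) (fun x => f x.1 x.2)
  rw [← hs]
  apply Finset.prod_nbij' (fun p : Fin k × Fin k => (⟨p.1, p.2⟩ : Σ _ : Fin k, Fin k))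
    (fun x => (x.1, x.2))
  · intro p hp
    simp only [Finset.mem_filter] at hp
    simp [hp.2]
  · intro a ha
    simp only [Finset.mem_sigma, Finset.mem_Ioi] at ha
    simp [ha.2]
  · intro a _; rfl
  · intro p _; rfl
  · intro a _; rfl

lemma vandermonde_detB (k : ℕ) (r : Fin k → ℕ) :
    (Matrix.vandermonde (fun i : Fin k => (r i : ℚ))).det
      = (∏ i : Fin k, ((Nat.factorial (i:ℕ) : ℚ))) * detB k r := by
  rw [Matrix.det_eval_matrixOfPolynomials_eq_det_vandermonde
      (fun i : Fin k => (r i : ℚ)) (fun i => descPochhammer ℚ i)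
      (fun i => descPochhammer_natDegree ℚ i) (fun i => monic_descPochhammer ℚ i)]
  have : (Matrix.of fun (i j : Fin k) => Polynomial.eval ((r i : ℚ)) (descPochhammer ℚ (j:ℕ)))
      = Matrix.of fun (i j : Fin k) => (Nat.factorial (j:ℕ) : ℚ) * ((r i).choose (j:ℕ) : ℚ) := by
    ext i j
    rw [Matrix.of_apply, Matrix.of_apply, descPochhammer_eval_eq_descFactorial ℚ _ _,
      Nat.descFactorial_eq_factorial_mul_choose]
    push_cast; ring
  rw [this]
  exact Matrix.det_mul_row (fun j : Fin k => (Nat.factorial (j:ℕ) : ℚ)) _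

lemma detB_formula (k : ℕ) (hk : 1 ≤ k) (r : Fin k → ℕ) :
    detB k r = (1 / (V (k - 1) : ℚ)) *
        ∏ p ∈ Finset.univ.filter (fun p : Fin k × Fin k => p.1 < p.2),
          ((r p.2 : ℚ) - (r p.1 : ℚ)) := by
  have hV : (V (k-1) : ℚ) = ∏ i : Fin k, ((Nat.factorial (i:ℕ) : ℚ)) := by
    rw [V]
    have : k - 1 + 1 = k := by omega
    rw [this, Fin.prod_univ_eq_prod_range (fun i => ((Nat.factorial i : ℚ)))]
    push_cast
    rfl
  have hVne : (∏ i : Fin k, ((Nat.factorial (i:ℕ) : ℚ))) ≠ 0 := by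
    apply Finset.prod_ne_zero_iff.2
    intro i _
    exact_mod_cast (Nat.factorial_pos _).ne'
  have h := vandermonde_detB k r
  rw [Matrix.det_vandermonde] at h
  rw [prod_pairs k (fun a b => ((r b : ℚ) - (r a : ℚ))), hV]
  rw [eq_comm, div_mul_eq_mul_div, one_mul, div_eq_iff hVne, mul_comm]
  exact h

-- ### counting
def cnt {n : ℕ} (r : Fin n → ℕ) (p : ℕ) : ℕ := ∑ t, if r t < p then 1 else 0

lemma cnt_zero {n : ℕ} (r : Fin n → ℕ) : cnt r 0 = 0 := by simp [cnt]

lemma cnt_succ {n : ℕ} (r : Fin n → ℕ) (hinj : Function.Injective r) (p : ℕ) :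
    cnt r (p+1) = cnt r p + (if ∃ t, r t = p then 1 else 0) := by
  have h : ∀ t : Fin n, (if r t < p+1 then (1:ℕ) else 0)
      = (if r t < p then 1 else 0) + (if r t = p then 1 else 0) := by
    intro t
    rcases Nat.lt_trichotomy (r t) p with h | h | h
    · simp [h, Nat.lt_succ_of_lt h, Nat.ne_of_lt h]
    · simp [h]
    · have h1 : ¬ (r t < p + 1) := by omega
      have h2 : ¬ (r t < p) := by omega
      have h3 : ¬ (r t = p) := by omega
      simp [h1, h2, h3]
  rw [cnt, Finset.sum_congr rfl (fun t _ => h t), Finset.sum_add_distrib]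
  congr 1
  by_cases he : ∃ t, r t = p
  · obtain ⟨t0, ht0⟩ := he
    rw [Finset.sum_eq_single t0]
    · rw [if_pos ht0, if_pos ⟨t0, ht0⟩]
    · intro t _ ht; rw [if_neg]; intro hh; exact ht (hinj (hh.trans ht0.symm))
    · intro h; exact absurd (Finset.mem_univ _) h
  · rw [if_neg he, Finset.sum_eq_zero]
    intro t _
    rw [if_neg (fun hh => he ⟨t, hh⟩)]

lemma cnt_mono {n : ℕ} (r : Fin n → ℕ) {p p' : ℕ} (h : p ≤ p') : cnt r p ≤ cnt r p' := by
  apply Finset.sum_le_sum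
  intro t _
  by_cases ht : r t < p
  · simp [ht, lt_of_lt_of_le ht h]
  · simp [ht]

lemma cnt_all {n : ℕ} (r : Fin n → ℕ) (p : ℕ) (h : ∀ t, r t < p) : cnt r p = n := by
  rw [cnt, Finset.sum_congr rfl (fun t _ => if_pos (h t))]
  simp

lemma cnt_le {n : ℕ} (r : Fin n → ℕ) (p : ℕ) : cnt r p ≤ n := by
  calc cnt r p ≤ ∑ t : Fin n, 1 := Finset.sum_le_sum (by intro t _; split <;> simp)
  _ = n := by simp

-- strictMono count at its own values
lemma cnt_strictMono_at {n : ℕ} (r : Fin n → ℕ) (hr : StrictMono r) (t : Fin n) :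
    cnt r (r t) = t := by
  have h : ∀ t' : Fin n, (if r t' < r t then (1:ℕ) else 0) = (if t' < t then 1 else 0) := by
    intro t'
    by_cases h : t' < t
    · simp [h, hr h]
    · have : ¬ r t' < r t := fun hh => h (hr.lt_iff_lt.1 hh)
      simp [h, this]
  rw [cnt, Finset.sum_congr rfl (fun t' _ => h t'), ← Finset.card_filter]
  have : Finset.univ.filter (fun t' : Fin n => t' < t) = Finset.Iio t := by
    ext x; simp
  rw [this, Fin.card_Iio]

def vertLoz (d : ℕ) : (ℤ×ℕ)×(ℤ×ℕ) := (((1:ℤ), d), ((0:ℤ), d))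
def horizLoz (u d : ℕ) : (ℤ×ℕ)×(ℤ×ℕ) := (((0:ℤ), u), ((0:ℤ), d))
def shiftLoz (c : (ℤ×ℕ)×(ℤ×ℕ)) : (ℤ×ℕ)×(ℤ×ℕ) := ((c.1.1+1, c.1.2), (c.2.1+1, c.2.2))
def unshiftLoz (c : (ℤ×ℕ)×(ℤ×ℕ)) : (ℤ×ℕ)×(ℤ×ℕ) := ((c.1.1-1, c.1.2), (c.2.1-1, c.2.2))

lemma shift_inj : Function.Injective shiftLoz := by
  rintro ⟨⟨a,b⟩,⟨c,d⟩⟩ ⟨⟨a',b'⟩,⟨c',d'⟩⟩ h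
  simp only [shiftLoz, Prod.mk.injEq, Prod.ext_iff] at h ⊢
  constructor
  · exact ⟨by omega, h.1.2⟩
  · exact ⟨by omega, h.2.2⟩

lemma unshift_shift (c : (ℤ×ℕ)×(ℤ×ℕ)) : unshiftLoz (shiftLoz c) = c := by
  simp [shiftLoz, unshiftLoz]

def rowTiles (k q : ℕ) (r : Fin (k+1) → ℕ) (s : Fin k → ℕ) : Finset ((ℤ×ℕ)×(ℤ×ℕ)) :=
  (Finset.univ.image (fun i => vertLoz (s i))) ∪
  (((Finset.range (q+k+1)).filter (fun u => ∀ t, r t ≠ u)).image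
     (fun u => horizLoz u (u - (cnt r u - cnt s u))))

def bigT (k q : ℕ) (r : Fin (k+1) → ℕ) (s : Fin k → ℕ) (T' : Finset ((ℤ×ℕ)×(ℤ×ℕ))) :
    Finset ((ℤ×ℕ)×(ℤ×ℕ)) :=
  rowTiles k q r s ∪ T'.image shiftLoz

lemma mem_bigT {k q : ℕ} {r : Fin (k+1) → ℕ} {s : Fin k → ℕ} {T' : Finset ((ℤ×ℕ)×(ℤ×ℕ))}
    {c : (ℤ×ℕ)×(ℤ×ℕ)} : c ∈ bigT k q r s T' ↔
      (∃ i, c = vertLoz (s i)) ∨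
      (∃ u, u < q+k+1 ∧ (∀ t, r t ≠ u) ∧ c = horizLoz u (u - (cnt r u - cnt s u))) ∨
      (∃ c' ∈ T', c = shiftLoz c') := by
  simp only [bigT, rowTiles, Finset.mem_union, Finset.mem_image, Finset.mem_filter,
    Finset.mem_range, Finset.mem_univ, true_and]
  constructor
  · rintro ((⟨i, hi⟩ | ⟨u, ⟨hu1, hu2⟩, hu3⟩) | ⟨c', hc1, hc2⟩)
    · exact Or.inl ⟨i, hi.symm⟩
    · exact Or.inr (Or.inl ⟨u, hu1, hu2, hu3.symm⟩)
    · exact Or.inr (Or.inr ⟨c', hc1, hc2.symm⟩)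
  · rintro (⟨i, hi⟩ | ⟨u, hu1, hu2, hu3⟩ | ⟨c', hc1, hc2⟩)
    · exact Or.inl (Or.inl ⟨i, hi.symm⟩)
    · exact Or.inl (Or.inr ⟨u, ⟨hu1, hu2⟩, hu3.symm⟩)
    · exact Or.inr ⟨c', hc1, hc2.symm⟩

section Interlace

variable {k q : ℕ} {r : Fin (k+1) → ℕ} {s : Fin k → ℕ}
variable (hr : StrictMono r) (hb : ∀ t, r t < q+k+1)
variable (hs1 : ∀ i, r i.castSucc ≤ s i) (hs2 : ∀ i, s i < r i.succ)

include hr hs1 hs2 in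
lemma s_strictMono : StrictMono s := by
  intro i j hij
  calc s i < r i.succ := hs2 i
  _ ≤ r j.castSucc := by
    apply hr.monotone
    have h1 : (i.succ : ℕ) = (i:ℕ)+1 := rfl
    have h2 : (j.castSucc : ℕ) = (j:ℕ) := rfl
    have : (i:ℕ) < (j:ℕ) := hij
    rw [Fin.le_def]; omega
  _ ≤ s j := hs1 j

include hr hs1 in
lemma cnt_s_le (p : ℕ) : cnt s p ≤ cnt r p := by
  rw [cnt, cnt, Fin.sum_univ_castSucc (fun t : Fin (k+1) => if r t < p then 1 else 0)]
  have : ∀ j : Fin k, (if s j < p then (1:ℕ) else 0) ≤ (if r j.castSucc < p then 1 else 0) := by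
    intro j
    by_cases h : s j < p
    · simp [h, lt_of_le_of_lt (hs1 j) h]
    · simp [h]
  calc ∑ j, (if s j < p then (1:ℕ) else 0) ≤ ∑ j, (if r j.castSucc < p then 1 else 0) :=
        Finset.sum_le_sum (fun j _ => this j)
  _ ≤ _ := Nat.le_add_right _ _

include hr hs2 in
lemma cnt_r_le (p : ℕ) : cnt r p ≤ cnt s p + 1 := by
  rw [cnt, cnt, Fin.sum_univ_succ (fun t : Fin (k+1) => if r t < p then 1 else 0)]
  have : ∀ j : Fin k, (if r j.succ < p then (1:ℕ) else 0) ≤ (if s j < p then 1 else 0) := by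
    intro j
    by_cases h : r j.succ < p
    · simp [h, lt_trans (hs2 j) h]
    · simp [h]
  have h2 : ∑ j, (if r (Fin.succ j) < p then (1:ℕ) else 0) ≤ ∑ j, (if s j < p then 1 else 0) :=
    Finset.sum_le_sum (fun j _ => this j)
  have h3 : (if r 0 < p then (1:ℕ) else 0) ≤ 1 := by split <;> simp
  omega

-- helper: counting j : Fin k with (j:ℕ) < c
lemma card_fin_lt (n c : ℕ) (hc : c ≤ n) :
    (∑ j : Fin n, if (j:ℕ) < c then 1 else 0) = c := by
  rw [← Finset.card_filter]
  rcases Nat.lt_or_ge c n with h | h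
  · have : Finset.univ.filter (fun j : Fin n => (j:ℕ) < c) = Finset.Iio ⟨c, h⟩ := by
      ext x; simp [Fin.lt_def]
    rw [this, Fin.card_Iio]
  · have hck : c = n := le_antisymm hc h
    subst hck
    have : Finset.univ.filter (fun j : Fin c => (j:ℕ) < c) = Finset.univ := by
      ext x; simp [x.isLt]
    rw [this]
    simp
include hr hs1 hs2 in
lemma cnt_dent (t : Fin (k+1)) : cnt s (r t) = cnt r (r t) := by
  rw [cnt_strictMono_at r hr t]
  have : ∀ j : Fin k, (if s j < r t then (1:ℕ) else 0) = (if (j:ℕ) < (t:ℕ) then 1 else 0) := by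
    intro j
    by_cases h : (j:ℕ) < (t:ℕ)
    · have : s j < r t := by
        calc s j < r j.succ := hs2 j
        _ ≤ r t := hr.monotone (by rw [Fin.le_def]; simpa using h)
      simp [h, this]
    · have : ¬ (s j < r t) := by
        have : r t ≤ r j.castSucc := hr.monotone (by rw [Fin.le_def]; simpa using Nat.le_of_not_lt h)
        have := le_trans this (hs1 j)
        omega
      simp [h, this]
  rw [cnt, Finset.sum_congr rfl (fun j _ => this j)]
  exact card_fin_lt k t (by omega)


end Interlace

section Interlace
variable {k q : ℕ} {r : Fin (k+1) → ℕ} {s : Fin k → ℕ}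
variable (hr : StrictMono r) (hb : ∀ t, r t < q+k+1)
variable (hs1 : ∀ i, r i.castSucc ≤ s i) (hs2 : ∀ i, s i < r i.succ)

include hr hs1 hs2

lemma L_ab (p : ℕ) : cnt r p = cnt s p ∨ cnt r p = cnt s p + 1 := by
  have h1 := cnt_s_le hr hs1 p
  have h2 := cnt_r_le hr hs2 p
  omega

lemma L_dent {p : ℕ} (h : ∃ t, r t = p) : cnt r p = cnt s p := by
  obtain ⟨t, rfl⟩ := h
  exact (cnt_dent hr hs1 hs2 t).symm

lemma L_sv_cr0 {p : ℕ} (h : ∃ j, s j = p) : cnt r (p+1) = cnt s (p+1) := by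
  have hsm := s_strictMono hr hs1 hs2
  have es := cnt_succ s hsm.injective p
  rw [if_pos h] at es
  have er := cnt_succ r hr.injective p
  rcases L_ab hr hs1 hs2 (p+1) with h0 | h1
  · exact h0
  · exfalso
    by_cases hd : ∃ t, r t = p
    · have := L_dent hr hs1 hs2 hd
      rw [if_pos hd] at er
      omega
    · rw [if_neg hd] at er
      have := cnt_r_le hr hs2 p
      omega

lemma L_cr0_nsv {p : ℕ} (h : cnt r p = cnt s p) (hd : ¬ ∃ t, r t = p) : ¬ ∃ j, s j = p := by
  intro hsv
  have hsm := s_strictMono hr hs1 hs2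
  have es := cnt_succ s hsm.injective p
  rw [if_pos hsv] at es
  have er := cnt_succ r hr.injective p
  rw [if_neg hd] at er
  have := cnt_s_le hr hs1 (p+1)
  omega

include hb in
lemma L_last (h : ¬ ∃ t, r t = q+k) : cnt r (q+k) = cnt s (q+k) + 1 := by
  have e1 : cnt r (q+k+1) = k+1 := cnt_all r _ hb
  have er := cnt_succ r hr.injective (q+k)
  rw [if_neg h] at er
  have := cnt_le s (q+k)
  have := cnt_s_le hr hs1 (q+k)
  have := cnt_r_le hr hs2 (q+k)
  omega

omit hs2 in
lemma L_cr1_pos {p : ℕ} (h : cnt r p = cnt s p + 1) : 0 < p := by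
  rcases Nat.eq_zero_or_pos p with rfl | hp
  · rw [cnt_zero, cnt_zero] at h; omega
  · exact hp

include hb in
lemma L_sv_lt {p : ℕ} (h : ∃ j, s j = p) : p < q + k := by
  obtain ⟨j, rfl⟩ := h
  have h1 := hs2 j
  have h2 := hb j.succ
  omega

end Interlace


section Construct
variable {k q : ℕ} {r : Fin (k+1) → ℕ} {s : Fin k → ℕ}
variable (hr : StrictMono r) (hb : ∀ t, r t < q+k+1)
variable (hs1 : ∀ i, r i.castSucc ≤ s i) (hs2 : ∀ i, s i < r i.succ)

include hr hb hs1 hs2 in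
theorem bigT_tiling (T' : Finset ((ℤ×ℕ)×(ℤ×ℕ)))
    (hT' : IsLozengeTiling (SemiHexUp k q s) (SemiHexDown k q) T') :
    IsLozengeTiling (SemiHexUp (k+1) q r) (SemiHexDown (k+1) q) (bigT k q r s T') := by
  obtain ⟨hT1, hT2, hT3⟩ := hT'
  have rinj : Function.Injective r := hr.injective
  have smono : StrictMono s := s_strictMono hr hs1 hs2
  have sinj : Function.Injective s := smono.injective
  refine ⟨?_, ?_, ?_⟩
  -- ### condition 1
  · intro c hc
    rcases mem_bigT.1 hc with ⟨i, rfl⟩ | ⟨u, hu1, hu2, rfl⟩ | ⟨c', hc', rfl⟩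
    · -- vertical
      have hsb : s i < q + k := L_sv_lt hr hb hs1 hs2 ⟨i, rfl⟩
      refine ⟨⟨by norm_num [vertLoz], by have := i.pos; simp only [vertLoz]; push_cast; omega, ?_, ?_⟩, ⟨by norm_num [vertLoz], by norm_num [vertLoz], ?_⟩, ?_⟩
      · simp only [vertLoz]; push_cast; omega
      · intro h; simp [vertLoz] at h
      · simp only [vertLoz]; push_cast; omega
      · right; right; simp [vertLoz, TriAdj]
    · -- horizontal
      have hne : u ≠ q + k ∨ cnt r u = cnt s u + 1 := by
        by_cases h : u = q + k
        · subst h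
          exact Or.inr (L_last hr hb hs1 hs2 (by simpa using fun t => (hu2 t)))
        · exact Or.inl h
      rcases L_ab hr hs1 hs2 u with h0 | h1
      · -- cross 0 : lozenge is (u,u)
        have hd : u - (cnt r u - cnt s u) = u := by omega
        have hult : u < q + k := by
          rcases hne with h | h
          · omega
          · omega
        rw [hd]
        refine ⟨⟨by norm_num [horizLoz], by norm_num [horizLoz], ?_, ?_⟩,
          ⟨by norm_num [horizLoz], by norm_num [horizLoz], ?_⟩, ?_⟩
        · simp only [horizLoz]; push_cast; omega
        · intro _ t; simpa [horizLoz] using hu2 t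
        · simp only [horizLoz]; push_cast; omega
        · left; refine ⟨rfl, by norm_num [horizLoz], Or.inl rfl⟩
      · -- cross 1 : lozenge is (u, u-1)
        have hpos : 0 < u := L_cr1_pos hr hs1 h1
        have hd : u - (cnt r u - cnt s u) = u - 1 := by omega
        rw [hd]
        refine ⟨⟨by norm_num [horizLoz], by norm_num [horizLoz], ?_, ?_⟩,
          ⟨by norm_num [horizLoz], by norm_num [horizLoz], ?_⟩, ?_⟩
        · simp only [horizLoz]; push_cast; omega
        · intro _ t; simpa [horizLoz] using hu2 t
        · simp only [horizLoz]; push_cast; omega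
        · left
          refine ⟨rfl, by norm_num [horizLoz], Or.inr ?_⟩
          simp only [horizLoz]
          omega
    · -- shifted
      obtain ⟨hU, hD, hA⟩ := hT1 c' hc'
      obtain ⟨e1, e2, e3, _⟩ := hU
      obtain ⟨f1, f2, f3⟩ := hD
      refine ⟨⟨?_, ?_, ?_, ?_⟩, ⟨?_, ?_, ?_⟩, ?_⟩
      · simp only [shiftLoz]; omega
      · simp only [shiftLoz]; push_cast; push_cast at e2; omega
      · simp only [shiftLoz]; push_cast; push_cast at e3; omega
      · intro h; simp only [shiftLoz] at h; omega
      · simp only [shiftLoz]; omega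
      · simp only [shiftLoz]; push_cast; push_cast at f2; omega
      · simp only [shiftLoz]; push_cast; push_cast at f3; omega
      · rcases hA with ⟨g1, g2, g3⟩ | ⟨g1, g2, g3⟩ | ⟨g1, g2⟩
        · left; exact ⟨by simp only [shiftLoz]; omega, by simp only [shiftLoz]; omega,
            by simpa [shiftLoz] using g3⟩
        · omega
        · right; right
          exact ⟨by simp only [shiftLoz]; omega, by simpa [shiftLoz] using g2⟩
  -- ### condition 2 : ups
  · rintro ⟨ui, up⟩ ⟨hu0, hu1, hu2, hu3⟩
    simp only at hu0 hu1 hu2 hu3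
    obtain ⟨x, rfl⟩ := Int.eq_ofNat_of_zero_le hu0
    match x with
    | 0 =>
      have hup : up < q+k+1 := by push_cast at hu2; omega
      have hdent : ∀ t, r t ≠ up := by
        intro t
        exact hu3 (by norm_num) t
      refine ⟨horizLoz up (up - (cnt r up - cnt s up)),
        ⟨mem_bigT.2 (Or.inr (Or.inl ⟨up, hup, hdent, rfl⟩)), by simp [horizLoz]⟩, ?_⟩
      rintro c ⟨hcT, hc1⟩
      rcases mem_bigT.1 hcT with ⟨i, rfl⟩ | ⟨u', h1, h2, rfl⟩ | ⟨c', hc', rfl⟩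
      · exfalso
        simp only [vertLoz, Prod.ext_iff] at hc1
        have := hc1.1
        norm_num at this
      · have : u' = up := by
          simp only [horizLoz, Prod.ext_iff] at hc1
          exact hc1.2
        subst this; rfl
      · exfalso
        have := (hT1 c' hc').1.1
        simp only [shiftLoz, Prod.ext_iff] at hc1
        have h := hc1.1
        omega
    | Nat.succ x =>
      by_cases hv : x = 0 ∧ ∃ i, s i = up
      · obtain ⟨hx0, i, hi⟩ := hv
        subst hx0
        refine ⟨vertLoz (s i), ⟨mem_bigT.2 (Or.inl ⟨i, rfl⟩), by simp [vertLoz, hi]⟩, ?_⟩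
        rintro c ⟨hcT, hc1⟩
        rcases mem_bigT.1 hcT with ⟨j, rfl⟩ | ⟨u', h1, h2, rfl⟩ | ⟨c', hc', rfl⟩
        · simp only [vertLoz, Prod.ext_iff] at hc1 ⊢
          simp [hc1.2, hi]
        · exfalso
          simp only [horizLoz, Prod.ext_iff] at hc1
          have := hc1.1
          norm_num at this
        · exfalso
          obtain ⟨eU, _, _⟩ := hT1 c' hc'
          obtain ⟨e1, _, _, e4⟩ := eU
          simp only [shiftLoz, Prod.ext_iff] at hc1
          have h5 : c'.1.1 = 0 := by
            have := hc1.1; push_cast at this; omega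
          have := e4 h5 i
          rw [hi] at this
          exact this hc1.2.symm
      · -- comes from T'
        have hUp' : SemiHexUp k q s ((x : ℤ), up) := by
          refine ⟨by norm_num, by push_cast at hu1 ⊢; omega, by push_cast at hu2 ⊢; omega, ?_⟩
          intro hx0 j hj
          apply hv
          constructor
          · simpa using hx0
          · exact ⟨j, hj⟩
        obtain ⟨c', ⟨hc'T, hc'1⟩, huniq⟩ := hT2 _ hUp'
        refine ⟨shiftLoz c', ⟨mem_bigT.2 (Or.inr (Or.inr ⟨c', hc'T, rfl⟩)), ?_⟩, ?_⟩
        · have h5 : (shiftLoz c').1 = (c'.1.1 + 1, c'.1.2) := rfl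
          rw [h5, hc'1]
          simp only [Prod.ext_iff]
          refine ⟨by push_cast; ring, trivial⟩
        · rintro c ⟨hcT, hc1⟩
          rcases mem_bigT.1 hcT with ⟨j, rfl⟩ | ⟨u', h1, h2, rfl⟩ | ⟨c'', hc'', rfl⟩
          · exfalso
            simp only [vertLoz, Prod.ext_iff] at hc1
            have h5 : x = 0 := by
              have := hc1.1; push_cast at this; omega
            exact hv ⟨h5, j, hc1.2⟩
          · exfalso
            simp only [horizLoz, Prod.ext_iff] at hc1
            have := hc1.1
            push_cast at this
            omega
          · have : c'' = c' := by
              apply huniq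
              refine ⟨hc'', ?_⟩
              simp only [shiftLoz, Prod.ext_iff] at hc1
              have h5 : c''.1.1 = (x:ℤ) := by have := hc1.1; push_cast at this; omega
              have h6 : c''.1.2 = up := hc1.2
              exact Prod.ext h5 h6
            rw [this]
  -- ### condition 3 : downs
  · rintro ⟨di, dp⟩ ⟨hd0, hd1, hd2⟩
    simp only at hd0 hd1 hd2
    obtain ⟨x, rfl⟩ := Int.eq_ofNat_of_zero_le hd0
    match x with
    | 0 =>
      have hdp : dp < q + k := by push_cast at hd2; omega
      by_cases hsv : ∃ j, s j = dp
      · obtain ⟨j, rfl⟩ := hsv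
        refine ⟨vertLoz (s j), ⟨mem_bigT.2 (Or.inl ⟨j, rfl⟩), by simp [vertLoz]⟩, ?_⟩
        rintro c ⟨hcT, hc2⟩
        rcases mem_bigT.1 hcT with ⟨j', rfl⟩ | ⟨u', h1, h2, rfl⟩ | ⟨c', hc', rfl⟩
        · simp only [vertLoz, Prod.ext_iff] at hc2 ⊢
          simp [hc2.2]
        · exfalso
          simp only [horizLoz, Prod.ext_iff] at hc2
          have heq : u' - (cnt r u' - cnt s u') = s j := hc2.2
          rcases L_ab hr hs1 hs2 u' with h5 | h5
          · have h6 : u' = s j := by omega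
            exact (L_cr0_nsv hr hs1 hs2 h5 (by simpa using fun t => h2 t)) ⟨j, h6.symm⟩
          · have hpos := L_cr1_pos hr hs1 h5
            have h6 : u' = s j + 1 := by omega
            have := L_sv_cr0 hr hs1 hs2 ⟨j, rfl⟩
            rw [← h6] at this
            omega
        · exfalso
          have := (hT1 c' hc').2.1.1
          simp only [shiftLoz, Prod.ext_iff] at hc2
          have h := hc2.1
          omega
      · -- horizontal partner
        have hrs := cnt_succ r rinj dp
        have hss := cnt_succ s sinj dp
        rw [if_neg hsv] at hss
        rcases L_ab hr hs1 hs2 (dp+1) with h0 | h1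
        · -- partner is up at dp
          have hndent : ¬ ∃ t, r t = dp := by
            intro hd
            have := L_dent hr hs1 hs2 hd
            rw [if_pos hd] at hrs
            omega
          rw [if_neg hndent] at hrs
          have hcr : cnt r dp = cnt s dp := by omega
          have hdd : dp - (cnt r dp - cnt s dp) = dp := by omega
          refine ⟨horizLoz dp dp,
            ⟨mem_bigT.2 (Or.inr (Or.inl ⟨dp, by omega, fun t ht => hndent ⟨t, ht⟩, by rw [hdd]⟩)),
              by simp [horizLoz]⟩, ?_⟩
          rintro c ⟨hcT, hc2⟩
          rcases mem_bigT.1 hcT with ⟨j', rfl⟩ | ⟨u', h1, h2, rfl⟩ | ⟨c', hc', rfl⟩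
          · exfalso
            simp only [vertLoz, Prod.ext_iff] at hc2
            exact hsv ⟨j', hc2.2⟩
          · -- show u' = dp
            simp only [horizLoz, Prod.ext_iff] at hc2
            have heq : u' - (cnt r u' - cnt s u') = dp := hc2.2
            rcases L_ab hr hs1 hs2 u' with h5 | h5
            · have : u' = dp := by omega
              subst this
              simp [horizLoz, hdd, heq]
            · exfalso
              have hpos := L_cr1_pos hr hs1 h5
              have h6 : u' = dp + 1 := by omega
              rw [h6] at h5
              omega
          · exfalso
            have := (hT1 c' hc').2.1.1
            simp only [shiftLoz, Prod.ext_iff] at hc2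
            have h := hc2.1
            omega
        · -- partner is up at dp+1
          have hndent : ¬ ∃ t, r t = dp + 1 := by
            intro hd
            have := L_dent hr hs1 hs2 hd
            omega
          have hcr : dp + 1 - (cnt r (dp+1) - cnt s (dp+1)) = dp := by omega
          refine ⟨horizLoz (dp+1) dp,
            ⟨mem_bigT.2 (Or.inr (Or.inl ⟨dp+1, by omega, fun t ht => hndent ⟨t, ht⟩, by rw [hcr]⟩)),
              by simp [horizLoz]⟩, ?_⟩
          rintro c ⟨hcT, hc2⟩
          rcases mem_bigT.1 hcT with ⟨j', rfl⟩ | ⟨u', h1, h2, rfl⟩ | ⟨c', hc', rfl⟩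
          · exfalso
            simp only [vertLoz, Prod.ext_iff] at hc2
            exact hsv ⟨j', hc2.2⟩
          · simp only [horizLoz, Prod.ext_iff] at hc2
            have heq : u' - (cnt r u' - cnt s u') = dp := hc2.2
            rcases L_ab hr hs1 hs2 u' with h5 | h5
            · exfalso
              have h6 : u' = dp := by omega
              subst h6
              rw [if_neg (by simpa using fun t => h2 t)] at hrs
              omega
            · have hpos := L_cr1_pos hr hs1 h5
              have h6 : u' = dp + 1 := by omega
              subst h6
              simp [horizLoz, hcr, heq]
          · exfalso
            have := (hT1 c' hc').2.1.1
            simp only [shiftLoz, Prod.ext_iff] at hc2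
            have h := hc2.1
            omega
    | Nat.succ x =>
      have hDown' : SemiHexDown k q ((x:ℤ), dp) := by
        refine ⟨by norm_num, by push_cast at hd1 ⊢; omega, by push_cast at hd2 ⊢; omega⟩
      obtain ⟨c', ⟨hc'T, hc'2⟩, huniq⟩ := hT3 _ hDown'
      refine ⟨shiftLoz c', ⟨mem_bigT.2 (Or.inr (Or.inr ⟨c', hc'T, rfl⟩)), ?_⟩, ?_⟩
      · have h5 : (shiftLoz c').2 = (c'.2.1 + 1, c'.2.2) := rfl
        rw [h5, hc'2]
        simp only [Prod.ext_iff]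
        refine ⟨by push_cast; ring, trivial⟩
      · rintro c ⟨hcT, hc2⟩
        rcases mem_bigT.1 hcT with ⟨j, rfl⟩ | ⟨u', h1, h2, rfl⟩ | ⟨c'', hc'', rfl⟩
        · exfalso
          simp only [vertLoz, Prod.ext_iff] at hc2
          have := hc2.1
          push_cast at this
          omega
        · exfalso
          simp only [horizLoz, Prod.ext_iff] at hc2
          have := hc2.1
          push_cast at this
          omega
        · have : c'' = c' := by
            apply huniq
            refine ⟨hc'', ?_⟩
            simp only [shiftLoz, Prod.ext_iff] at hc2
            have h5 : c''.2.1 = (x:ℤ) := by have := hc2.1; push_cast at this; omega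
            exact Prod.ext h5 hc2.2
          rw [this]
end Construct

def svert (q k : ℕ) (T : Finset ((ℤ×ℕ)×(ℤ×ℕ))) : Finset ℕ :=
  (Finset.range (q+k)).filter (fun d => vertLoz d ∈ T)

def svcnt (q k : ℕ) (T : Finset ((ℤ×ℕ)×(ℤ×ℕ))) (p : ℕ) : ℕ :=
  ((svert q k T).filter (· < p)).card

def restrictT (T : Finset ((ℤ×ℕ)×(ℤ×ℕ))) : Finset ((ℤ×ℕ)×(ℤ×ℕ)) :=
  (T.filter (fun c => 1 ≤ c.2.1)).image unshiftLoz

lemma filter_lt_succ (S : Finset ℕ) (p : ℕ) :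
    (S.filter (· < p+1)).card = (S.filter (· < p)).card + (if p ∈ S then 1 else 0) := by
  classical
  have h : S.filter (· < p+1) = (S.filter (· < p)) ∪ S.filter (· = p) := by
    ext x
    simp only [Finset.mem_filter, Finset.mem_union]
    by_cases hxS : x ∈ S <;> simp [hxS] <;> omega
  rw [h, Finset.card_union_of_disjoint]
  · congr 1
    by_cases hp : p ∈ S
    · have : S.filter (· = p) = {p} := by
        ext x; simp only [Finset.mem_filter, Finset.mem_singleton]
        constructor
        · rintro ⟨_, rfl⟩; rfl
        · rintro rfl; exact ⟨hp, rfl⟩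
      rw [this, if_pos hp, Finset.card_singleton]
    · have : S.filter (· = p) = ∅ := by
        ext x; simp only [Finset.mem_filter, Finset.notMem_empty, iff_false, not_and]
        rintro hx rfl; exact hp hx
      rw [this, if_neg hp, Finset.card_empty]
  · rw [Finset.disjoint_filter]
    intro x _ hx
    omega

lemma svcnt_zero (q k : ℕ) (T : Finset ((ℤ×ℕ)×(ℤ×ℕ))) : svcnt q k T 0 = 0 := by
  rw [svcnt]
  convert Finset.card_empty
  ext x; simp

lemma svcnt_succ (q k : ℕ) (T : Finset ((ℤ×ℕ)×(ℤ×ℕ))) (p : ℕ) :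
    svcnt q k T (p+1) = svcnt q k T p + (if p < q+k ∧ vertLoz p ∈ T then 1 else 0) := by
  rw [svcnt, svcnt, filter_lt_succ]
  congr 1
  by_cases h : p < q+k ∧ vertLoz p ∈ T
  · rw [if_pos h, if_pos]
    simp [svert, Finset.mem_filter, Finset.mem_range]
    exact ⟨h.1, h.2⟩
  · rw [if_neg h, if_neg]
    intro hmem
    simp only [svert, Finset.mem_filter, Finset.mem_range] at hmem
    exact h hmem

section Extract
variable {k q : ℕ} {r : Fin (k+1) → ℕ} {T : Finset ((ℤ×ℕ)×(ℤ×ℕ))}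
variable (hr : StrictMono r) (hb : ∀ t, r t < q+k+1)
variable (hT : IsLozengeTiling (SemiHexUp (k+1) q r) (SemiHexDown (k+1) q) T)

include hT in
lemma loz_shape {c : (ℤ×ℕ)×(ℤ×ℕ)} (hc : c ∈ T) :
    (∃ u d, (d = u ∨ d + 1 = u) ∧ c = horizLoz u d) ∨ (∃ d, c = vertLoz d) ∨
      (1 ≤ c.1.1 ∧ 1 ≤ c.2.1) := by
  obtain ⟨hU, hD, hA⟩ := hT.1 c hc
  obtain ⟨⟨i1, p1⟩, ⟨i2, p2⟩⟩ := c
  simp only at hU hD hA ⊢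
  have h1 : 0 ≤ i1 := hU.1
  have h2 : 0 ≤ i2 := hD.1
  rcases hA with ⟨e1, _, e3⟩ | ⟨_, e2, _⟩ | ⟨e1, e2⟩
  · simp only at e1 e3
    by_cases hi : 1 ≤ i2
    · right; right; exact ⟨by omega, by omega⟩
    · have hi2 : i2 = 0 := by omega
      have hi1 : i1 = 0 := by omega
      subst hi2; subst hi1
      left
      exact ⟨p1, p2, e3, by simp [horizLoz]⟩
  · omega
  · simp only at e1 e2
    by_cases hi : 1 ≤ i2
    · right; right; exact ⟨by omega, by omega⟩
    · have hi2 : i2 = 0 := by omega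
      have hi1 : i1 = 1 := by omega
      subst hi2; subst hi1; subst e2
      right; left
      exact ⟨p2, by simp [vertLoz]⟩

include hT in
lemma up_partner_cases {c : (ℤ×ℕ)×(ℤ×ℕ)} (hc : c ∈ T) {p : ℕ} (h : c.1 = ((0:ℤ), p)) :
    c = horizLoz p p ∨ (0 < p ∧ c = horizLoz p (p-1)) := by
  rcases loz_shape hT hc with ⟨u, d, hud, rfl⟩ | ⟨d, rfl⟩ | ⟨h1, _⟩
  · simp only [horizLoz, Prod.ext_iff] at h
    have hu : u = p := h.2
    subst hu
    rcases hud with rfl | hd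
    · exact Or.inl rfl
    · right
      exact ⟨by omega, by rw [show u - 1 = d by omega]⟩
  · exfalso
    simp only [vertLoz, Prod.ext_iff] at h
    have := h.1; norm_num at this
  · exfalso
    rw [h] at h1
    norm_num at h1

include hT in
lemma down_partner_cases {c : (ℤ×ℕ)×(ℤ×ℕ)} (hc : c ∈ T) {p : ℕ} (h : c.2 = ((0:ℤ), p)) :
    c = horizLoz p p ∨ c = horizLoz (p+1) p ∨ c = vertLoz p := by
  rcases loz_shape hT hc with ⟨u, d, hud, rfl⟩ | ⟨d, rfl⟩ | ⟨_, h2⟩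
  · simp only [horizLoz, Prod.ext_iff] at h
    have hd : d = p := h.2
    subst hd
    rcases hud with rfl | hd
    · exact Or.inl rfl
    · right; left; rw [← hd]
  · simp only [vertLoz, Prod.ext_iff] at h
    right; right; rw [h.2]
  · exfalso
    rw [h] at h2
    norm_num at h2
end Extract

section Carry
variable {k q : ℕ} {r : Fin (k+1) → ℕ} {T : Finset ((ℤ×ℕ)×(ℤ×ℕ))}
variable (hr : StrictMono r) (hb : ∀ t, r t < q+k+1)
variable (hT : IsLozengeTiling (SemiHexUp (k+1) q r) (SemiHexDown (k+1) q) T)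

include hr hb hT in
lemma carry : ∀ p, p ≤ q+k+1 →
    cnt r p = svcnt q k T p +
      (if p = q+k+1 then 1 else (if 0 < p ∧ horizLoz p (p-1) ∈ T then 1 else 0)) := by
  have memUp : ∀ {x y : ℕ}, horizLoz x y ∈ T → (∀ t, r t ≠ x) := by
    intro x y h t
    exact (hT.1 _ h).1.2.2.2 rfl t
  have memDownlt : ∀ {x y : ℕ}, horizLoz x y ∈ T → y < q + k := by
    intro x y h
    have hD := ((hT.1 _ h).2.1).2.2
    simp only [horizLoz] at hD
    push_cast at hD; omega
  have memVert : ∀ {x : ℕ}, vertLoz x ∈ T → x < q + k := by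
    intro x h
    have hD := ((hT.1 _ h).2.1).2.2
    simp only [vertLoz] at hD
    push_cast at hD; omega
  intro p
  induction p with
  | zero =>
    intro _
    rw [cnt_zero, svcnt_zero, if_neg (by omega : ¬ (0:ℕ) = q+k+1), if_neg (by omega : ¬ ((0:ℕ) < 0 ∧ horizLoz 0 (0-1) ∈ T))]
  | succ p ih =>
    intro hp1
    have hplt : p < q+k+1 := by omega
    have IH := ih (by omega)
    rw [if_neg (by omega : ¬ p = q+k+1)] at IH
    have ea := cnt_succ r hr.injective p
    have eb := svcnt_succ q k T p
    by_cases hd : ∃ t, r t = p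
    · -- p is a dent : no up triangle at p
      have hχ0 : ¬ (0 < p ∧ horizLoz p (p-1) ∈ T) := by
        rintro ⟨hp0, hmem⟩
        obtain ⟨t, ht⟩ := hd
        exact memUp hmem t ht
      rw [if_neg hχ0, add_zero] at IH
      rw [if_pos hd] at ea
      by_cases hlast : p = q + k
      · subst hlast
        have hv : ¬ ((q+k) < q+k ∧ vertLoz (q+k) ∈ T) := by
          rintro ⟨h, _⟩; omega
        rw [if_neg hv, add_zero] at eb
        rw [if_pos rfl]
        omega
      · have hplt2 : p < q + k := by omega
        have hDown : SemiHexDown (k+1) q ((0:ℤ), p) :=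
          ⟨by norm_num, by norm_num, by push_cast; omega⟩
        obtain ⟨c, ⟨hcT, hc2⟩, huniq⟩ := hT.2.2 _ hDown
        rcases down_partner_cases hT hcT hc2 with rfl | rfl | rfl
        · exfalso
          obtain ⟨t, ht⟩ := hd
          exact memUp hcT t ht
        · -- partner is pairR
          have hvn : ¬(p < q+k ∧ vertLoz p ∈ T) := by
            rintro ⟨_, hv⟩
            have h1 := huniq _ ⟨hv, rfl⟩
            simp [vertLoz, horizLoz, Prod.ext_iff] at h1
          rw [if_neg hvn, add_zero] at eb
          rw [if_neg (by omega : ¬ p+1 = q+k+1),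
            if_pos (⟨by omega, by simpa using hcT⟩ : 0 < p+1 ∧ horizLoz (p+1) (p+1-1) ∈ T)]
          omega
        · -- partner is vertical
          rw [if_pos ⟨hplt2, hcT⟩] at eb
          have hrn : ¬ (0 < p+1 ∧ horizLoz (p+1) (p+1-1) ∈ T) := by
            rintro ⟨_, hmem⟩
            simp only [Nat.add_sub_cancel] at hmem
            have h1 := huniq _ ⟨hmem, rfl⟩
            simp [vertLoz, horizLoz, Prod.ext_iff] at h1
          rw [if_neg (by omega : ¬ p+1 = q+k+1), if_neg hrn]
          omega
    · -- p is not a dent : up triangle at p exists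
      rw [if_neg hd, add_zero] at ea
      have hUp : SemiHexUp (k+1) q r ((0:ℤ), p) :=
        ⟨le_refl _, by norm_num, by push_cast; omega, fun _ t ht => hd ⟨t, ht⟩⟩
      obtain ⟨cu, ⟨hcuT, hcu1⟩, huuniq⟩ := hT.2.1 _ hUp
      rcases up_partner_cases hT hcuT hcu1 with rfl | ⟨hp0, rfl⟩
      · -- up partner is (p,p) : χcur = 0
        have hpltqk : p < q + k := memDownlt hcuT
        have hχ0 : ¬ (0 < p ∧ horizLoz p (p-1) ∈ T) := by
          rintro ⟨hp0, hmem⟩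
          have h1 := huuniq _ ⟨hmem, rfl⟩
          simp [horizLoz, Prod.ext_iff] at h1
          omega
        rw [if_neg hχ0, add_zero] at IH
        have hDown : SemiHexDown (k+1) q ((0:ℤ), p) :=
          ⟨by norm_num, by norm_num, by push_cast; omega⟩
        obtain ⟨c, ⟨hcT, hc2⟩, huniq⟩ := hT.2.2 _ hDown
        have h2 := huniq _ ⟨hcuT, rfl⟩
        have hvn : ¬(p < q+k ∧ vertLoz p ∈ T) := by
          rintro ⟨_, hv⟩
          have h1 := huniq _ ⟨hv, rfl⟩
          rw [← h2] at h1
          simp [vertLoz, horizLoz, Prod.ext_iff] at h1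
        rw [if_neg hvn, add_zero] at eb
        have hrn : ¬ (0 < p+1 ∧ horizLoz (p+1) (p+1-1) ∈ T) := by
          rintro ⟨_, hmem⟩
          simp only [Nat.add_sub_cancel] at hmem
          have h1 := huniq _ ⟨hmem, rfl⟩
          rw [← h2] at h1
          simp [horizLoz, Prod.ext_iff] at h1
        rw [if_neg (by omega : ¬ p+1 = q+k+1), if_neg hrn]
        omega
      · -- up partner is (p, p-1) : χcur = 1
        rw [if_pos ⟨hp0, hcuT⟩] at IH
        by_cases hlast : p = q + k
        · subst hlast
          have hv : ¬ ((q+k) < q+k ∧ vertLoz (q+k) ∈ T) := by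
            rintro ⟨h, _⟩; omega
          rw [if_neg hv, add_zero] at eb
          rw [if_pos rfl]
          omega
        · have hpltqk : p < q+k := by omega
          have hDown : SemiHexDown (k+1) q ((0:ℤ), p) :=
            ⟨by norm_num, by norm_num, by push_cast; omega⟩
          obtain ⟨c, ⟨hcT, hc2⟩, huniq⟩ := hT.2.2 _ hDown
          rcases down_partner_cases hT hcT hc2 with rfl | rfl | rfl
          · exfalso
            have h1 := huuniq _ ⟨hcT, rfl⟩
            simp [horizLoz, Prod.ext_iff] at h1
            omega
          · have hvn : ¬(p < q+k ∧ vertLoz p ∈ T) := by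
              rintro ⟨_, hv⟩
              have h1 := huniq _ ⟨hv, rfl⟩
              simp [vertLoz, horizLoz, Prod.ext_iff] at h1
            rw [if_neg hvn, add_zero] at eb
            rw [if_neg (by omega : ¬ p+1 = q+k+1),
              if_pos (⟨by omega, by simpa using hcT⟩ : 0 < p+1 ∧ horizLoz (p+1) (p+1-1) ∈ T)]
            omega
          · rw [if_pos ⟨hpltqk, hcT⟩] at eb
            have hrn : ¬ (0 < p+1 ∧ horizLoz (p+1) (p+1-1) ∈ T) := by
              rintro ⟨_, hmem⟩
              simp only [Nat.add_sub_cancel] at hmem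
              have h1 := huniq _ ⟨hmem, rfl⟩
              simp [vertLoz, horizLoz, Prod.ext_iff] at h1
            rw [if_neg (by omega : ¬ p+1 = q+k+1), if_neg hrn]
            omega
end Carry

lemma cnt_oEF (S : Finset ℕ) {n : ℕ} (h : S.card = n) (p : ℕ) :
    cnt (fun j => S.orderEmbOfFin h j) p = (S.filter (· < p)).card := by
  classical
  rw [cnt, ← Finset.card_filter]
  apply Finset.card_bij (fun j _ => S.orderEmbOfFin h j)
  · intro j hj
    simp only [Finset.mem_filter] at hj ⊢
    exact ⟨Finset.orderEmbOfFin_mem S h j, hj.2⟩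
  · intro j1 h1 j2 h2 hee
    exact (S.orderEmbOfFin h).injective hee
  · intro x hx
    simp only [Finset.mem_filter] at hx
    have : x ∈ Set.range (S.orderEmbOfFin h) := by
      rw [Finset.range_orderEmbOfFin]
      exact hx.1
    obtain ⟨j, hj⟩ := this
    exact ⟨j, by simp [hj, hx.2], hj⟩

section Extract2
variable {k q : ℕ} {r : Fin (k+1) → ℕ} {T : Finset ((ℤ×ℕ)×(ℤ×ℕ))}
variable (hr : StrictMono r) (hb : ∀ t, r t < q+k+1)
variable (hT : IsLozengeTiling (SemiHexUp (k+1) q r) (SemiHexDown (k+1) q) T)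

include hr hb hT in
lemma card_svert : (svert q k T).card = k := by
  have h := carry hr hb hT (q+k+1) (le_refl _)
  rw [if_pos rfl, cnt_all r _ hb] at h
  have h2 : svcnt q k T (q+k+1) = (svert q k T).card := by
    rw [svcnt]
    congr 1
    apply Finset.filter_true_of_mem
    intro x hx
    simp only [svert, Finset.mem_filter, Finset.mem_range] at hx
    omega
  omega

include hr hb hT in
lemma horizPartner {u : ℕ} (hu : u < q+k+1) (hd : ¬ ∃ t, r t = u) :
    horizLoz u (u - (cnt r u - svcnt q k T u)) ∈ T := by
  have h := carry hr hb hT u (by omega)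
  rw [if_neg (by omega : ¬ u = q+k+1)] at h
  by_cases hχ : 0 < u ∧ horizLoz u (u-1) ∈ T
  · rw [if_pos hχ] at h
    have : u - (cnt r u - svcnt q k T u) = u - 1 := by omega
    rw [this]
    exact hχ.2
  · rw [if_neg hχ, add_zero] at h
    have hud : u - (cnt r u - svcnt q k T u) = u := by omega
    rw [hud]
    have hUp : SemiHexUp (k+1) q r ((0:ℤ), u) :=
      ⟨le_refl _, by norm_num, by push_cast; omega, fun _ t ht => hd ⟨t, ht⟩⟩
    obtain ⟨cu, ⟨hcuT, hcu1⟩, _⟩ := hT.2.1 _ hUp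
    rcases up_partner_cases hT hcuT hcu1 with rfl | ⟨hp0, rfl⟩
    · exact hcuT
    · exact absurd ⟨hp0, hcuT⟩ hχ

include hr hb hT in
lemma interlace_extract (i : Fin k) :
    r i.castSucc ≤ (svert q k T).orderEmbOfFin (card_svert hr hb hT) i ∧
      (svert q k T).orderEmbOfFin (card_svert hr hb hT) i < r i.succ := by
  set σ := (svert q k T).orderEmbOfFin (card_svert hr hb hT) with hσ
  have hσmem : ∀ j, σ j ∈ svert q k T := fun j => Finset.orderEmbOfFin_mem _ _ j
  have hσlt : ∀ j, σ j < q + k := by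
    intro j
    have := hσmem j
    simp only [svert, Finset.mem_filter, Finset.mem_range] at this
    exact this.1
  have hcntσ : ∀ p, cnt (fun j => σ j) p = svcnt q k T p := fun p =>
    cnt_oEF (svert q k T) (card_svert hr hb hT) p
  constructor
  · by_contra hcon
    push_neg at hcon
    -- σ i < r i.castSucc
    have hp1 : σ i + 1 ≤ q + k + 1 := by have := hσlt i; omega
    have h := carry hr hb hT (σ i + 1) hp1
    have hle : svcnt q k T (σ i + 1) ≤ cnt r (σ i + 1) := by
      rw [h]; split <;> omega
    have h1 : (i:ℕ) + 1 ≤ cnt (fun j => σ j) (σ i + 1) := by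
      have hpw : ∀ j : Fin k, (if (j:ℕ) < (i:ℕ)+1 then (1:ℕ) else 0) ≤ (if σ j < σ i + 1 then 1 else 0) := by
        intro j
        by_cases hj : (j:ℕ) < (i:ℕ)+1
        · have : σ j ≤ σ i := by
            apply (OrderEmbedding.le_iff_le σ).2
            exact Fin.mk_le_mk.mpr (by omega)
          simp [hj, Nat.lt_succ_of_le this]
        · simp [hj]
      calc (i:ℕ)+1 = ∑ j : Fin k, (if (j:ℕ) < (i:ℕ)+1 then 1 else 0) :=
            (card_fin_lt k ((i:ℕ)+1) (by omega)).symm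
      _ ≤ _ := Finset.sum_le_sum (fun j _ => hpw j)
    have h2 : cnt r (σ i + 1) ≤ (i:ℕ) := by
      have hpw : ∀ t : Fin (k+1), (if r t < σ i + 1 then (1:ℕ) else 0) ≤ (if (t:ℕ) < (i:ℕ) then 1 else 0) := by
        intro t
        by_cases ht : r t < σ i + 1
        · have h5 : r t < r i.castSucc := by omega
          have h6 : t < i.castSucc := hr.lt_iff_lt.1 h5
          have h7 : (t:ℕ) < (i:ℕ) := h6
          simp [ht, h7]
        · simp [ht]
      calc cnt r (σ i + 1) ≤ ∑ t : Fin (k+1), (if (t:ℕ) < (i:ℕ) then 1 else 0) :=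
            Finset.sum_le_sum (fun t _ => hpw t)
      _ = (i:ℕ) := card_fin_lt (k+1) (i:ℕ) (by omega)
    rw [hcntσ] at h1
    omega
  · by_contra hcon
    push_neg at hcon
    -- r i.succ ≤ σ i
    have hd1 : cnt r (r i.succ) = (i:ℕ) + 1 := by
      rw [cnt_strictMono_at r hr i.succ]
      rfl
    have hp1 : r i.succ ≤ q + k + 1 := by have := hb i.succ; omega
    have h := carry hr hb hT (r i.succ) hp1
    rw [if_neg (by have := hb i.succ; omega : ¬ r i.succ = q+k+1)] at h
    have hχ0 : ¬ (0 < r i.succ ∧ horizLoz (r i.succ) (r i.succ - 1) ∈ T) := by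
      rintro ⟨_, hmem⟩
      exact (hT.1 _ hmem).1.2.2.2 rfl i.succ rfl
    rw [if_neg hχ0, add_zero] at h
    have h2 : svcnt q k T (r i.succ) ≤ (i:ℕ) := by
      rw [← hcntσ]
      have hpw : ∀ j : Fin k, (if σ j < r i.succ then (1:ℕ) else 0) ≤ (if (j:ℕ) < (i:ℕ) then 1 else 0) := by
        intro j
        by_cases hj : σ j < r i.succ
        · have hji : σ j < σ i := by omega
          have h6 : j < i := (OrderEmbedding.lt_iff_lt σ).1 hji
          have h7 : (j:ℕ) < (i:ℕ) := h6
          simp [hj, h7]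
        · simp [hj]
      calc cnt (fun j => σ j) (r i.succ) ≤ ∑ j : Fin k, (if (j:ℕ) < (i:ℕ) then 1 else 0) :=
            Finset.sum_le_sum (fun j _ => hpw j)
      _ = (i:ℕ) := card_fin_lt k (i:ℕ) (by omega)
    omega
end Extract2

lemma shift_unshift (c : (ℤ×ℕ)×(ℤ×ℕ)) : shiftLoz (unshiftLoz c) = c := by
  simp [shiftLoz, unshiftLoz]

section Inverse
variable {k q : ℕ} {r : Fin (k+1) → ℕ} {s : Fin k → ℕ} {T' : Finset ((ℤ×ℕ)×(ℤ×ℕ))}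
variable (hr : StrictMono r) (hb : ∀ t, r t < q+k+1)
variable (hs1 : ∀ i, r i.castSucc ≤ s i) (hs2 : ∀ i, s i < r i.succ)
variable (hT' : IsLozengeTiling (SemiHexUp k q s) (SemiHexDown k q) T')

include hr hb hs1 hs2 hT' in
lemma svert_bigT : svert q k (bigT k q r s T') = Finset.image s Finset.univ := by
  ext d
  simp only [svert, Finset.mem_filter, Finset.mem_range, Finset.mem_image, Finset.mem_univ,
    true_and]
  constructor
  · rintro ⟨hd, hmem⟩
    rcases mem_bigT.1 hmem with ⟨i, hi⟩ | ⟨u, h1, h2, h3⟩ | ⟨c', hc', hc⟩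
    · refine ⟨i, ?_⟩
      simp only [vertLoz, Prod.ext_iff] at hi
      exact hi.1.2.symm
    · exfalso
      simp only [vertLoz, horizLoz, Prod.ext_iff] at h3
      have := h3.1.1
      norm_num at this
    · exfalso
      have hD := (hT'.1 c' hc').2.1.1
      simp only [vertLoz, shiftLoz, Prod.ext_iff] at hc
      have := hc.2.1
      omega
  · rintro ⟨i, rfl⟩
    exact ⟨L_sv_lt hr hb hs1 hs2 ⟨i, rfl⟩, mem_bigT.2 (Or.inl ⟨i, rfl⟩)⟩

include hT' in
lemma restrict_bigT : restrictT (bigT k q r s T') = T' := by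
  ext c
  simp only [restrictT, Finset.mem_image, Finset.mem_filter]
  constructor
  · rintro ⟨c0, ⟨hc0T, hc0pos⟩, rfl⟩
    rcases mem_bigT.1 hc0T with ⟨i, rfl⟩ | ⟨u, h1, h2, rfl⟩ | ⟨c', hc', rfl⟩
    · exfalso; simp [vertLoz] at hc0pos
    · exfalso; simp [horizLoz] at hc0pos
    · rw [unshift_shift]; exact hc'
  · intro hc
    refine ⟨shiftLoz c, ⟨mem_bigT.2 (Or.inr (Or.inr ⟨c, hc, rfl⟩)), ?_⟩, unshift_shift c⟩
    have := (hT'.1 c hc).2.1.1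
    simp only [shiftLoz]
    omega
end Inverse

section Decomp
variable {k q : ℕ} {r : Fin (k+1) → ℕ} {T : Finset ((ℤ×ℕ)×(ℤ×ℕ))}
variable (hr : StrictMono r) (hb : ∀ t, r t < q+k+1)
variable (hT : IsLozengeTiling (SemiHexUp (k+1) q r) (SemiHexDown (k+1) q) T)

include hr hb hT in
lemma decomp :
    T = bigT k q r (fun j => (svert q k T).orderEmbOfFin (card_svert hr hb hT) j)
          (restrictT T) := by
  set σ := (svert q k T).orderEmbOfFin (card_svert hr hb hT) with hσdef
  have hcntσ : ∀ p, cnt (fun j => σ j) p = svcnt q k T p := fun p =>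
    cnt_oEF (svert q k T) (card_svert hr hb hT) p
  ext c
  constructor
  · intro hc
    rcases loz_shape hT hc with ⟨u, d, hud, rfl⟩ | ⟨d, rfl⟩ | ⟨h1, h2⟩
    · -- horizontal
      have hUp := (hT.1 _ hc).1
      have hu : u < q+k+1 := by
        have := hUp.2.2.1
        simp only [horizLoz] at this
        push_cast at this; omega
      have hd2 : ¬ ∃ t, r t = u := by
        rintro ⟨t, ht⟩
        exact hUp.2.2.2 rfl t ht
      have hpart := horizPartner hr hb hT hu hd2
      have : horizLoz u d = horizLoz u (u - (cnt r u - svcnt q k T u)) := by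
        have hUpbig : SemiHexUp (k+1) q r ((0:ℤ), u) := by
          simpa only [horizLoz] using hUp
        obtain ⟨c0, _, huniq⟩ := hT.2.1 _ hUpbig
        have e1 := huniq _ ⟨hc, rfl⟩
        have e2 := huniq _ ⟨hpart, rfl⟩
        rw [e1, ← e2]
      rw [this]
      apply mem_bigT.2
      refine Or.inr (Or.inl ⟨u, hu, fun t ht => hd2 ⟨t, ht⟩, ?_⟩)
      rw [hcntσ]
    · -- vertical
      have hD := (hT.1 _ hc).2.1
      have hd2 : d < q + k := by
        have := hD.2.2
        simp only [vertLoz] at this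
        push_cast at this; omega
      have hdS : d ∈ svert q k T := by
        simp only [svert, Finset.mem_filter, Finset.mem_range]
        exact ⟨hd2, hc⟩
      have : d ∈ Set.range σ := by
        rw [hσdef, Finset.range_orderEmbOfFin]
        exact hdS
      obtain ⟨j, hj⟩ := this
      apply mem_bigT.2
      exact Or.inl ⟨j, by rw [hj]⟩
    · -- upper rows
      apply mem_bigT.2
      refine Or.inr (Or.inr ⟨unshiftLoz c, ?_, (shift_unshift c).symm⟩)
      simp only [restrictT, Finset.mem_image]
      exact ⟨c, Finset.mem_filter.2 ⟨hc, h2⟩, rfl⟩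
  · intro hc
    rcases mem_bigT.1 hc with ⟨j, rfl⟩ | ⟨u, h1, h2, rfl⟩ | ⟨c', hc', rfl⟩
    · have := Finset.orderEmbOfFin_mem (svert q k T) (card_svert hr hb hT) j
      simp only [svert, Finset.mem_filter] at this
      exact this.2
    · have := horizPartner hr hb hT h1 (fun ⟨t, ht⟩ => h2 t ht)
      rw [hcntσ]
      exact this
    · simp only [restrictT, Finset.mem_image, Finset.mem_filter] at hc'
      obtain ⟨c0, ⟨hc0T, hc0pos⟩, rfl⟩ := hc'
      rw [shift_unshift]
      exact hc0T
end Decomp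

section RestrictTiling
variable {k q : ℕ} {r : Fin (k+1) → ℕ} {T : Finset ((ℤ×ℕ)×(ℤ×ℕ))}
variable (hr : StrictMono r) (hb : ∀ t, r t < q+k+1)
variable (hT : IsLozengeTiling (SemiHexUp (k+1) q r) (SemiHexDown (k+1) q) T)

include hr hb hT in
lemma restrict_tiling :
    IsLozengeTiling
      (SemiHexUp k q (fun j => (svert q k T).orderEmbOfFin (card_svert hr hb hT) j))
      (SemiHexDown k q) (restrictT T) := by
  set σ := (svert q k T).orderEmbOfFin (card_svert hr hb hT) with hσdef
  have hvertT : ∀ j, vertLoz (σ j) ∈ T := by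
    intro j
    have := Finset.orderEmbOfFin_mem (svert q k T) (card_svert hr hb hT) j
    simp only [svert, Finset.mem_filter] at this
    exact this.2
  have hrange : ∀ {p : ℕ}, p ∈ svert q k T → ∃ j, σ j = p := by
    intro p hp
    have : p ∈ Set.range σ := by rw [hσdef, Finset.range_orderEmbOfFin]; exact hp
    exact this
  refine ⟨?_, ?_, ?_⟩
  · -- condition 1
    intro c hc
    simp only [restrictT, Finset.mem_image, Finset.mem_filter] at hc
    obtain ⟨c0, ⟨hc0T, hpos⟩, rfl⟩ := hc
    obtain ⟨hU, hD, hA⟩ := hT.1 c0 hc0T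
    have hU1 := hU.1
    have h11 : 1 ≤ c0.1.1 := by
      rcases hA with ⟨e1, _, _⟩ | ⟨_, e2, _⟩ | ⟨e1, _⟩
      · omega
      · omega
      · omega
    refine ⟨⟨?_, ?_, ?_, ?_⟩, ⟨?_, ?_, ?_⟩, ?_⟩
    · simp only [unshiftLoz]; omega
    · have := hU.2.1; simp only [unshiftLoz]; push_cast at this ⊢; omega
    · have := hU.2.2.1; simp only [unshiftLoz]; push_cast at this ⊢; omega
    · intro h0 j hj
      simp only [unshiftLoz] at h0 hj ⊢
      have hc11 : c0.1.1 = 1 := by omega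
      have hvm := hvertT j
      rw [hj] at hvm
      have hc01' : c0.1 = ((1:ℤ), c0.1.2) := Prod.ext hc11 rfl
      have hUpv : SemiHexUp (k+1) q r ((1:ℤ), c0.1.2) := by rw [← hc01']; exact hU
      obtain ⟨cu, _, huniq⟩ := hT.2.1 _ hUpv
      have e1 := huniq c0 ⟨hc0T, hc01'⟩
      have e2 := huniq (vertLoz c0.1.2) ⟨hvm, rfl⟩
      have : c0 = vertLoz c0.1.2 := e1.trans e2.symm
      have : c0.2.1 = 0 := by rw [this]; rfl
      omega
    · simp only [unshiftLoz]; omega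
    · have := hD.2.1; simp only [unshiftLoz]; push_cast at this ⊢; omega
    · have := hD.2.2; simp only [unshiftLoz]; push_cast at this ⊢; omega
    · rcases hA with ⟨e1, _, e3⟩ | ⟨_, e2, _⟩ | ⟨e1, e4⟩
      · left
        exact ⟨by simp only [unshiftLoz]; omega, by simp only [unshiftLoz]; omega, e3⟩
      · omega
      · right; right
        exact ⟨by simp only [unshiftLoz]; omega, e4⟩
  · -- condition 2 : ups
    rintro ⟨ui, p⟩ ⟨h0, h1, h2, h3⟩
    simp only at h0 h1 h2 h3
    have hUpBig : SemiHexUp (k+1) q r (ui + 1, p) := by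
      refine ⟨by omega, by push_cast at h1 ⊢; omega, by push_cast at h2 ⊢; omega,
        fun hcon => absurd hcon (by omega)⟩
    obtain ⟨c0, ⟨hc0T, hc01⟩, huniq⟩ := hT.2.1 _ hUpBig
    have hpos : 1 ≤ c0.2.1 := by
      obtain ⟨hU0, hD0, hA0⟩ := hT.1 c0 hc0T
      have e0 : c0.1.1 = ui + 1 := by rw [hc01]
      have e5 : c0.1.2 = p := by rw [hc01]
      rcases hA0 with ⟨e1, _, _⟩ | ⟨_, e2, _⟩ | ⟨e1, e4⟩
      · omega
      · omega
      · by_cases hui : 1 ≤ ui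
        · omega
        · exfalso
          have hui0 : ui = 0 := by omega
          have hc02 : c0.2 = ((0:ℤ), p) := Prod.ext (by omega) (by rw [e4, e5])
          have hc01' : c0.1 = ((1:ℤ), p) := by rw [hc01, hui0]; norm_num
          have hc0v : c0 = vertLoz p := Prod.ext hc01' hc02
          have hpS : p ∈ svert q k T := by
            simp only [svert, Finset.mem_filter, Finset.mem_range]
            refine ⟨by push_cast at h2; omega, by rw [← hc0v]; exact hc0T⟩
          obtain ⟨j, hj⟩ := hrange hpS
          exact h3 hui0 j hj
    refine ⟨unshiftLoz c0, ⟨?_, ?_⟩, ?_⟩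
    · simp only [restrictT, Finset.mem_image]
      exact ⟨c0, Finset.mem_filter.2 ⟨hc0T, hpos⟩, rfl⟩
    · have e : (unshiftLoz c0).1 = (c0.1.1 - 1, c0.1.2) := rfl
      rw [e, hc01]
      exact Prod.ext (by omega) rfl
    · rintro y ⟨hy, hy1⟩
      simp only [restrictT, Finset.mem_image, Finset.mem_filter] at hy
      obtain ⟨y0, ⟨hy0T, hy0pos⟩, rfl⟩ := hy
      have hy01 : y0.1 = (ui + 1, p) := by
        have e : (unshiftLoz y0).1 = (y0.1.1 - 1, y0.1.2) := rfl
        rw [e] at hy1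
        have := Prod.ext_iff.1 hy1
        exact Prod.ext (by have := this.1; simp only at this ⊢; omega) this.2
      rw [huniq y0 ⟨hy0T, hy01⟩]
  · -- condition 3 : downs
    rintro ⟨di, p⟩ ⟨h0, h1, h2⟩
    simp only at h0 h1 h2
    have hDownBig : SemiHexDown (k+1) q (di + 1, p) :=
      ⟨by omega, by push_cast at h1 ⊢; omega, by push_cast at h2 ⊢; omega⟩
    obtain ⟨c0, ⟨hc0T, hc02⟩, huniq⟩ := hT.2.2 _ hDownBig
    have hpos : 1 ≤ c0.2.1 := by rw [hc02]; omega
    refine ⟨unshiftLoz c0, ⟨?_, ?_⟩, ?_⟩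
    · simp only [restrictT, Finset.mem_image]
      exact ⟨c0, Finset.mem_filter.2 ⟨hc0T, hpos⟩, rfl⟩
    · have e : (unshiftLoz c0).2 = (c0.2.1 - 1, c0.2.2) := rfl
      rw [e, hc02]
      exact Prod.ext (by omega) rfl
    · rintro y ⟨hy, hy2⟩
      simp only [restrictT, Finset.mem_image, Finset.mem_filter] at hy
      obtain ⟨y0, ⟨hy0T, hy0pos⟩, rfl⟩ := hy
      have hy02 : y0.2 = (di + 1, p) := by
        have e : (unshiftLoz y0).2 = (y0.2.1 - 1, y0.2.2) := rfl
        rw [e] at hy2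
        have := Prod.ext_iff.1 hy2
        exact Prod.ext (by have := this.1; simp only at this ⊢; omega) this.2
      rw [huniq y0 ⟨hy0T, hy02⟩]
end RestrictTiling

-- ## counting assembly

lemma tiling_zero_iff (q : ℕ) (r : Fin 0 → ℕ) (T : Finset ((ℤ×ℕ)×(ℤ×ℕ))) :
    IsLozengeTiling (SemiHexUp 0 q r) (SemiHexDown 0 q) T ↔ T = ∅ := by
  constructor
  · intro hT
    rw [Finset.eq_empty_iff_forall_notMem]
    intro c hc
    have := (hT.1 c hc).1
    have h1 := this.1
    have h2 := this.2.1
    norm_num at h2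
    omega
  · rintro rfl
    refine ⟨by simp, ?_, ?_⟩
    · intro u hu
      exfalso
      have h1 := hu.1
      have h2 := hu.2.1
      norm_num at h2
      omega
    · intro d hd
      exfalso
      have h1 := hd.1
      have h2 := hd.2.1
      norm_num at h2
      omega

lemma tilings_finite (k q : ℕ) (r : Fin k → ℕ) :
    {T | IsLozengeTiling (SemiHexUp k q r) (SemiHexDown k q) T}.Finite := by
  classical
  set P : Finset ((ℤ×ℕ)×(ℤ×ℕ)) :=
    (Finset.Icc (0:ℤ) k ×ˢ Finset.range (q+k)) ×ˢ (Finset.Icc (0:ℤ) k ×ˢ Finset.range (q+k))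
    with hP
  apply Set.Finite.subset (P.powerset : Finset _).finite_toSet
  intro T hT
  simp only [Set.mem_setOf_eq] at hT
  simp only [Finset.coe_powerset, Set.mem_preimage, Set.mem_powerset_iff]
  intro c hc
  rw [Finset.mem_coe]
  obtain ⟨hU, hD, _⟩ := hT.1 c hc
  simp only [hP, Finset.mem_product, Finset.mem_Icc, Finset.mem_range]
  obtain ⟨u1, u2, u3, _⟩ := hU
  obtain ⟨d1, d2, d3⟩ := hD
  refine ⟨⟨⟨u1, by omega⟩, ?_⟩, ⟨d1, by omega⟩, ?_⟩
  · push_cast at u3; omega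
  · push_cast at d3; omega

noncomputable def extractS (k q : ℕ) (T : Finset ((ℤ×ℕ)×(ℤ×ℕ))) : Fin k → ℕ :=
  if h : (svert q k T).card = k then (fun j => (svert q k T).orderEmbOfFin h j)
  else fun _ => 0

lemma count_tilings : ∀ (k q : ℕ) (r : Fin k → ℕ), StrictMono r → (∀ t, r t < q + k) →
    (Set.ncard {T | IsLozengeTiling (SemiHexUp k q r) (SemiHexDown k q) T} : ℚ) = detB k r := by
  intro k
  induction k with
  | zero =>
    intro q r _ _
    have : {T | IsLozengeTiling (SemiHexUp 0 q r) (SemiHexDown 0 q) T} = {(∅ : Finset ((ℤ×ℕ)×(ℤ×ℕ)))} := by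
      ext T
      simp [tiling_zero_iff q r T]
    rw [this, Set.ncard_singleton, detB_zero]
    norm_num
  | succ k IH =>
    intro q r hr hb
    classical
    have hb' : ∀ t, r t < q + k + 1 := by intro t; have := hb t; omega
    have hfin := tilings_finite (k+1) q r
    rw [Set.ncard_eq_toFinset_card _ hfin]
    have hmemF : ∀ T, T ∈ hfin.toFinset ↔
        IsLozengeTiling (SemiHexUp (k+1) q r) (SemiHexDown (k+1) q) T := by
      intro T; rw [Set.Finite.mem_toFinset]; rfl
    have hfiber : ∀ T ∈ hfin.toFinset, extractS k q T ∈
        Fintype.piFinset (fun i : Fin k => Finset.Ico (r i.castSucc) (r i.succ)) := by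
      intro T hT
      have hTt := (hmemF T).1 hT
      rw [Fintype.mem_piFinset]
      intro i
      rw [Finset.mem_Ico]
      have hc := card_svert hr hb' hTt
      have hint := interlace_extract hr hb' hTt i
      rw [extractS, dif_pos hc]
      exact hint
    rw [Finset.card_eq_sum_card_fiberwise hfiber]
    push_cast
    rw [detB_succ k r hr.monotone]
    apply Finset.sum_congr rfl
    intro s hs
    rw [Fintype.mem_piFinset] at hs
    have hs1 : ∀ i, r i.castSucc ≤ s i := fun i => (Finset.mem_Ico.1 (hs i)).1
    have hs2 : ∀ i, s i < r i.succ := fun i => (Finset.mem_Ico.1 (hs i)).2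
    have hsmono : StrictMono s := s_strictMono hr hs1 hs2
    have hsb : ∀ j, s j < q + k := by
      intro j
      have h1 := hs2 j
      have h2 := hb' j.succ
      omega
    have hfin' := tilings_finite k q s
    have IHs := IH q s hsmono hsb
    rw [Set.ncard_eq_toFinset_card _ hfin'] at IHs
    rw [← IHs]
    norm_cast
    apply Finset.card_bij' (fun T _ => restrictT T) (fun T' _ => bigT k q r s T')
    · intro T hT
      rw [Finset.mem_filter] at hT
      obtain ⟨hTF, hTE⟩ := hT
      have hTt := (hmemF T).1 hTF
      have hc := card_svert hr hb' hTt
      have hEs : (fun j => (svert q k T).orderEmbOfFin hc j) = s := by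
        rw [extractS, dif_pos hc] at hTE; exact hTE
      rw [Set.Finite.mem_toFinset]
      have hres := restrict_tiling hr hb' hTt
      rw [hEs] at hres
      exact hres
    · intro T' hT'
      rw [Set.Finite.mem_toFinset] at hT'
      rw [Finset.mem_filter]
      have hbig := bigT_tiling hr hb' hs1 hs2 T' hT'
      refine ⟨(hmemF _).2 hbig, ?_⟩
      have hsv := svert_bigT hr hb' hs1 hs2 hT'
      have hcard : (svert q k (bigT k q r s T')).card = k := by
        rw [hsv, Finset.card_image_of_injective _ hsmono.injective, Finset.card_univ,
          Fintype.card_fin]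
      rw [extractS, dif_pos hcard]
      have heq : s = fun j => (svert q k (bigT k q r s T')).orderEmbOfFin hcard j := by
        apply Finset.orderEmbOfFin_unique
        · intro x; rw [hsv]; exact Finset.mem_image_of_mem s (Finset.mem_univ x)
        · exact hsmono
      exact heq.symm
    · intro T hT
      rw [Finset.mem_filter] at hT
      obtain ⟨hTF, hTE⟩ := hT
      have hTt := (hmemF T).1 hTF
      have hc := card_svert hr hb' hTt
      have hEs : (fun j => (svert q k T).orderEmbOfFin hc j) = s := by
        rw [extractS, dif_pos hc] at hTE; exact hTE
      have hdec := decomp hr hb' hTt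
      rw [hEs] at hdec
      exact hdec.symm
    · intro T' hT'
      rw [Set.Finite.mem_toFinset] at hT'
      exact restrict_bigT hT'


/-- The number of lozenge tilings of a `(k,q,k)` dented upper semi-hexagon with dents
at positions `r 0 < r 1 < ⋯ < r (k-1) < q + k` is
`(1 / V (k-1)) · ∏_{i < j} (r j - r i)`. -/
theorem dented_semihexagon_count (k q : ℕ) (hk : 1 ≤ k) (r : Fin k → ℕ)
    (hmono : StrictMono r) (hbound : ∀ t, r t < q + k) :
    (Set.ncard {T | IsLozengeTiling (SemiHexUp k q r) (SemiHexDown k q) T} : ℚ) =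
      (1 / (V (k - 1) : ℚ)) *
        ∏ p ∈ Finset.univ.filter (fun p : Fin k × Fin k => p.1 < p.2),
          ((r p.2 : ℚ) - (r p.1 : ℚ)) := by
  rw [count_tilings k q r hmono hbound]
  exact detB_formula k hk r
end

section
/- Let U be a 2k by k matrix with rows indexed 0 to 2k-1. For each k-subset A of {0,...,2k-1}, let U_A denote the determinant of the k by k submatrix formed by the rows in A (in increasing order), and let Ā be the complement of A. Then Σ_A U_A · U_{Ā}, summed over all k-subsets A, equals 2^k · det( (u_{2i,j})_{0≤i,j≤k-1} ) · det( (u_{2i+1,j})_{0≤i,j≤k-1} ). -/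
open Finset Equiv Function

namespace PSaux

variable {k : ℕ}

/-- even rows embedding -/
def dE (k : ℕ) : Fin k → Fin (2 * k) := fun i => ⟨2 * i, by have := i.isLt; omega⟩
/-- odd rows embedding -/
def dO (k : ℕ) : Fin k → Fin (2 * k) := fun i => ⟨2 * i + 1, by have := i.isLt; omega⟩

/-- increasing enumeration of a subset of cardinality `k` -/
def eFn (A : Finset (Fin (2 * k))) (hA : A.card = k) : Fin k → Fin (2 * k) :=
  fun i => A.orderEmbOfFin hA i

lemma eFn_mem (A : Finset (Fin (2 * k))) (hA : A.card = k) (i : Fin k) :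
    eFn A hA i ∈ A := Finset.orderEmbOfFin_mem A hA i

lemma eFn_strictMono (A : Finset (Fin (2 * k))) (hA : A.card = k) :
    StrictMono (eFn A hA) := (A.orderEmbOfFin hA).strictMono

lemma eFn_surjOn (A : Finset (Fin (2 * k))) (hA : A.card = k) {y : Fin (2 * k)}
    (hy : y ∈ A) : ∃ i, eFn A hA i = y := by
  have : y ∈ Set.range (A.orderEmbOfFin hA) := by
    rw [Finset.range_orderEmbOfFin]; exact hy
  obtain ⟨i, hi⟩ := this
  exact ⟨i, hi⟩

/-- the interleaving even/odd equivalence -/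
noncomputable def piE (k : ℕ) : (Fin k ⊕ Fin k) ≃ Fin (2 * k) :=
  Equiv.ofBijective (Sum.elim (dE k) (dO k)) (by
    rw [Fintype.bijective_iff_injective_and_card]
    constructor
    · rintro (x | x) (y | y) h <;>
        simp only [Sum.elim_inl, Sum.elim_inr, dE, dO, Fin.mk.injEq] at h <;>
        first
          | (exact congrArg _ (Fin.ext (by omega)))
          | omega
    · simp; omega)

@[simp] lemma piE_inl (i : Fin k) : piE k (Sum.inl i) = dE k i := rfl
@[simp] lemma piE_inr (i : Fin k) : piE k (Sum.inr i) = dO k i := rfl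

/-- enumeration equivalence attached to a `k`-subset `A` -/
noncomputable def piA (A : Finset (Fin (2 * k))) (hA : A.card = k) (hAc : Aᶜ.card = k) :
    (Fin k ⊕ Fin k) ≃ Fin (2 * k) :=
  Equiv.ofBijective (Sum.elim (eFn A hA) (eFn Aᶜ hAc)) (by
    rw [Fintype.bijective_iff_injective_and_card]
    constructor
    · rintro (x | x) (y | y) h <;>
        simp only [Sum.elim_inl, Sum.elim_inr] at h
      · exact congrArg _ ((eFn_strictMono A hA).injective h)
      · exact absurd (h ▸ eFn_mem A hA x)
          (by simpa using (Finset.mem_compl.1 (eFn_mem Aᶜ hAc y)))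
      · exact absurd (h ▸ eFn_mem Aᶜ hAc x)
          (by simp [eFn_mem A hA y])
      · exact congrArg _ ((eFn_strictMono Aᶜ hAc).injective h)
    · simp; omega)

@[simp] lemma piA_inl (A : Finset (Fin (2 * k))) (hA : A.card = k) (hAc : Aᶜ.card = k)
    (i : Fin k) : piA A hA hAc (Sum.inl i) = eFn A hA i := rfl
@[simp] lemma piA_inr (A : Finset (Fin (2 * k))) (hA : A.card = k) (hAc : Aᶜ.card = k)
    (i : Fin k) : piA A hA hAc (Sum.inr i) = eFn Aᶜ hAc i := rfl

/-- the row-assignment function built from a pair of permutations and a splitting -/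
def Gf (π : (Fin k ⊕ Fin k) ≃ Fin (2 * k)) (σ τ : Perm (Fin k)) : Fin (2 * k) → Fin k :=
  fun x => Sum.elim ⇑σ ⇑τ (π.symm x)

lemma Gf_eq_iff (π : (Fin k ⊕ Fin k) ≃ Fin (2 * k)) (σ τ : Perm (Fin k))
    (g : Fin (2 * k) → Fin k) :
    Gf π σ τ = g ↔ (⇑σ = g ∘ π ∘ Sum.inl ∧ ⇑τ = g ∘ π ∘ Sum.inr) := by
  constructor
  · intro h
    constructor <;> funext i
    · have := congrFun h (π (Sum.inl i)); simpa [Gf] using this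
    · have := congrFun h (π (Sum.inr i)); simpa [Gf] using this
  · rintro ⟨h1, h2⟩
    funext x
    rcases hy : π.symm x with i | i
    · have hx : π (Sum.inl i) = x := by rw [← hy, Equiv.apply_symm_apply]
      simp [Gf, hy, h1, ← hx]
    · have hx : π (Sum.inr i) = x := by rw [← hy, Equiv.apply_symm_apply]
      simp [Gf, hy, h2, ← hx]

/-- the integer coefficient of a splitting `π` relative to `g` -/
noncomputable def Dfn (g : Fin (2 * k) → Fin k) (π : (Fin k ⊕ Fin k) ≃ Fin (2 * k)) : ℤ :=
  if h : Bijective (g ∘ π ∘ Sum.inl) ∧ Bijective (g ∘ π ∘ Sum.inr) then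
    ((Perm.sign (Equiv.ofBijective _ h.1) : ℤ) * (Perm.sign (Equiv.ofBijective _ h.2) : ℤ))
  else 0

/-- sum over permutation pairs in the fiber equals the coefficient -/
lemma sum_pairs_fiber (g : Fin (2 * k) → Fin k) (π : (Fin k ⊕ Fin k) ≃ Fin (2 * k)) :
    ∑ q ∈ (univ : Finset (Perm (Fin k) × Perm (Fin k))).filter (fun q => Gf π q.1 q.2 = g),
      ((Perm.sign q.1 : ℤ) * (Perm.sign q.2 : ℤ)) = Dfn g π := by
  classical
  have hsplit : (univ : Finset (Perm (Fin k) × Perm (Fin k))).filter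
        (fun q => Gf π q.1 q.2 = g) =
      (univ.filter (fun σ : Perm (Fin k) => ⇑σ = g ∘ π ∘ Sum.inl)) ×ˢ
      (univ.filter (fun τ : Perm (Fin k) => ⇑τ = g ∘ π ∘ Sum.inr)) := by
    ext q
    simp [Gf_eq_iff, Finset.mem_filter, Finset.mem_product, and_assoc]
  have hfac : ∀ (f : Fin k → Fin k),
      ∑ σ ∈ univ.filter (fun σ : Perm (Fin k) => ⇑σ = f), (Perm.sign σ : ℤ) =
      if h : Bijective f then (Perm.sign (Equiv.ofBijective f h) : ℤ) else 0 := by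
    intro f
    by_cases h : Bijective f
    · rw [dif_pos h]
      have : univ.filter (fun σ : Perm (Fin k) => ⇑σ = f) = {Equiv.ofBijective f h} := by
        ext σ
        simp only [Finset.mem_filter, Finset.mem_univ, true_and, Finset.mem_singleton]
        constructor
        · intro hc
          exact Equiv.coe_fn_injective hc
        · intro hc; rw [hc]; rfl
      rw [this, Finset.sum_singleton]
    · rw [dif_neg h]
      apply Finset.sum_eq_zero
      intro σ hσ
      exact absurd ((Finset.mem_filter.1 hσ).2 ▸ σ.bijective) h
  rw [hsplit, Finset.sum_product, Dfn]
  have : ∀ σ ∈ univ.filter (fun σ : Perm (Fin k) => ⇑σ = g ∘ π ∘ Sum.inl),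
      ∑ τ ∈ univ.filter (fun τ : Perm (Fin k) => ⇑τ = g ∘ π ∘ Sum.inr),
        (Perm.sign σ : ℤ) * (Perm.sign τ : ℤ) =
      (Perm.sign σ : ℤ) * ∑ τ ∈ univ.filter (fun τ : Perm (Fin k) => ⇑τ = g ∘ π ∘ Sum.inr),
        (Perm.sign τ : ℤ) := by
    intro σ _; rw [Finset.mul_sum]
  rw [Finset.sum_congr rfl this, ← Finset.sum_mul, hfac, hfac]
  by_cases hb : Bijective (g ∘ ⇑π ∘ Sum.inl) ∧ Bijective (g ∘ ⇑π ∘ Sum.inr)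
  · rw [dif_pos hb.1, dif_pos hb.2, dif_pos hb]
  · rw [dif_neg hb]
    rcases not_and_or.1 hb with h | h
    · rw [dif_neg h, zero_mul]
    · rw [dif_neg h, mul_zero]

section Expansion

variable (R : Type*) [CommRing R]

/-- Leibniz-type expansion of a product of two complementary minors -/
lemma exp_det (U : Matrix (Fin (2 * k)) (Fin k) R) (π : (Fin k ⊕ Fin k) ≃ Fin (2 * k)) :
    (Matrix.of fun i j : Fin k => U (π (Sum.inl i)) j).det *
      (Matrix.of fun i j : Fin k => U (π (Sum.inr i)) j).det =
    ∑ q ∈ (univ : Finset (Perm (Fin k) × Perm (Fin k))),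
      (((Perm.sign q.1 : ℤ) * (Perm.sign q.2 : ℤ) : ℤ) : R) *
        ∏ x : Fin (2 * k), U x (Gf π q.1 q.2 x) := by
  have hprod : ∀ σ τ : Perm (Fin k),
      (∏ i, U (π (Sum.inl i)) (σ i)) * ∏ i, U (π (Sum.inr i)) (τ i)
        = ∏ x, U x (Gf π σ τ x) := by
    intro σ τ
    calc (∏ i, U (π (Sum.inl i)) (σ i)) * ∏ i, U (π (Sum.inr i)) (τ i)
        = ∏ y : Fin k ⊕ Fin k, U (π y) (Sum.elim ⇑σ ⇑τ y) := (Fintype.prod_sum_type (fun y : Fin k ⊕ Fin k => U (π y) (Sum.elim ⇑σ ⇑τ y))).symm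
      _ = ∏ y : Fin k ⊕ Fin k, U (π y) (Gf π σ τ (π y)) := by
          apply Finset.prod_congr rfl; intro y _; simp [Gf]
      _ = ∏ x, U x (Gf π σ τ x) := Equiv.prod_comp π (fun x => U x (Gf π σ τ x))
  have h1 : (Matrix.of fun i j : Fin k => U (π (Sum.inl i)) j).det
      = ∑ σ : Perm (Fin k), ((Perm.sign σ : ℤ) : R) * ∏ i, U (π (Sum.inl i)) (σ i) := by
    rw [← Matrix.det_transpose, Matrix.det_apply']
    apply Finset.sum_congr rfl; intro σ _; rfl
  have h2 : (Matrix.of fun i j : Fin k => U (π (Sum.inr i)) j).det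
      = ∑ τ : Perm (Fin k), ((Perm.sign τ : ℤ) : R) * ∏ i, U (π (Sum.inr i)) (τ i) := by
    rw [← Matrix.det_transpose, Matrix.det_apply']
    apply Finset.sum_congr rfl; intro τ _; rfl
  rw [h1, h2, Finset.sum_mul_sum]
  rw [Fintype.sum_prod_type]
  apply Finset.sum_congr rfl; intro σ _
  apply Finset.sum_congr rfl; intro τ _
  rw [← hprod σ τ]
  push_cast
  ring

/-- expansion into fibers over `g` -/
lemma exp_det_fiber (U : Matrix (Fin (2 * k)) (Fin k) R)
    (π : (Fin k ⊕ Fin k) ≃ Fin (2 * k)) :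
    (Matrix.of fun i j : Fin k => U (π (Sum.inl i)) j).det *
      (Matrix.of fun i j : Fin k => U (π (Sum.inr i)) j).det =
    ∑ g : Fin (2 * k) → Fin k, ((Dfn g π : ℤ) : R) * ∏ x : Fin (2 * k), U x (g x) := by
  classical
  rw [exp_det R U π]
  have hfib := Finset.sum_fiberwise_eq_sum_filter
    (univ : Finset (Perm (Fin k) × Perm (Fin k))) univ
    (fun q => Gf π q.1 q.2)
    (fun q => (((Perm.sign q.1 : ℤ) * (Perm.sign q.2 : ℤ) : ℤ) : R) *
        ∏ x : Fin (2 * k), U x (Gf π q.1 q.2 x))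
  simp only [Finset.mem_univ, Finset.filter_true] at hfib
  rw [← hfib]
  apply Finset.sum_congr rfl
  intro g' _
  have hc : ∀ q ∈ (univ : Finset (Perm (Fin k) × Perm (Fin k))).filter
      (fun q => Gf π q.1 q.2 = g'),
      (((Perm.sign q.1 : ℤ) * (Perm.sign q.2 : ℤ) : ℤ) : R) *
        ∏ x : Fin (2 * k), U x (Gf π q.1 q.2 x) =
      (((Perm.sign q.1 : ℤ) * (Perm.sign q.2 : ℤ) : ℤ) : R) *
        ∏ x : Fin (2 * k), U x (g' x) := by
    intro q hq
    rw [(Finset.mem_filter.1 hq).2]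
  rw [Finset.sum_congr rfl hc, ← Finset.sum_mul, ← Int.cast_sum, sum_pairs_fiber g' π]

end Expansion

/-! ### The subset invariance machinery -/

/-- key adjacent-swap lemma for enumerations -/
lemma eFn_swap {B : Finset (Fin (2 * k))} (hB : B.card = k) {p q : Fin (2 * k)}
    (hp : p ∈ B) (hq : q ∉ B) (hadj : (p : ℕ) + 1 = q ∨ (q : ℕ) + 1 = p)
    (hB' : (insert q (B.erase p)).card = k) :
    eFn (insert q (B.erase p)) hB' = ⇑(Equiv.swap p q) ∘ eFn B hB := by
  have hpq : p ≠ q := fun h => hq (h ▸ hp)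
  have hsw : ∀ v, v ∈ B → Equiv.swap p q v = if v = p then q else v := by
    intro v hv
    by_cases h : v = p
    · simp [h]
    · have hvq : v ≠ q := fun hc => hq (hc ▸ hv)
      rw [Equiv.swap_apply_of_ne_of_ne h hvq, if_neg h]
  have hmem : ∀ i, (⇑(Equiv.swap p q) ∘ eFn B hB) i ∈ insert q (B.erase p) := by
    intro i
    rw [comp_apply, hsw _ (eFn_mem B hB i)]
    by_cases h : eFn B hB i = p
    · rw [if_pos h]; exact Finset.mem_insert_self _ _
    · rw [if_neg h]
      exact Finset.mem_insert_of_mem (Finset.mem_erase.2 ⟨h, eFn_mem B hB i⟩)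
  have hmono : StrictMono (⇑(Equiv.swap p q) ∘ eFn B hB) := by
    intro i j hij
    have h1 : eFn B hB i < eFn B hB j := eFn_strictMono B hB hij
    have hi := eFn_mem B hB i
    have hj := eFn_mem B hB j
    simp only [comp_apply]
    rw [hsw _ hi, hsw _ hj]
    have hiq : eFn B hB i ≠ q := fun hc => hq (hc ▸ hi)
    have hjq : eFn B hB j ≠ q := fun hc => hq (hc ▸ hj)
    rcases hadj with hadj | hadj <;> split_ifs with h2 h3 h3
    · exact absurd (h2.trans h3.symm) (ne_of_lt h1)
    · rw [Fin.lt_def]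
      have e1 : (eFn B hB i : ℕ) = p := congrArg Fin.val h2
      have e2 : (eFn B hB j : ℕ) ≠ p := fun hc => h3 (Fin.ext hc)
      have e3 : (eFn B hB j : ℕ) ≠ q := fun hc => hjq (Fin.ext hc)
      have e4 : (eFn B hB i : ℕ) < eFn B hB j := h1
      omega
    · rw [Fin.lt_def]
      have e1 : (eFn B hB j : ℕ) = p := congrArg Fin.val h3
      have e2 : (eFn B hB i : ℕ) ≠ q := fun hc => hiq (Fin.ext hc)
      have e4 : (eFn B hB i : ℕ) < eFn B hB j := h1
      omega
    · exact h1
    · exact absurd (h2.trans h3.symm) (ne_of_lt h1)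
    · rw [Fin.lt_def]
      have e1 : (eFn B hB i : ℕ) = p := congrArg Fin.val h2
      have e2 : (eFn B hB j : ℕ) ≠ p := fun hc => h3 (Fin.ext hc)
      have e3 : (eFn B hB j : ℕ) ≠ q := fun hc => hjq (Fin.ext hc)
      have e4 : (eFn B hB i : ℕ) < eFn B hB j := h1
      omega
    · rw [Fin.lt_def]
      have e1 : (eFn B hB j : ℕ) = p := congrArg Fin.val h3
      have e2 : (eFn B hB i : ℕ) ≠ q := fun hc => hiq (Fin.ext hc)
      have e4 : (eFn B hB i : ℕ) < eFn B hB j := h1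
      omega
    · exact h1
  exact (Finset.orderEmbOfFin_unique hB' hmem hmono).symm

lemma flip_card {A : Finset (Fin (2 * k))} {p q : Fin (2 * k)}
    (hp : p ∈ A) (hq : q ∉ A) : (insert q (A.erase p)).card = A.card := by
  have h0 : 0 < A.card := Finset.card_pos.2 ⟨p, hp⟩
  rw [Finset.card_insert_of_notMem (fun hmem => hq (Finset.mem_of_mem_erase hmem)),
    Finset.card_erase_of_mem hp]
  omega

lemma flip_compl {A : Finset (Fin (2 * k))} {p q : Fin (2 * k)}
    (hp : p ∈ A) (hq : q ∉ A) :
    (insert q (A.erase p))ᶜ = insert p (Aᶜ.erase q) := by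
  have hpq : p ≠ q := fun h => hq (h ▸ hp)
  ext x
  by_cases hxp : x = p <;> by_cases hxq : x = q <;>
    simp_all [Finset.mem_insert, Finset.mem_erase, Finset.mem_compl]

lemma flip_flip {A : Finset (Fin (2 * k))} {p q : Fin (2 * k)} (hne : p ≠ q)
    (hp : p ∈ A) (hq : q ∉ A) :
    insert p ((insert q (A.erase p)).erase q) = A := by
  ext x
  by_cases hxp : x = p <;> by_cases hxq : x = q <;>
    simp_all [Finset.mem_insert, Finset.mem_erase]

lemma eFn_congr {B C : Finset (Fin (2 * k))} (h : B = C) (hB : B.card = k)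
    (hC : C.card = k) : eFn B hB = eFn C hC := by subst h; rfl

lemma piA_congr {B C : Finset (Fin (2 * k))} (h : B = C) (hB : B.card = k) (hBc : Bᶜ.card = k)
    (hC : C.card = k) (hCc : Cᶜ.card = k) : piA B hB hBc = piA C hC hCc := by subst h; rfl

lemma piA_adj_flip {A : Finset (Fin (2 * k))} (hA : A.card = k) (hAc : Aᶜ.card = k)
    {p q : Fin (2 * k)} (hp : p ∈ A) (hq : q ∉ A)
    (hadj : (p : ℕ) + 1 = q ∨ (q : ℕ) + 1 = p)
    (hA' : (insert q (A.erase p)).card = k) (hA'c : (insert q (A.erase p))ᶜ.card = k) :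
    piA (insert q (A.erase p)) hA' hA'c = (piA A hA hAc).trans (Equiv.swap p q) := by
  have hqc : q ∈ Aᶜ := Finset.mem_compl.2 hq
  have hpc : p ∉ Aᶜ := by simp [hp]
  have hcc : (insert p (Aᶜ.erase q)).card = k := by rw [flip_card hqc hpc, hAc]
  have hswapc := eFn_swap hAc hqc hpc (Or.symm hadj) hcc
  have hcompl := flip_compl (k := k) hp hq
  apply Equiv.ext
  intro y
  rcases y with i | i
  · have := congrFun (eFn_swap hA hp hq hadj hA') i
    simpa using this
  · have h1 : eFn (insert q (A.erase p))ᶜ hA'c i = eFn (insert p (Aᶜ.erase q)) hcc i :=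
      congrFun (eFn_congr hcompl hA'c hcc) i
    have h2 := congrFun hswapc i
    simp only [Equiv.trans_apply]
    show eFn (insert q (A.erase p))ᶜ hA'c i = Equiv.swap p q (eFn Aᶜ hAc i)
    rw [h1, h2, comp_apply, Equiv.swap_comm]

/-- subsets of cardinality `k` with attached membership proofs -/
abbrev SubT (k : ℕ) := {A : Finset (Fin (2 * k)) // A ∈ (univ : Finset (Fin (2 * k))).powersetCard k}

lemma hc1 (x : SubT k) : x.1.card = k := (Finset.mem_powersetCard.1 x.2).2

lemma hc2 (x : SubT k) : x.1ᶜ.card = k := by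
  have := hc1 x
  rw [Finset.card_compl, Fintype.card_fin] at *
  omega

/-- the splitting attached to an element of `SubT` -/
noncomputable def piX (x : SubT k) : (Fin k ⊕ Fin k) ≃ Fin (2 * k) := piA x.1 (hc1 x) (hc2 x)

/-- weight of a subset -/
def N (A : Finset (Fin (2 * k))) : ℕ := ∑ z ∈ A, (z : ℕ)

lemma N_flip {A : Finset (Fin (2 * k))} {p q : Fin (2 * k)} (hp : p ∈ A) (hq : q ∉ A) :
    N (insert q (A.erase p)) + (p : ℕ) = N A + (q : ℕ) := by
  rw [N, N, Finset.sum_insert (fun hmem => hq (Finset.mem_of_mem_erase hmem))]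
  have h2 : (∑ x ∈ A.erase p, (x : ℕ)) + (p : ℕ) = ∑ x ∈ A, (x : ℕ) :=
    Finset.sum_erase_add A _ hp
  omega

lemma neg_one_pow_mod (a b : ℕ) (h : a % 2 = b % 2) : ((-1 : ℤˣ)) ^ a = (-1) ^ b := by
  conv_lhs => rw [← Nat.div_add_mod a 2]
  conv_rhs => rw [← Nat.div_add_mod b 2]
  rw [pow_add, pow_add, pow_mul, pow_mul, neg_one_sq, one_pow, one_pow, h]

/-- the sign invariant -/
noncomputable def Su (x : SubT k) : ℤˣ := Perm.sign ((piX x).trans (piE k).symm)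

/-- the initial segment -/
def initT (k : ℕ) : SubT k :=
  ⟨Finset.image (fun i : Fin k => (⟨i, by omega⟩ : Fin (2 * k))) univ, by
    rw [Finset.mem_powersetCard]
    refine ⟨Finset.subset_univ _, ?_⟩
    rw [Finset.card_image_of_injective _ (fun i j h => by
      simpa using Fin.ext (by simpa using congrArg Fin.val h)), Finset.card_univ,
      Fintype.card_fin]⟩

/-- descent towards the initial segment -/
lemma descent (x : SubT k) (hne : x.1 ≠ (initT k).1) :
    ∃ a b : Fin (2 * k), (a : ℕ) + 1 = (b : ℕ) ∧ a ∉ x.1 ∧ b ∈ x.1 := by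
  by_contra hcon
  push_neg at hcon
  have hstep : ∀ (m : ℕ) (hm1 : m + 1 < 2 * k), (⟨m + 1, hm1⟩ : Fin (2 * k)) ∈ x.1 →
      (⟨m, by omega⟩ : Fin (2 * k)) ∈ x.1 := by
    intro m hm1 hmem
    by_contra hnot
    exact hcon ⟨m, by omega⟩ ⟨m + 1, hm1⟩ rfl hnot hmem
  have down : ∀ (d m : ℕ) (hm : m + d < 2 * k), (⟨m + d, hm⟩ : Fin (2 * k)) ∈ x.1 →
      (⟨m, by omega⟩ : Fin (2 * k)) ∈ x.1 := by
    intro d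
    induction d with
    | zero => intro m hm hmem; exact hmem
    | succ d ih =>
      intro m hm hmem
      have h1 : m + d + 1 < 2 * k := by omega
      have : (⟨m + d, by omega⟩ : Fin (2 * k)) ∈ x.1 := hstep (m + d) h1 hmem
      exact ih m (by omega) this
  have hsmall : ∀ y ∈ x.1, (y : ℕ) < k := by
    intro y hy
    by_contra hge
    push_neg at hge
    have hsub : Finset.Iic y ⊆ x.1 := by
      intro z hz
      rw [Finset.mem_Iic] at hz
      have hzy : (z : ℕ) ≤ (y : ℕ) := hz
      have := down ((y : ℕ) - (z : ℕ)) (z : ℕ) (by omega) (by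
        convert hy using 2; omega)
      convert this using 2
    have hcard := Finset.card_le_card hsub
    rw [Fin.card_Iic, hc1 x] at hcard
    omega
  apply hne
  apply Finset.eq_of_subset_of_card_le
  · intro y hy
    simp only [initT, Finset.mem_image]
    exact ⟨⟨(y : ℕ), hsmall y hy⟩, Finset.mem_univ _, Fin.ext rfl⟩
  · rw [hc1 x, hc1 (initT k)]

lemma Su_adj {p q : Fin (2 * k)} (x x' : SubT k) (hp : p ∈ x.1) (hq : q ∉ x.1)
    (hadj : (p : ℕ) + 1 = q ∨ (q : ℕ) + 1 = p) (hx' : x'.1 = insert q (x.1.erase p)) :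
    Su x' = -Su x := by
  have hpq : p ≠ q := fun h => hq (h ▸ hp)
  have hA' : (insert q (x.1.erase p)).card = k := by rw [flip_card hp hq, hc1 x]
  have hA'c : (insert q (x.1.erase p))ᶜ.card = k := by
    rw [Finset.card_compl, hA', Fintype.card_fin]; omega
  have h1 : piX x' = (piX x).trans (Equiv.swap p q) := by
    rw [piX, piA_congr hx' (hc1 x') (hc2 x') hA' hA'c]
    exact piA_adj_flip (hc1 x) (hc2 x) hp hq hadj hA' hA'c
  rw [Su, Su, h1]
  have h2 : ((piX x).trans (Equiv.swap p q)).trans (piE k).symm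
      = ((piX x).trans (piE k).symm).trans
          (((piE k).symm.symm.trans (Equiv.swap p q)).trans (piE k).symm) := by
    apply Equiv.ext; intro y
    simp only [Equiv.trans_apply, Equiv.symm_symm, Equiv.apply_symm_apply]
  rw [h2]
  have h3 : (((piE k).symm.symm.trans (Equiv.swap p q)).trans (piE k).symm)
      = ((piE k).symm).permCongr (Equiv.swap p q) := rfl
  rw [h3]
  have h4 : ∀ (P Q : Perm (Fin k ⊕ Fin k)), P.trans Q = Q * P := fun _ _ => rfl
  rw [h4, map_mul, Equiv.Perm.sign_permCongr, Equiv.Perm.sign_swap hpq]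
  rw [neg_one_mul]

/-- invariance of the normalized sign -/
lemma Su_invariant (x : SubT k) :
    Su x * (-1 : ℤˣ) ^ (N x.1) = Su (initT k) * (-1 : ℤˣ) ^ (N (initT k).1) := by
  suffices H : ∀ (m : ℕ) (x : SubT k), N x.1 = m →
      Su x * (-1 : ℤˣ) ^ (N x.1) = Su (initT k) * (-1 : ℤˣ) ^ (N (initT k).1) from H _ x rfl
  intro m
  induction m using Nat.strong_induction_on with
  | _ m ih =>
    intro x hm
    by_cases hx : x.1 = (initT k).1
    · rw [Subtype.ext hx]
    · obtain ⟨a, b, hab, ha, hb⟩ := descent x hx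
      have hcard : (insert a (x.1.erase b)).card = k := by rw [flip_card hb ha, hc1 x]
      have hmem' : insert a (x.1.erase b) ∈ (univ : Finset (Fin (2 * k))).powersetCard k :=
        Finset.mem_powersetCard.2 ⟨Finset.subset_univ _, hcard⟩
      set x' : SubT k := ⟨insert a (x.1.erase b), hmem'⟩ with hx'def
      have hSu : Su x' = -Su x := Su_adj x x' hb ha (Or.inr hab) rfl
      have hN' : N x'.1 + (b : ℕ) = N x.1 + (a : ℕ) := N_flip hb ha
      have hNlt : N x'.1 < m := by omega
      have hNx : N x.1 = N x'.1 + 1 := by omega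
      have hih := ih (N x'.1) hNlt x' rfl
      rw [← hih, hNx, pow_succ, show Su x = -Su x' from by rw [hSu, neg_neg]]
      simp [mul_assoc, mul_comm, mul_left_comm]

/-- flip: general sign relation between a subset and its flip -/
lemma Su_flip (x x' : SubT k) {p q : Fin (2 * k)} (hne : p ≠ q)
    (hp : p ∈ x.1) (hq : q ∉ x.1) (hx' : x'.1 = insert q (x.1.erase p)) :
    Su x' = Su x * (-1 : ℤˣ) ^ ((p : ℕ) + (q : ℕ)) := by
  have h3 : Su x' * (-1 : ℤˣ) ^ (N x'.1) = Su x * (-1 : ℤˣ) ^ (N x.1) :=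
    (Su_invariant x').trans (Su_invariant x).symm
  have hN : N x'.1 + (p : ℕ) = N x.1 + (q : ℕ) := by rw [hx']; exact N_flip hp hq
  have hpar : (N x.1 + N x'.1) % 2 = ((p : ℕ) + (q : ℕ)) % 2 := by omega
  have hsq : ∀ n : ℕ, ((-1 : ℤˣ)) ^ n * ((-1 : ℤˣ)) ^ n = 1 := by
    intro n
    rw [← pow_add, neg_one_pow_mod (n + n) 0 (by omega), pow_zero]
  calc Su x' = Su x' * ((-1 : ℤˣ) ^ (N x'.1) * (-1 : ℤˣ) ^ (N x'.1)) := by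
        rw [hsq, mul_one]
    _ = Su x' * (-1 : ℤˣ) ^ (N x'.1) * (-1 : ℤˣ) ^ (N x'.1) := by rw [mul_assoc]
    _ = Su x * (-1 : ℤˣ) ^ (N x.1) * (-1 : ℤˣ) ^ (N x'.1) := by rw [h3]
    _ = Su x * (-1 : ℤˣ) ^ (N x.1 + N x'.1) := by rw [pow_add, mul_assoc]
    _ = Su x * (-1 : ℤˣ) ^ ((p : ℕ) + (q : ℕ)) := by rw [neg_one_pow_mod _ _ hpar]


lemma bij_iff_injOn (g : Fin (2 * k) → Fin k) {B : Finset (Fin (2 * k))} (hB : B.card = k) :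
    Bijective (g ∘ eFn B hB) ↔ ∀ z ∈ B, ∀ w ∈ B, g z = g w → z = w := by
  constructor
  · intro hbij z hz w hw hgw
    obtain ⟨i, rfl⟩ := eFn_surjOn B hB hz
    obtain ⟨j, rfl⟩ := eFn_surjOn B hB hw
    rw [hbij.injective (show (g ∘ eFn B hB) i = (g ∘ eFn B hB) j from hgw)]
  · intro hinj
    rw [Fintype.bijective_iff_injective_and_card]
    refine ⟨?_, rfl⟩
    intro i j hij
    exact (eFn_strictMono B hB).injective
      (hinj _ (eFn_mem _ _ _) _ (eFn_mem _ _ _) hij)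

lemma bijl_iff (g : Fin (2 * k) → Fin k) (x : SubT k) :
    Bijective (g ∘ ⇑(piX x) ∘ Sum.inl) ↔
      (∀ z ∈ x.1, ∀ w ∈ x.1, g z = g w → z = w) := by
  show Bijective (g ∘ eFn x.1 (hc1 x)) ↔ _
  exact bij_iff_injOn g (hc1 x)

lemma bijr_iff (g : Fin (2 * k) → Fin k) (x : SubT k) :
    Bijective (g ∘ ⇑(piX x) ∘ Sum.inr) ↔
      (∀ z ∈ x.1ᶜ, ∀ w ∈ x.1ᶜ, g z = g w → z = w) := by
  show Bijective (g ∘ eFn x.1ᶜ (hc2 x)) ↔ _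
  exact bij_iff_injOn g (hc2 x)

lemma adm_flip (g : Fin (2 * k) → Fin k) (p q : Fin (2 * k)) (hne : p ≠ q)
    (hv : g p = g q) (hfib : ∀ z, g z = g p → z = p ∨ z = q)
    (x x' : SubT k) (hp : p ∈ x.1) (hq : q ∉ x.1) (hx' : x'.1 = insert q (x.1.erase p))
    (h : Bijective (g ∘ ⇑(piX x) ∘ Sum.inl) ∧ Bijective (g ∘ ⇑(piX x) ∘ Sum.inr)) :
    Bijective (g ∘ ⇑(piX x') ∘ Sum.inl) ∧ Bijective (g ∘ ⇑(piX x') ∘ Sum.inr) := by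
  have h1 := (bijl_iff g x).1 h.1
  have h2 := (bijr_iff g x).1 h.2
  have hqx' : q ∈ x'.1 := by rw [hx']; exact Finset.mem_insert_self _ _
  have hpx' : p ∉ x'.1 := by
    rw [hx']
    simp [Finset.mem_insert, Finset.mem_erase, hne]
  refine ⟨(bijl_iff g x').2 ?_, (bijr_iff g x').2 ?_⟩
  · intro z hz w hw hgzw
    by_cases hgz : g z = g p
    · have hz2 : z = q := by
        rcases hfib z hgz with rfl | rfl
        · exact absurd hz hpx'
        · rfl
      have hw2 : w = q := by
        rcases hfib w (by rw [← hgzw]; exact hgz) with rfl | rfl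
        · exact absurd hw hpx'
        · rfl
      rw [hz2, hw2]
    · have hzq : z ≠ q := fun hc => hgz (by rw [hc, ← hv])
      have hgw : g w ≠ g p := by rw [← hgzw]; exact hgz
      have hwq : w ≠ q := fun hc => hgw (by rw [hc, ← hv])
      rw [hx'] at hz hw
      rcases Finset.mem_insert.1 hz with hc | hc
      · exact absurd hc hzq
      rcases Finset.mem_insert.1 hw with hc' | hc'
      · exact absurd hc' hwq
      exact h1 z (Finset.mem_of_mem_erase hc) w (Finset.mem_of_mem_erase hc') hgzw
  · intro z hz w hw hgzw
    have hqc : q ∉ x'.1ᶜ := by simp [hqx']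
    by_cases hgz : g z = g p
    · have hz2 : z = p := by
        rcases hfib z hgz with rfl | rfl
        · rfl
        · exact absurd hz hqc
      have hw2 : w = p := by
        rcases hfib w (by rw [← hgzw]; exact hgz) with rfl | rfl
        · rfl
        · exact absurd hw hqc
      rw [hz2, hw2]
    · have hzp : z ≠ p := fun hc => hgz (by rw [hc])
      have hgw : g w ≠ g p := by rw [← hgzw]; exact hgz
      have hwp : w ≠ p := fun hc => hgw (by rw [hc])
      have hzq : z ≠ q := fun hc => hgz (by rw [hc, ← hv])
      have hwq : w ≠ q := fun hc => hgw (by rw [hc, ← hv])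
      have hzc : z ∈ x.1ᶜ := by
        rw [Finset.mem_compl]
        intro hzx
        exact (Finset.mem_compl.1 hz) (by
          rw [hx']
          exact Finset.mem_insert_of_mem (Finset.mem_erase.2 ⟨hzp, hzx⟩))
      have hwc : w ∈ x.1ᶜ := by
        rw [Finset.mem_compl]
        intro hwx
        exact (Finset.mem_compl.1 hw) (by
          rw [hx']
          exact Finset.mem_insert_of_mem (Finset.mem_erase.2 ⟨hwp, hwx⟩))
      exact h2 z hzc w hwc hgzw

/-- the side-recording equivalence attached to an admissible subset -/
noncomputable def Gamma (g : Fin (2 * k) → Fin k) (x : SubT k)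
    (h : Bijective (g ∘ ⇑(piX x) ∘ Sum.inl) ∧ Bijective (g ∘ ⇑(piX x) ∘ Sum.inr)) :
    Fin (2 * k) ≃ (Fin k ⊕ Fin k) :=
  Equiv.ofBijective (fun z => if z ∈ x.1 then Sum.inl (g z) else Sum.inr (g z)) (by
    have h1 := (bijl_iff g x).1 h.1
    have h2 := (bijr_iff g x).1 h.2
    rw [Fintype.bijective_iff_injective_and_card]
    constructor
    · intro z w hzw
      by_cases hz : z ∈ x.1 <;> by_cases hw : w ∈ x.1
      · simp only [if_pos hz, if_pos hw, Sum.inl.injEq] at hzw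
        exact h1 z hz w hw hzw
      · simp [if_pos hz, if_neg hw] at hzw
      · simp [if_neg hz, if_pos hw] at hzw
      · simp only [if_neg hz, if_neg hw, Sum.inr.injEq] at hzw
        exact h2 z (Finset.mem_compl.2 hz) w (Finset.mem_compl.2 hw) hzw
    · simp; omega)

lemma eps_decomp (g : Fin (2 * k) → Fin k) (x : SubT k)
    (h : Bijective (g ∘ ⇑(piX x) ∘ Sum.inl) ∧ Bijective (g ∘ ⇑(piX x) ∘ Sum.inr)) :
    Perm.sign (Equiv.ofBijective _ h.1) * Perm.sign (Equiv.ofBijective _ h.2)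
      = Perm.sign ((piE k).trans (Gamma g x h)) * Su x := by
  have hkey : Equiv.sumCongr (Equiv.ofBijective _ h.1) (Equiv.ofBijective _ h.2)
      = (piX x).trans (Gamma g x h) := by
    apply Equiv.ext
    rintro (i | i)
    · show Sum.inl (g ((piX x) (Sum.inl i)))
        = if (piX x) (Sum.inl i) ∈ x.1 then Sum.inl (g ((piX x) (Sum.inl i)))
          else Sum.inr (g ((piX x) (Sum.inl i)))
      rw [if_pos (show (piX x) (Sum.inl i) ∈ x.1 from eFn_mem x.1 (hc1 x) i)]
    · show Sum.inr (g ((piX x) (Sum.inr i)))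
        = if (piX x) (Sum.inr i) ∈ x.1 then Sum.inl (g ((piX x) (Sum.inr i)))
          else Sum.inr (g ((piX x) (Sum.inr i)))
      rw [if_neg (show ¬((piX x) (Sum.inr i) ∈ x.1) from
        Finset.mem_compl.1 (eFn_mem x.1ᶜ (hc2 x) i))]
  have h2 : (piX x).trans (Gamma g x h)
      = ((piX x).trans (piE k).symm).trans ((piE k).trans (Gamma g x h)) := by
    apply Equiv.ext; intro y
    simp only [Equiv.trans_apply, Equiv.apply_symm_apply]
  calc Perm.sign (Equiv.ofBijective _ h.1) * Perm.sign (Equiv.ofBijective _ h.2)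
      = Perm.sign (Equiv.sumCongr (Equiv.ofBijective _ h.1) (Equiv.ofBijective _ h.2)) :=
        (Equiv.Perm.sign_sumCongr _ _).symm
    _ = Perm.sign ((piX x).trans (Gamma g x h)) := by rw [hkey]
    _ = Perm.sign (((piX x).trans (piE k).symm).trans ((piE k).trans (Gamma g x h))) := by
        rw [← h2]
    _ = Perm.sign ((piE k).trans (Gamma g x h)) * Perm.sign ((piX x).trans (piE k).symm) := by
        rw [show ∀ P Q : Perm (Fin k ⊕ Fin k), P.trans Q = Q * P from fun _ _ => rfl, map_mul]
    _ = Perm.sign ((piE k).trans (Gamma g x h)) * Su x := rfl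

lemma Gamma_flip (g : Fin (2 * k) → Fin k) (p q : Fin (2 * k)) (hne : p ≠ q)
    (hv : g p = g q) (hfib : ∀ z, g z = g p → z = p ∨ z = q)
    (x x' : SubT k) (hp : p ∈ x.1) (hq : q ∉ x.1) (hx' : x'.1 = insert q (x.1.erase p))
    (h : Bijective (g ∘ ⇑(piX x) ∘ Sum.inl) ∧ Bijective (g ∘ ⇑(piX x) ∘ Sum.inr))
    (h' : Bijective (g ∘ ⇑(piX x') ∘ Sum.inl) ∧ Bijective (g ∘ ⇑(piX x') ∘ Sum.inr)) :
    Gamma g x' h' = (Gamma g x h).trans (Equiv.swap (Sum.inl (g p)) (Sum.inr (g p))) := by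
  have hqx' : q ∈ x'.1 := by rw [hx']; exact Finset.mem_insert_self _ _
  have hpx' : p ∉ x'.1 := by
    rw [hx']; simp [Finset.mem_insert, Finset.mem_erase, hne]
  apply Equiv.ext; intro z
  show (if z ∈ x'.1 then Sum.inl (g z) else Sum.inr (g z))
      = Equiv.swap (Sum.inl (g p)) (Sum.inr (g p))
          (if z ∈ x.1 then Sum.inl (g z) else Sum.inr (g z))
  by_cases hz1 : z = p
  · subst hz1
    rw [if_pos hp, if_neg hpx', Equiv.swap_apply_left]
  by_cases hz2 : z = q
  · subst hz2
    rw [if_neg hq, if_pos hqx', ← hv, Equiv.swap_apply_right]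
  · have hgz : g z ≠ g p := by
      intro hc
      rcases hfib z hc with h0 | h0
      · exact hz1 h0
      · exact hz2 h0
    have hmemeq : (z ∈ x'.1) ↔ (z ∈ x.1) := by
      rw [hx']
      simp [Finset.mem_insert, Finset.mem_erase, hz1, hz2]
    by_cases hzx : z ∈ x.1
    · rw [if_pos hzx, if_pos (hmemeq.2 hzx),
        Equiv.swap_apply_of_ne_of_ne (by simp [hgz]) (by simp)]
    · rw [if_neg hzx, if_neg (fun hc => hzx (hmemeq.1 hc)),
        Equiv.swap_apply_of_ne_of_ne (by simp) (by simp [hgz])]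



lemma dE_val (i : Fin k) : (dE k i : ℕ) = 2 * i := rfl
lemma dO_val (i : Fin k) : (dO k i : ℕ) = 2 * i + 1 := rfl

lemma dE_strictMono : StrictMono (dE k) := by
  intro i j h
  rw [Fin.lt_def, dE_val, dE_val]
  have : (i : ℕ) < j := h
  omega

lemma dO_strictMono : StrictMono (dO k) := by
  intro i j h
  rw [Fin.lt_def, dO_val, dO_val]
  have : (i : ℕ) < j := h
  omega

lemma compl_image_dE : ((univ : Finset (Fin k)).image (dE k))ᶜ = univ.image (dO k) := by
  ext z
  simp only [Finset.mem_compl, Finset.mem_image, Finset.mem_univ, true_and]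
  constructor
  · intro h
    have hodd : (z : ℕ) % 2 = 1 := by
      by_contra h2
      exact h ⟨⟨(z : ℕ) / 2, by omega⟩, Fin.ext (by rw [dE_val]; simp; omega)⟩
    exact ⟨⟨(z : ℕ) / 2, by omega⟩, Fin.ext (by rw [dO_val]; simp; omega)⟩
  · rintro ⟨i, rfl⟩ ⟨j, hj⟩
    have h1 := congrArg Fin.val hj
    rw [dE_val, dO_val] at h1
    omega

/-- the flip involution -/
noncomputable def flipT (p q : Fin (2 * k)) (x : SubT k) : SubT k :=
  if h : p ∈ x.1 ∧ q ∉ x.1 then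
    ⟨insert q (x.1.erase p), by
      rw [Finset.mem_powersetCard]
      exact ⟨Finset.subset_univ _, by rw [flip_card h.1 h.2, hc1 x]⟩⟩
  else if h' : q ∈ x.1 ∧ p ∉ x.1 then
    ⟨insert p (x.1.erase q), by
      rw [Finset.mem_powersetCard]
      exact ⟨Finset.subset_univ _, by rw [flip_card h'.1 h'.2, hc1 x]⟩⟩
  else x

lemma flipT_val1 (p q : Fin (2 * k)) (x : SubT k) (h : p ∈ x.1 ∧ q ∉ x.1) :
    (flipT p q x).1 = insert q (x.1.erase p) := by rw [flipT, dif_pos h]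

lemma flipT_val2 (p q : Fin (2 * k)) (x : SubT k) (h1 : ¬(p ∈ x.1 ∧ q ∉ x.1))
    (h2 : q ∈ x.1 ∧ p ∉ x.1) :
    (flipT p q x).1 = insert p (x.1.erase q) := by rw [flipT, dif_neg h1, dif_pos h2]

lemma flipT_val3 (p q : Fin (2 * k)) (x : SubT k) (h1 : ¬(p ∈ x.1 ∧ q ∉ x.1))
    (h2 : ¬(q ∈ x.1 ∧ p ∉ x.1)) : flipT p q x = x := by rw [flipT, dif_neg h1, dif_neg h2]

lemma flipT_invol (p q : Fin (2 * k)) (hne : p ≠ q) (x : SubT k) :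
    flipT p q (flipT p q x) = x := by
  by_cases h : p ∈ x.1 ∧ q ∉ x.1
  · have hval := flipT_val1 p q x h
    have hq' : q ∈ (flipT p q x).1 := by rw [hval]; exact Finset.mem_insert_self _ _
    have hp' : p ∉ (flipT p q x).1 := by
      rw [hval]; simp [Finset.mem_insert, Finset.mem_erase, hne]
    apply Subtype.ext
    rw [flipT_val2 p q _ (fun hc => hp' hc.1) ⟨hq', hp'⟩, hval, flip_flip hne h.1 h.2]
  · by_cases h2 : q ∈ x.1 ∧ p ∉ x.1
    · have hval := flipT_val2 p q x h h2
      have hp' : p ∈ (flipT p q x).1 := by rw [hval]; exact Finset.mem_insert_self _ _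
      have hq' : q ∉ (flipT p q x).1 := by
        rw [hval]; simp [Finset.mem_insert, Finset.mem_erase, Ne.symm hne]
      apply Subtype.ext
      rw [flipT_val1 p q _ ⟨hp', hq'⟩, hval, flip_flip (Ne.symm hne) h2.1 h2.2]
    · rw [flipT_val3 p q x h h2, flipT_val3 p q x h h2]

section PerG

variable (g : Fin (2 * k) → Fin k)


lemma adm_exactly_one (x : SubT k)
    (h : Bijective (g ∘ ⇑(piX x) ∘ Sum.inl) ∧ Bijective (g ∘ ⇑(piX x) ∘ Sum.inr))
    (p q : Fin (2 * k)) (hv : g p = g q) (hfib : ∀ z, g z = g p → z = p ∨ z = q) :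
    (p ∈ x.1 ∧ q ∉ x.1) ∨ (q ∈ x.1 ∧ p ∉ x.1) := by
  obtain ⟨i, hi⟩ := h.1.surjective (g p)
  obtain ⟨j, hj⟩ := h.2.surjective (g p)
  have hz1 : (⇑(piX x) ∘ Sum.inl) i ∈ x.1 := eFn_mem x.1 (hc1 x) i
  have hz2 : (⇑(piX x) ∘ Sum.inr) j ∈ x.1ᶜ := eFn_mem x.1ᶜ (hc2 x) j
  rw [Finset.mem_compl] at hz2
  rcases hfib _ hi with h1 | h1 <;> rcases hfib _ hj with h2 | h2
  · exact absurd (h1 ▸ hz1) (h2 ▸ hz2)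
  · exact Or.inl ⟨h1 ▸ hz1, h2 ▸ hz2⟩
  · exact Or.inr ⟨h1 ▸ hz1, h2 ▸ hz2⟩
  · exact absurd (h1 ▸ hz1) (h2 ▸ hz2)

lemma fiber_pair (x₀ : SubT k)
    (h₀ : Bijective (g ∘ ⇑(piX x₀) ∘ Sum.inl) ∧ Bijective (g ∘ ⇑(piX x₀) ∘ Sum.inr))
    (v : Fin k) :
    ∃ a b : Fin (2 * k), a ≠ b ∧ g a = v ∧ g b = v ∧ ∀ z, g z = v → z = a ∨ z = b := by
  obtain ⟨i, hi⟩ := h₀.1.surjective v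
  obtain ⟨j, hj⟩ := h₀.2.surjective v
  have hax : piX x₀ (Sum.inl i) ∈ x₀.1 := eFn_mem x₀.1 (hc1 x₀) i
  have hbx : piX x₀ (Sum.inr j) ∈ x₀.1ᶜ := eFn_mem x₀.1ᶜ (hc2 x₀) j
  have hab : piX x₀ (Sum.inl i) ≠ piX x₀ (Sum.inr j) :=
    fun hc => (Finset.mem_compl.1 hbx) (hc ▸ hax)
  refine ⟨_, _, hab, hi, hj, ?_⟩
  intro z hz
  by_cases hzx : z ∈ x₀.1
  · obtain ⟨i', hi'⟩ := eFn_surjOn x₀.1 (hc1 x₀) hzx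
    left
    have heq : i' = i := h₀.1.injective (show g (eFn x₀.1 (hc1 x₀) i') = g (eFn x₀.1 (hc1 x₀) i)
      from by rw [hi', hz]; exact (show g (eFn x₀.1 (hc1 x₀) i) = v from hi).symm)
    rw [← hi', heq]; rfl
  · obtain ⟨j', hj'⟩ := eFn_surjOn x₀.1ᶜ (hc2 x₀) (Finset.mem_compl.2 hzx)
    right
    have heq : j' = j := h₀.2.injective (show g (eFn x₀.1ᶜ (hc2 x₀) j') = g (eFn x₀.1ᶜ (hc2 x₀) j)
      from by rw [hj', hz]; exact (show g (eFn x₀.1ᶜ (hc2 x₀) j) = v from hj).symm)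
    rw [← hj', heq]; rfl

/-- main flip lemma for the coefficients -/
lemma Dfn_flip {p q : Fin (2 * k)} (hne : p ≠ q) (hv : g p = g q)
    (hfib : ∀ z, g z = g p → z = p ∨ z = q)
    (x x' : SubT k) (hp : p ∈ x.1) (hq : q ∉ x.1) (hx' : x'.1 = insert q (x.1.erase p)) :
    Dfn g (piX x') = (-1 : ℤ) ^ ((p : ℕ) + (q : ℕ) + 1) * Dfn g (piX x) := by
  have hqx' : q ∈ x'.1 := by rw [hx']; exact Finset.mem_insert_self _ _
  have hpx' : p ∉ x'.1 := by
    rw [hx']; simp [Finset.mem_insert, Finset.mem_erase, hne]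
  have hfibq : ∀ z, g z = g q → z = q ∨ z = p := by
    intro z hz
    rcases hfib z (by rw [hv]; exact hz) with h0 | h0
    · exact Or.inr h0
    · exact Or.inl h0
  have hxx' : x.1 = insert p (x'.1.erase q) := by
    rw [hx', flip_flip hne hp hq]
  by_cases hadm : Bijective (g ∘ ⇑(piX x) ∘ Sum.inl) ∧ Bijective (g ∘ ⇑(piX x) ∘ Sum.inr)
  · have hadm' := adm_flip g p q hne hv hfib x x' hp hq hx' hadm
    rw [Dfn, Dfn, dif_pos hadm, dif_pos hadm']
    -- work in ℤˣ
    have hu : Perm.sign (Equiv.ofBijective _ hadm'.1) * Perm.sign (Equiv.ofBijective _ hadm'.2)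
        = (-1 : ℤˣ) ^ ((p : ℕ) + (q : ℕ) + 1) *
          (Perm.sign (Equiv.ofBijective _ hadm.1) * Perm.sign (Equiv.ofBijective _ hadm.2)) := by
      rw [eps_decomp g x hadm, eps_decomp g x' hadm']
      have hGamma := Gamma_flip g p q hne hv hfib x x' hp hq hx' hadm hadm'
      have hTrans : (piE k).trans (Gamma g x' hadm')
          = ((piE k).trans (Gamma g x hadm)).trans
              (Equiv.swap (Sum.inl (g p)) (Sum.inr (g p))) := by
        rw [hGamma]
        apply Equiv.ext; intro y
        simp only [Equiv.trans_apply]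
      have hsign : Perm.sign ((piE k).trans (Gamma g x' hadm'))
          = -Perm.sign ((piE k).trans (Gamma g x hadm)) := by
        rw [hTrans,
          show ∀ (P : Perm (Fin k ⊕ Fin k)) (Q : Perm (Fin k ⊕ Fin k)), P.trans Q = Q * P
            from fun _ _ => rfl,
          map_mul, Equiv.Perm.sign_swap (by simp), neg_one_mul]
      rw [hsign, Su_flip x x' hne hp hq hx', pow_succ]
      simp [mul_comm, mul_assoc, mul_left_comm, neg_mul, mul_neg]
    have hz := congrArg (Units.val) hu
    simp only [Units.val_mul, Units.val_pow_eq_pow_val, Units.val_neg, Units.val_one] at hz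
    exact hz
  · have hadm' : ¬(Bijective (g ∘ ⇑(piX x') ∘ Sum.inl) ∧ Bijective (g ∘ ⇑(piX x') ∘ Sum.inr)) := by
      intro hc
      exact hadm (adm_flip g q p (Ne.symm hne) (hv.symm) hfibq x' x hqx' hpx' hxx' hc)
    rw [Dfn, Dfn, dif_neg hadm, dif_neg hadm', mul_zero]


lemma key_neg_aux (p q : Fin (2 * k)) (hne : p ≠ q) (hv : g p = g q)
    (hpar : ((p : ℕ) + (q : ℕ)) % 2 = 0) (hfib : ∀ z, g z = g p → z = p ∨ z = q) :
    ∑ x ∈ ((univ : Finset (Fin (2 * k))).powersetCard k).attach, Dfn g (piX x) = 0 := by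
  have hfibq : ∀ z, g z = g q → z = q ∨ z = p := by
    intro z hz
    rcases hfib z (by rw [hv]; exact hz) with h0 | h0
    · exact Or.inr h0
    · exact Or.inl h0
  have hDzero : ∀ x : SubT k, ¬(p ∈ x.1 ∧ q ∉ x.1) → ¬(q ∈ x.1 ∧ p ∉ x.1) →
      Dfn g (piX x) = 0 := by
    intro x h1 h2
    rw [Dfn, dif_neg]
    intro hadm
    rcases adm_exactly_one g x hadm p q hv hfib with hc | hc
    · exact h1 hc
    · exact h2 hc
  apply Finset.sum_involution (fun x _ => flipT p q x)
  · intro x _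
    by_cases h1 : p ∈ x.1 ∧ q ∉ x.1
    · have hD := Dfn_flip g hne hv hfib x (flipT p q x) h1.1 h1.2 (flipT_val1 p q x h1)
      rw [hD, Odd.neg_one_pow ⟨((p : ℕ) + (q : ℕ)) / 2, by omega⟩]
      ring
    · by_cases h2 : q ∈ x.1 ∧ p ∉ x.1
      · have hD := Dfn_flip g (Ne.symm hne) hv.symm hfibq x (flipT p q x) h2.1 h2.2
          (flipT_val2 p q x h1 h2)
        rw [hD, Odd.neg_one_pow ⟨((p : ℕ) + (q : ℕ)) / 2, by omega⟩]
        ring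
      · rw [flipT_val3 p q x h1 h2, hDzero x h1 h2]
        ring
  · intro x _ hD
    by_cases h1 : p ∈ x.1 ∧ q ∉ x.1
    · intro hcon
      have hq' : q ∈ (flipT p q x).1 := by
        rw [flipT_val1 p q x h1]; exact Finset.mem_insert_self _ _
      rw [hcon] at hq'
      exact h1.2 hq'
    · by_cases h2 : q ∈ x.1 ∧ p ∉ x.1
      · intro hcon
        have hp' : p ∈ (flipT p q x).1 := by
          rw [flipT_val2 p q x h1 h2]; exact Finset.mem_insert_self _ _
        rw [hcon] at hp'
        exact h2.2 hp'
      · exact absurd (hDzero x h1 h2) hD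
  · intro x _; exact Finset.mem_attach _ _
  · intro x _; exact flipT_invol p q hne x

lemma key_neg
    (hEO : ¬(Bijective (g ∘ ⇑(piE k) ∘ Sum.inl) ∧ Bijective (g ∘ ⇑(piE k) ∘ Sum.inr))) :
    ∑ x ∈ ((univ : Finset (Fin (2 * k))).powersetCard k).attach, Dfn g (piX x) = 0 := by
  by_cases hex : ∃ x₀ : SubT k,
      Bijective (g ∘ ⇑(piX x₀) ∘ Sum.inl) ∧ Bijective (g ∘ ⇑(piX x₀) ∘ Sum.inr)
  · obtain ⟨x₀, h₀⟩ := hex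
    by_cases hpp : ∃ p q : Fin (2 * k), p ≠ q ∧ g p = g q ∧ ((p : ℕ) + (q : ℕ)) % 2 = 0 ∧
        ∀ z, g z = g p → z = p ∨ z = q
    · obtain ⟨p, q, h1, h2, h3, h4⟩ := hpp
      exact key_neg_aux g p q h1 h2 h3 h4
    · exfalso
      apply hEO
      constructor
      · rw [Fintype.bijective_iff_injective_and_card]
        refine ⟨?_, rfl⟩
        intro i j hij
        by_contra hne2
        have hij' : g (dE k i) = g (dE k j) := hij
        have hdne : dE k i ≠ dE k j := fun hc => hne2 (dE_strictMono.injective hc)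
        obtain ⟨a, b, hab, hga, hgb, hcomp⟩ := fiber_pair g x₀ h₀ (g (dE k i))
        have h1 := hcomp (dE k i) rfl
        have h2 := hcomp (dE k j) hij'.symm
        apply hpp
        refine ⟨dE k i, dE k j, hdne, hij', by rw [dE_val, dE_val]; omega, ?_⟩
        intro z hz
        rcases h1 with h1 | h1 <;> rcases h2 with h2 | h2
        · exact absurd (h1.trans h2.symm) hdne
        · rcases hcomp z hz with rfl | rfl
          · exact Or.inl h1.symm
          · exact Or.inr h2.symm
        · rcases hcomp z hz with rfl | rfl
          · exact Or.inr h2.symm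
          · exact Or.inl h1.symm
        · exact absurd (h1.trans h2.symm) hdne
      · rw [Fintype.bijective_iff_injective_and_card]
        refine ⟨?_, rfl⟩
        intro i j hij
        by_contra hne2
        have hij' : g (dO k i) = g (dO k j) := hij
        have hdne : dO k i ≠ dO k j := fun hc => hne2 (dO_strictMono.injective hc)
        obtain ⟨a, b, hab, hga, hgb, hcomp⟩ := fiber_pair g x₀ h₀ (g (dO k i))
        have h1 := hcomp (dO k i) rfl
        have h2 := hcomp (dO k j) hij'.symm
        apply hpp
        refine ⟨dO k i, dO k j, hdne, hij', by rw [dO_val, dO_val]; omega, ?_⟩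
        intro z hz
        rcases h1 with h1 | h1 <;> rcases h2 with h2 | h2
        · exact absurd (h1.trans h2.symm) hdne
        · rcases hcomp z hz with rfl | rfl
          · exact Or.inl h1.symm
          · exact Or.inr h2.symm
        · rcases hcomp z hz with rfl | rfl
          · exact Or.inr h2.symm
          · exact Or.inl h1.symm
        · exact absurd (h1.trans h2.symm) hdne
  · apply Finset.sum_eq_zero
    intro x _
    rw [Dfn, dif_neg]
    intro hc
    exact hex ⟨x, hc⟩


/-- canonical transversal subsets -/
noncomputable def jmapF (aE aO : Fin k → Fin (2 * k))
    (hinj : ∀ χ : Fin k → Bool, Injective (fun v => if χ v = true then aO v else aE v))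
    (χ : Fin k → Bool) : SubT k :=
  ⟨univ.image (fun v => if χ v = true then aO v else aE v), by
    rw [Finset.mem_powersetCard]
    exact ⟨Finset.subset_univ _, by
      rw [Finset.card_image_of_injective _ (hinj χ), Finset.card_univ, Fintype.card_fin]⟩⟩

lemma key_pos_aux (aE aO : Fin k → Fin (2 * k))
    (hgE : ∀ v, g (aE v) = v) (hgO : ∀ v, g (aO v) = v)
    (hpar : ∀ v, ((aE v : ℕ) + (aO v : ℕ)) % 2 = 1)
    (hfib : ∀ z, z = aE (g z) ∨ z = aO (g z))
    (hE_img : univ.image aE = univ.image (dE k)) :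
    ∑ x ∈ ((univ : Finset (Fin (2 * k))).powersetCard k).attach, Dfn g (piX x) =
      2 ^ k * Dfn g (piE k) := by
  classical
  have hrep : ∀ (χ : Fin k → Bool) v, g (if χ v = true then aO v else aE v) = v := by
    intro χ v
    by_cases h : χ v = true <;> simp [h, hgE, hgO]
  have hrepinj : ∀ χ : Fin k → Bool, Injective (fun v => if χ v = true then aO v else aE v) := by
    intro χ v w h
    have h2 := congrArg g h
    simp only [hrep] at h2
    exact h2
  have hmem_img : ∀ (χ : Fin k → Bool) z,
      z ∈ univ.image (fun v => if χ v = true then aO v else aE v) ↔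
        (if χ (g z) = true then aO (g z) else aE (g z)) = z := by
    intro χ z
    simp only [Finset.mem_image, Finset.mem_univ, true_and]
    constructor
    · rintro ⟨w, rfl⟩
      rw [hrep]
    · intro h; exact ⟨g z, h⟩
  have hEO_ne : ∀ v, aE v ≠ aO v := by
    intro v hc
    have hcv := congrArg Fin.val hc
    have := hpar v
    omega
  -- the constancy induction
  have Hind : ∀ (m : ℕ) (χ : Fin k → Bool) (x : SubT k),
      x.1 = univ.image (fun v => if χ v = true then aO v else aE v) →
      (univ.filter fun v => χ v = true).card = m → Dfn g (piX x) = Dfn g (piE k) := by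
    intro m
    induction m using Nat.strong_induction_on with
    | _ m ih =>
      intro χ x hx hcard
      by_cases hzero : (univ.filter fun v => χ v = true) = ∅
      · have hχ : ∀ v, χ v = false := by
          intro v
          by_contra hcv
          have hv : v ∈ univ.filter fun v => χ v = true := by
            simp only [Finset.mem_filter, Finset.mem_univ, true_and]
            exact Bool.not_eq_false _ ▸ (by simpa using hcv)
          rw [hzero] at hv
          exact absurd hv (Finset.notMem_empty v)
        have hx1 : x.1 = univ.image (dE k) := by
          rw [hx, ← hE_img]
          congr 1
          funext v
          rw [hχ v]
          simp
        have hx2 : x.1ᶜ = univ.image (dO k) := by rw [hx1, compl_image_dE]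
        have he1 : eFn x.1 (hc1 x) = dE k := by
          refine (Finset.orderEmbOfFin_unique (hc1 x) ?_ dE_strictMono).symm
          intro i
          rw [hx1]
          exact Finset.mem_image.2 ⟨i, Finset.mem_univ i, rfl⟩
        have he2 : eFn x.1ᶜ (hc2 x) = dO k := by
          refine (Finset.orderEmbOfFin_unique (hc2 x) ?_ dO_strictMono).symm
          intro i
          rw [hx2]
          exact Finset.mem_image.2 ⟨i, Finset.mem_univ i, rfl⟩
        have hpi : piX x = piE k := by
          apply Equiv.coe_fn_injective
          funext y
          rcases y with i | i
          · show eFn x.1 (hc1 x) i = dE k i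
            rw [he1]
          · show eFn x.1ᶜ (hc2 x) i = dO k i
            rw [he2]
        rw [hpi]
      · obtain ⟨v0, hv0mem⟩ := Finset.nonempty_iff_ne_empty.2 hzero
        have hv0 : χ v0 = true := (Finset.mem_filter.1 hv0mem).2
        set χ' := Function.update χ v0 false with hχ'
        have hpmem : aO v0 ∈ x.1 := by
          rw [hx]
          exact Finset.mem_image.2 ⟨v0, Finset.mem_univ _, by rw [hv0]; simp⟩
        have hqnot : aE v0 ∉ x.1 := by
          rw [hx]
          intro hc
          rw [hmem_img, hgE, hv0] at hc
          simp only [if_true] at hc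
          have hcv := congrArg Fin.val hc
          have := hpar v0
          omega
        have hcard' : (insert (aE v0) (x.1.erase (aO v0))).card = k := by
          rw [flip_card hpmem hqnot, hc1 x]
        set x' : SubT k := ⟨insert (aE v0) (x.1.erase (aO v0)), by
          rw [Finset.mem_powersetCard]
          exact ⟨Finset.subset_univ _, hcard'⟩⟩ with hx'def
        have hfibv0 : ∀ z, g z = g (aO v0) → z = aO v0 ∨ z = aE v0 := by
          intro z hz
          rw [hgO] at hz
          rcases hfib z with h0 | h0
          · right; rw [h0, hz]
          · left; rw [h0, hz]
        have hDflip := Dfn_flip g (fun hc => hEO_ne v0 hc.symm)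
          (by rw [hgO, hgE]) hfibv0 x x' hpmem hqnot rfl
        have hone : ((-1 : ℤ) ^ ((aO v0 : ℕ) + (aE v0 : ℕ) + 1)) = 1 :=
          Even.neg_one_pow ⟨((aO v0 : ℕ) + (aE v0 : ℕ) + 1) / 2, by have := hpar v0; omega⟩
        have hx'img : x'.1 = univ.image (fun v => if χ' v = true then aO v else aE v) := by
          rw [show x'.1 = insert (aE v0) (x.1.erase (aO v0)) from rfl]
          ext z
          rw [hmem_img χ' z]
          constructor
          · intro hz
            rcases Finset.mem_insert.1 hz with rfl | hz2
            · rw [hgE, hχ', Function.update_self]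
              simp
            · have hz3 : z ≠ aO v0 := (Finset.mem_erase.1 hz2).1
              have hz4 : z ∈ x.1 := (Finset.mem_erase.1 hz2).2
              rw [hx, hmem_img] at hz4
              have hgz : g z ≠ v0 := by
                intro hc
                rw [hc, hv0] at hz4
                simp only [if_true] at hz4
                exact hz3 hz4.symm
              rw [hχ', Function.update_of_ne hgz]
              exact hz4
          · intro hz
            by_cases hgz : g z = v0
            · rw [hgz, hχ', Function.update_self] at hz
              simp only [Bool.false_eq_true, if_false] at hz
              rw [← hz]
              exact Finset.mem_insert_self _ _
            · rw [hχ', Function.update_of_ne hgz] at hz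
              have hzx : z ∈ x.1 := by rw [hx, hmem_img]; exact hz
              have hz3 : z ≠ aO v0 := by
                intro hc
                apply hgz
                rw [hc, hgO]
              exact Finset.mem_insert_of_mem (Finset.mem_erase.2 ⟨hz3, hzx⟩)
        have hfil : (univ.filter fun v => χ' v = true)
            = (univ.filter fun v => χ v = true).erase v0 := by
          ext w
          simp only [Finset.mem_filter, Finset.mem_univ, true_and, Finset.mem_erase]
          by_cases hw : w = v0
          · subst hw; simp [hχ', Function.update_self]
          · simp [hχ', Function.update_of_ne hw, hw]
        have hpos : 0 < m := hcard ▸ Finset.card_pos.2 ⟨v0, hv0mem⟩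
        have hlt : (univ.filter fun v => χ' v = true).card < m := by
          rw [hfil, Finset.card_erase_of_mem hv0mem, hcard]
          omega
        have hihres := ih _ hlt χ' x' hx'img rfl
        rw [← hihres, hDflip, hone, one_mul]
  -- assemble the sum
  rw [← Finset.sum_filter_add_sum_filter_not
    (((univ : Finset (Fin (2 * k))).powersetCard k).attach)
    (fun x => Bijective (g ∘ ⇑(piX x) ∘ Sum.inl) ∧ Bijective (g ∘ ⇑(piX x) ∘ Sum.inr))
    (fun x => Dfn g (piX x))]
  have hznot : ∑ x ∈ Finset.filter
      (fun x => ¬(Bijective (g ∘ ⇑(piX x) ∘ Sum.inl) ∧ Bijective (g ∘ ⇑(piX x) ∘ Sum.inr)))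
      (((univ : Finset (Fin (2 * k))).powersetCard k).attach), Dfn g (piX x) = 0 := by
    apply Finset.sum_eq_zero
    intro x hx
    rw [Dfn, dif_neg (Finset.mem_filter.1 hx).2]
  rw [hznot, add_zero]
  have hadmj : ∀ χ : Fin k → Bool,
      Bijective (g ∘ ⇑(piX (jmapF aE aO hrepinj χ)) ∘ Sum.inl) ∧
        Bijective (g ∘ ⇑(piX (jmapF aE aO hrepinj χ)) ∘ Sum.inr) := by
    intro χ
    constructor
    · rw [bijl_iff]
      intro z hz w hw hzw
      rw [show (jmapF aE aO hrepinj χ).1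
        = univ.image (fun v => if χ v = true then aO v else aE v) from rfl, hmem_img] at hz hw
      rw [← hz, ← hw, hzw]
    · rw [bijr_iff]
      intro z hz w hw hzw
      rw [Finset.mem_compl, show (jmapF aE aO hrepinj χ).1
        = univ.image (fun v => if χ v = true then aO v else aE v) from rfl, hmem_img] at hz hw
      have hz2 : z = (if χ (g z) = true then aE (g z) else aO (g z)) := by
        rcases hfib z with h0 | h0
        · by_cases hb : χ (g z) = true
          · rw [if_pos hb]; exact h0
          · exfalso; apply hz; rw [if_neg hb]; exact h0.symm
        · by_cases hb : χ (g z) = true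
          · exfalso; apply hz; rw [if_pos hb]; exact h0.symm
          · rw [if_neg hb]; exact h0
      have hw2 : w = (if χ (g w) = true then aE (g w) else aO (g w)) := by
        rcases hfib w with h0 | h0
        · by_cases hb : χ (g w) = true
          · rw [if_pos hb]; exact h0
          · exfalso; apply hw; rw [if_neg hb]; exact h0.symm
        · by_cases hb : χ (g w) = true
          · exfalso; apply hw; rw [if_pos hb]; exact h0.symm
          · rw [if_neg hb]; exact h0
      rw [hz2, hw2, hzw]
  have hleft : ∀ x : SubT k,
      (Bijective (g ∘ ⇑(piX x) ∘ Sum.inl) ∧ Bijective (g ∘ ⇑(piX x) ∘ Sum.inr)) →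
      jmapF aE aO hrepinj (fun v => decide (aO v ∈ x.1)) = x := by
    intro x hadm
    apply Subtype.ext
    show univ.image _ = x.1
    apply Finset.eq_of_subset_of_card_le
    · intro z hz
      obtain ⟨v, _, hv⟩ := Finset.mem_image.1 hz
      have honev : aE v ∈ x.1 ∨ aO v ∈ x.1 := by
        obtain ⟨i, hi⟩ := hadm.1.surjective v
        have hm : (⇑(piX x) ∘ Sum.inl) i ∈ x.1 := eFn_mem x.1 (hc1 x) i
        rcases hfib ((⇑(piX x) ∘ Sum.inl) i) with h0 | h0
        · left
          rw [show g ((⇑(piX x) ∘ Sum.inl) i) = v from hi] at h0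
          rw [← h0]; exact hm
        · right
          rw [show g ((⇑(piX x) ∘ Sum.inl) i) = v from hi] at h0
          rw [← h0]; exact hm
      by_cases hb : aO v ∈ x.1
      · rw [← hv, if_pos (by rw [decide_eq_true_eq]; exact hb)]
        exact hb
      · rw [← hv, if_neg (by rw [decide_eq_true_eq]; exact hb)]
        exact honev.resolve_right hb
    · rw [hc1 x, Finset.card_image_of_injective _ (hrepinj _), Finset.card_univ,
        Fintype.card_fin]
  have hright : ∀ χ : Fin k → Bool, (fun v => decide (aO v ∈ (jmapF aE aO hrepinj χ).1)) = χ := by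
    intro χ
    funext v
    rcases hb : χ v with _ | _
    · rw [decide_eq_false]
      intro hc
      rw [show (jmapF aE aO hrepinj χ).1
        = univ.image (fun v => if χ v = true then aO v else aE v) from rfl, hmem_img,
        hgO, hb] at hc
      simp only [Bool.false_eq_true, if_false] at hc
      have hcv := congrArg Fin.val hc
      have := hpar v
      omega
    · rw [decide_eq_true]
      rw [show (jmapF aE aO hrepinj χ).1
        = univ.image (fun v => if χ v = true then aO v else aE v) from rfl, hmem_img,
        hgO, hb]
      simp
  have hbij := Finset.sum_nbij'
    (i := fun x : SubT k => (fun v => decide (aO v ∈ x.1) : Fin k → Bool))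
    (j := jmapF aE aO hrepinj)
    (t := (univ : Finset (Fin k → Bool)))
    (f := fun x => Dfn g (piX x))
    (g := fun χ => Dfn g (piX (jmapF aE aO hrepinj χ)))
    (fun x _ => Finset.mem_univ _)
    (fun χ _ => Finset.mem_filter.2 ⟨Finset.mem_attach _ _, hadmj χ⟩)
    (fun x hx => hleft x (Finset.mem_filter.1 hx).2)
    (fun χ _ => hright χ)
    (fun x hx => by
      show Dfn g (piX x) = Dfn g (piX (jmapF aE aO hrepinj (fun v => decide (aO v ∈ x.1))))
      rw [hleft x (Finset.mem_filter.1 hx).2])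
  rw [hbij]
  have hconst : ∀ χ : Fin k → Bool, Dfn g (piX (jmapF aE aO hrepinj χ)) = Dfn g (piE k) :=
    fun χ => Hind _ χ _ rfl rfl
  rw [Finset.sum_congr rfl (fun χ _ => hconst χ), Finset.sum_const, Finset.card_univ]
  have hcard2 : Fintype.card (Fin k → Bool) = 2 ^ k := by
    rw [Fintype.card_fun, Fintype.card_bool, Fintype.card_fin]
  rw [hcard2]
  rw [nsmul_eq_mul]
  push_cast
  ring

/-- the key per-`g` identity -/
lemma key (g : Fin (2 * k) → Fin k) :
    ∑ x ∈ ((univ : Finset (Fin (2 * k))).powersetCard k).attach, Dfn g (piX x) =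
      2 ^ k * Dfn g (piE k) := by
  by_cases hEO : Bijective (g ∘ ⇑(piE k) ∘ Sum.inl) ∧ Bijective (g ∘ ⇑(piE k) ∘ Sum.inr)
  · set σ0 := Equiv.ofBijective _ hEO.1 with hσ0
    set τ0 := Equiv.ofBijective _ hEO.2 with hτ0
    apply key_pos_aux g (fun v => dE k (σ0.symm v)) (fun v => dO k (τ0.symm v))
    · intro v
      exact σ0.apply_symm_apply v
    · intro v
      exact τ0.apply_symm_apply v
    · intro v
      rw [dE_val, dO_val]
      omega
    · intro z
      by_cases hz : (z : ℕ) % 2 = 0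
      · left
        have hzE : z = dE k ⟨(z : ℕ) / 2, by omega⟩ :=
          Fin.ext (show (z : ℕ) = 2 * ((z : ℕ) / 2) from by omega)
        have hs : σ0 ⟨(z : ℕ) / 2, by omega⟩ = g z := congrArg g hzE.symm
        rw [show σ0.symm (g z) = ⟨(z : ℕ) / 2, by omega⟩ from (Equiv.symm_apply_eq σ0).2 hs.symm]
        exact hzE
      · right
        have hzO : z = dO k ⟨(z : ℕ) / 2, by omega⟩ :=
          Fin.ext (show (z : ℕ) = 2 * ((z : ℕ) / 2) + 1 from by omega)
        have hs : τ0 ⟨(z : ℕ) / 2, by omega⟩ = g z := congrArg g hzO.symm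
        rw [show τ0.symm (g z) = ⟨(z : ℕ) / 2, by omega⟩ from (Equiv.symm_apply_eq τ0).2 hs.symm]
        exact hzO
    · rw [show (fun v => dE k (σ0.symm v)) = (dE k) ∘ ⇑σ0.symm from rfl,
        ← Finset.image_image, Finset.image_univ_equiv]
  · rw [key_neg g hEO, Dfn, dif_neg hEO, mul_zero]

end PerG

end PSaux

/-- Propp–Stanley / Sylvester: for a `2k` by `k` matrix `U`, the sum over all
`k`-subsets `A` of the rows of `U_A · U_Ā` (the minors on the rows of `A` and of its
complement, rows taken in increasing order) equals
`2^k · det(u_{2i,j}) · det(u_{2i+1,j})`. -/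
theorem sum_minor_complement (R : Type*) [CommRing R] (k : ℕ)
    (U : Matrix (Fin (2 * k)) (Fin k) R) :
    (∑ A ∈ (Finset.univ : Finset (Fin (2 * k))).powersetCard k,
        if h : A.card = k ∧ Aᶜ.card = k then
          Matrix.det (Matrix.of fun i j : Fin k => U (A.orderIsoOfFin h.1 i) j) *
            Matrix.det (Matrix.of fun i j : Fin k => U (Aᶜ.orderIsoOfFin h.2 i) j)
        else 0) =
      2 ^ k *
        Matrix.det (Matrix.of fun i j : Fin k =>
          U ⟨2 * (i : ℕ), by omega⟩ j) *
        Matrix.det (Matrix.of fun i j : Fin k =>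
          U ⟨2 * (i : ℕ) + 1, by omega⟩ j) := by
  classical
  open PSaux in
  have hL : (∑ A ∈ (Finset.univ : Finset (Fin (2 * k))).powersetCard k,
        if h : A.card = k ∧ Aᶜ.card = k then
          Matrix.det (Matrix.of fun i j : Fin k => U (A.orderIsoOfFin h.1 i) j) *
            Matrix.det (Matrix.of fun i j : Fin k => U (Aᶜ.orderIsoOfFin h.2 i) j)
        else 0)
      = ∑ x ∈ ((Finset.univ : Finset (Fin (2 * k))).powersetCard k).attach,
          ((Matrix.of fun i j : Fin k => U (piX x (Sum.inl i)) j).det *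
           (Matrix.of fun i j : Fin k => U (piX x (Sum.inr i)) j).det) := by
    rw [← Finset.sum_attach ((Finset.univ : Finset (Fin (2 * k))).powersetCard k)]
    apply Finset.sum_congr rfl
    intro x _
    rw [dif_pos ⟨hc1 x, hc2 x⟩]
    rfl
  rw [hL]
  rw [Finset.sum_congr rfl (fun x _ => PSaux.exp_det_fiber R U (PSaux.piX x))]
  rw [Finset.sum_comm]
  have hswap : ∀ g' : Fin (2 * k) → Fin k,
      (∑ x ∈ ((Finset.univ : Finset (Fin (2 * k))).powersetCard k).attach,
        ((PSaux.Dfn g' (PSaux.piX x) : ℤ) : R) * ∏ z, U z (g' z))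
      = (((2 ^ k * PSaux.Dfn g' (PSaux.piE k) : ℤ)) : R) * ∏ z, U z (g' z) := by
    intro g'
    rw [← Finset.sum_mul, ← Int.cast_sum, PSaux.key g']
  rw [Finset.sum_congr rfl (fun g' _ => hswap g')]
  have hR : (Matrix.det (Matrix.of fun i j : Fin k =>
          U ⟨2 * (i : ℕ), by omega⟩ j)) *
        (Matrix.det (Matrix.of fun i j : Fin k =>
          U ⟨2 * (i : ℕ) + 1, by omega⟩ j))
      = ∑ g' : Fin (2 * k) → Fin k,
          ((PSaux.Dfn g' (PSaux.piE k) : ℤ) : R) * ∏ z, U z (g' z) :=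
    PSaux.exp_det_fiber R U (PSaux.piE k)
  rw [mul_assoc, hR, Finset.mul_sum]
  apply Finset.sum_congr rfl
  intro g' _
  push_cast
  ring
end

section
/- For integers p ≥ 0 and k ≥ 1, the Hankel determinant det( (S_p^{i+j})_{0≤i,j≤k-1} ), where S_p^i = 1^i + 2^i + ... + p^i (with 0^0 = 1), equals (V_{k-1}^4 / V_{2k-1}) · (p-k+1)^1 (p-k+2)^2 ··· (p-1)^{k-1} p^k (p+1)^{k-1} ··· (p+k-1)^1, i.e., (V_{k-1}^4 / V_{2k-1}) · ∏_{m=-(k-1)}^{k-1} (p+m)^{k-|m|}. In particular it equals V_{p+k-1} V_{p-k-1} V_{k-1}^4 / (V_{p-1}^2 V_{2k-1}) when p ≥ k+1. -/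
/-- `Spow p j = 1^j + 2^j + ⋯ + p^j` (with `Spow 0 j = 0`). -/
def Spow (p j : ℕ) : ℚ := ∑ i ∈ Finset.Icc 1 p, (i : ℚ) ^ j


open Finset Polynomial Matrix

private lemma tele (p : ℕ) (f : ℕ → ℚ) :
    ∑ x ∈ Icc 1 p, (f (x + 1) - f x) = f (p + 1) - f 1 := by
  induction p with
  | zero => simp
  | succ p ih =>
      rw [← Finset.Ico_add_one_right_eq_Icc, Finset.sum_Ico_succ_top (by omega), Finset.Ico_add_one_right_eq_Icc, ih]
      ring

private lemma abel (p : ℕ) (u v : ℕ → ℚ) :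
    ∑ x ∈ Icc 1 p, u x * (fwdDiff 1 v) x
      = u (p + 1) * v (p + 1) - u 1 * v 1 - ∑ x ∈ Icc 1 p, (fwdDiff 1 u) x * v (x + 1) := by
  have key : ∑ x ∈ Icc 1 p, (u x * (fwdDiff 1 v) x + (fwdDiff 1 u) x * v (x + 1))
      = u (p + 1) * v (p + 1) - u 1 * v 1 := by
    rw [← tele p (fun x => u x * v x)]
    refine Finset.sum_congr rfl fun x _ => ?_
    simp only [fwdDiff]
    ring
  rw [Finset.sum_add_distrib] at key
  linarith

private lemma iter_zero_of_zero (n : ℕ) : ∀ (v : ℕ → ℚ) (a b : ℕ),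
    (∀ x, a ≤ x → x ≤ b → v x = 0) →
    ∀ x, a ≤ x → x + n ≤ b → (fwdDiff 1)^[n] v x = 0 := by
  induction n with
  | zero => intro v a b hv x hx hxb; simpa using hv x hx (by omega)
  | succ n ih =>
      intro v a b hv x hx hxb
      rw [Function.iterate_succ_apply]
      refine ih (fwdDiff 1 v) a (b - 1) ?_ x hx (by omega)
      intro y hy hyb
      have h1 : v y = 0 := hv y hy (by omega)
      have h2 : v (y + 1) = 0 := hv (y + 1) (by omega) (by omega)
      simp [fwdDiff, h1, h2]

private lemma iter_shift (n : ℕ) : ∀ (v : ℕ → ℚ) (x : ℕ),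
    (fwdDiff 1)^[n] (fun y => v (y + 1)) x = (fwdDiff 1)^[n] v (x + 1) := by
  induction n with
  | zero => intro v x; simp
  | succ n ih =>
      intro v x
      rw [Function.iterate_succ_apply, Function.iterate_succ_apply]
      have : (fwdDiff 1 fun y => v (y + 1)) = fun y => (fwdDiff 1 v) (y + 1) := by
        funext y; simp [fwdDiff]
      rw [this, ih (fwdDiff 1 v) x]

private lemma sbp (p : ℕ) : ∀ (n : ℕ) (u v : ℕ → ℚ),
    (∀ x, 1 ≤ x → x ≤ n → v x = 0) →
    (∀ x, p + 1 ≤ x → x ≤ p + n → v x = 0) →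
    ∑ x ∈ Icc 1 p, u x * (fwdDiff 1)^[n] v x
      = (-1 : ℚ) ^ n * ∑ x ∈ Icc 1 p, (fwdDiff 1)^[n] u x * v (x + n) := by
  intro n
  induction n with
  | zero => intro u v h1 h2; simp
  | succ n ih =>
      intro u v h1 h2
      have hb1 : (fwdDiff 1)^[n] v 1 = 0 :=
        iter_zero_of_zero n v 1 (n + 1) (fun x hx hxb => h1 x hx hxb) 1 le_rfl (by omega)
      have hb2 : (fwdDiff 1)^[n] v (p + 1) = 0 :=
        iter_zero_of_zero n v (p + 1) (p + n + 1)
          (fun x hx hxb => h2 x hx (by omega)) (p + 1) le_rfl (by omega)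
      calc ∑ x ∈ Icc 1 p, u x * (fwdDiff 1)^[n + 1] v x
          = ∑ x ∈ Icc 1 p, u x * (fwdDiff 1) ((fwdDiff 1)^[n] v) x := by
            simp only [Function.iterate_succ_apply']
        _ = u (p+1) * (fwdDiff 1)^[n] v (p+1) - u 1 * (fwdDiff 1)^[n] v 1
              - ∑ x ∈ Icc 1 p, (fwdDiff 1 u) x * (fwdDiff 1)^[n] v (x + 1) := abel p u _
        _ = - ∑ x ∈ Icc 1 p, (fwdDiff 1 u) x * (fwdDiff 1)^[n] (fun y => v (y + 1)) x := by
            rw [hb1, hb2]; simp only [iter_shift n v]; ring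
        _ = - ((-1 : ℚ)^n * ∑ x ∈ Icc 1 p, (fwdDiff 1)^[n] (fwdDiff 1 u) x * v (x + n + 1)) := by
            rw [ih (fwdDiff 1 u) (fun y => v (y + 1))
              (fun x hx hxb => h1 (x+1) (by omega) (by omega))
              (fun x hx hxb => h2 (x+1) (by omega) (by omega))]
        _ = (-1 : ℚ) ^ (n + 1) * ∑ x ∈ Icc 1 p, (fwdDiff 1)^[n + 1] u x * v (x + (n + 1)) := by
            simp only [Function.iterate_succ_apply]
            rw [show ∀ S : ℚ, -((-1:ℚ)^n * S) = (-1:ℚ)^(n+1) * S by intro S; ring]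
            norm_num [← Nat.add_assoc]

private noncomputable def dq (q : ℚ[X]) : ℚ[X] := q.comp (X + 1) - q




private lemma comp_coeff (q : ℚ[X]) (j : ℕ) :
    (q.comp (X + 1)).coeff j
      = ∑ m ∈ range (q.natDegree + 1), q.coeff m * (m.choose j : ℚ) := by
  have h : q.comp (X + 1) = ∑ m ∈ range (q.natDegree + 1), C (q.coeff m) * (X + 1) ^ m := by
    rw [Polynomial.comp, Polynomial.eval₂_eq_sum_range' (C : ℚ →+* ℚ[X]) (Nat.lt_succ_self _)]
  rw [h, Polynomial.finset_sum_coeff]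
  refine Finset.sum_congr rfl fun m _ => ?_
  rw [Polynomial.coeff_C_mul, Polynomial.coeff_X_add_one_pow]

private lemma comp_coeff' (q : ℚ[X]) (n j : ℕ) (hq : q.natDegree ≤ n + 1) :
    (q.comp (X + 1)).coeff j
      = ∑ m ∈ range (n + 2), q.coeff m * (m.choose j : ℚ) := by
  rw [comp_coeff]
  refine Finset.sum_subset (by intro m hm; simp only [mem_range] at *; omega) ?_
  intro m hm hm2
  simp only [mem_range] at hm hm2
  rw [Polynomial.coeff_eq_zero_of_natDegree_lt (by omega), zero_mul]

private lemma dq_coeff_ge (q : ℚ[X]) (n j : ℕ) (hq : q.natDegree ≤ n + 1) (hj : n ≤ j) :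
    (dq q).coeff j = if j = n then (n + 1 : ℚ) * q.coeff (n + 1) else 0 := by
  rw [dq, Polynomial.coeff_sub, comp_coeff' q n j hq]
  rcases eq_or_lt_of_le hj with h | h
  · subst h
    simp only [if_pos rfl]
    rw [Finset.sum_range_succ, Finset.sum_range_succ]
    rw [Finset.sum_eq_zero (fun m hm => by
      simp only [mem_range] at hm
      rw [Nat.choose_eq_zero_of_lt hm, Nat.cast_zero, mul_zero])]
    rw [Nat.choose_self, Nat.choose_succ_self_right]
    push_cast
    ring
  · rw [if_neg (by omega)]
    rcases (show j = n + 1 ∨ n + 1 < j by omega) with h2 | h2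
    · subst h2
      rw [Finset.sum_eq_single_of_mem (n + 1) (by simp) (fun m hm hm2 => by
        simp only [mem_range] at hm
        rw [Nat.choose_eq_zero_of_lt (by omega), Nat.cast_zero, mul_zero])]
      rw [Nat.choose_self]
      ring
    · rw [Finset.sum_eq_zero (fun m hm => by
        simp only [mem_range] at hm
        rw [Nat.choose_eq_zero_of_lt (by omega), Nat.cast_zero, mul_zero])]
      rw [Polynomial.coeff_eq_zero_of_natDegree_lt (by omega)]
      ring

private lemma dq_natDegree (q : ℚ[X]) (n : ℕ) (hq : q.natDegree ≤ n + 1) :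
    (dq q).natDegree ≤ n :=
  Polynomial.natDegree_le_iff_coeff_eq_zero.2 fun j hj => by
    rw [dq_coeff_ge q n j hq (le_of_lt hj), if_neg (by omega)]

private lemma dq_coeff_top (q : ℚ[X]) (n : ℕ) (hq : q.natDegree ≤ n + 1) :
    (dq q).coeff n = (n + 1 : ℚ) * q.coeff (n + 1) := by
  rw [dq_coeff_ge q n n hq le_rfl, if_pos rfl]

private lemma dq_iter (j : ℕ) : ∀ (q : ℚ[X]) (d : ℕ), q.natDegree ≤ d + j →
    (dq^[j] q).natDegree ≤ d ∧
      (dq^[j] q).coeff d = (∏ t ∈ Ioc d (d + j), (t : ℚ)) * q.coeff (d + j) := by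
  induction j with
  | zero => intro q d hq; constructor <;> simp <;> omega
  | succ j ih =>
      intro q d hq
      rw [Function.iterate_succ_apply]
      have h1 : (dq q).natDegree ≤ d + j := dq_natDegree q (d + j) (by omega)
      obtain ⟨hdeg, hco⟩ := ih (dq q) d h1
      refine ⟨hdeg, ?_⟩
      rw [hco, dq_coeff_top q (d + j) (by omega)]
      rw [show d + (j + 1) = (d + j) + 1 by omega,
        Finset.prod_Ioc_succ_top (by omega)]
      push_cast
      ring

private lemma dq_eval (q : ℚ[X]) :
    (fwdDiff 1 (fun x : ℕ => q.eval (x : ℚ))) = fun x : ℕ => (dq q).eval (x : ℚ) := by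
  funext x
  simp only [fwdDiff, dq, Polynomial.eval_sub, Polynomial.eval_comp, Polynomial.eval_add,
    Polynomial.eval_X, Polynomial.eval_one]
  push_cast
  ring

private lemma dq_iter_eval (j : ℕ) : ∀ (q : ℚ[X]) (x : ℕ),
    (fwdDiff 1)^[j] (fun x : ℕ => q.eval (x : ℚ)) x = (dq^[j] q).eval (x : ℚ) := by
  induction j with
  | zero => intro q x; simp
  | succ j ih =>
      intro q x
      rw [Function.iterate_succ_apply, Function.iterate_succ_apply, dq_eval, ih]




private lemma prod_Ioc0 (m : ℕ) : (∏ t ∈ Ioc 0 m, t) = m.factorial := by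
  rw [← Finset.Icc_add_one_left_eq_Ioc, ← Finset.Ico_add_one_right_eq_Icc]
  exact Finset.prod_Ico_id_eq_factorial m

private lemma fact_split (n : ℕ) :
    n.factorial * (∏ t ∈ Ioc n (n + n), t) = (2 * n).factorial := by
  rw [← prod_Ioc0 n, Finset.prod_Ioc_consecutive _ (Nat.zero_le n) (by omega), prod_Ioc0]
  congr 1
  omega

private noncomputable def gp (p n : ℕ) : ℚ[X] :=
  (∏ j ∈ Icc 1 n, (X - C (j : ℚ))) * ∏ j ∈ Icc 1 n, (X - C ((p : ℚ) + j))

private lemma gp_monic (p n : ℕ) : (gp p n).Monic :=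
  (monic_prod_of_monic _ _ fun j _ => monic_X_sub_C _).mul
    (monic_prod_of_monic _ _ fun j _ => monic_X_sub_C _)

private lemma gp_natDegree (p n : ℕ) : (gp p n).natDegree = n + n := by
  have m1 : (∏ j ∈ Icc 1 n, (X - C (j : ℚ))).Monic :=
    monic_prod_of_monic _ _ fun j _ => monic_X_sub_C _
  have m2 : (∏ j ∈ Icc 1 n, (X - C ((p : ℚ) + j))).Monic :=
    monic_prod_of_monic _ _ fun j _ => monic_X_sub_C _
  rw [gp, m1.natDegree_mul m2,
    Polynomial.natDegree_prod_of_monic _ _ (fun j _ => monic_X_sub_C _),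
    Polynomial.natDegree_prod_of_monic _ _ (fun j _ => monic_X_sub_C _)]
  simp only [Polynomial.natDegree_X_sub_C, Finset.sum_const, Nat.card_Icc, smul_eq_mul, mul_one]
  omega

private lemma gp_coeff_top (p n : ℕ) : (gp p n).coeff (n + n) = 1 := by
  have := (gp_monic p n).leadingCoeff
  rwa [Polynomial.leadingCoeff, gp_natDegree] at this

private lemma gp_zero_low (p n x : ℕ) (hx1 : 1 ≤ x) (hxn : x ≤ n) :
    (gp p n).eval (x : ℚ) = 0 := by
  rw [gp, Polynomial.eval_mul, Polynomial.eval_prod,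
    Finset.prod_eq_zero (Finset.mem_Icc.2 ⟨hx1, hxn⟩ : x ∈ Icc 1 n)
      (by simp : Polynomial.eval (x:ℚ) (X - C (x:ℚ)) = 0), zero_mul]

private lemma gp_zero_high (p n x : ℕ) (hx1 : p + 1 ≤ x) (hxn : x ≤ p + n) :
    (gp p n).eval (x : ℚ) = 0 := by
  have h2 : eval (x:ℚ) (∏ j ∈ Icc 1 n, (X - C ((p:ℚ) + j))) = 0 := by
    rw [Polynomial.eval_prod]
    refine Finset.prod_eq_zero (Finset.mem_Icc.2 ⟨by omega, by omega⟩ : x - p ∈ Icc 1 n) ?_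
    have hc : ((x - p : ℕ) : ℚ) = (x : ℚ) - p := by
      push_cast [Nat.cast_sub (by omega : p ≤ x)]; ring
    simp [hc]
  rw [gp, Polynomial.eval_mul, h2, mul_zero]

private noncomputable def Pp (p n : ℕ) : ℚ[X] :=
  C ((n.factorial : ℚ) / ((2 * n).factorial : ℚ)) * dq^[n] (gp p n)




private lemma Pp_natDegree (p n : ℕ) : (Pp p n).natDegree ≤ n := by
  refine le_trans (Polynomial.natDegree_C_mul_le _ _) ?_
  exact (dq_iter n (gp p n) n (by rw [gp_natDegree])).1

private lemma Pp_coeff_top (p n : ℕ) : (Pp p n).coeff n = 1 := by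
  rw [Pp, Polynomial.coeff_C_mul,
    (dq_iter n (gp p n) n (by rw [gp_natDegree])).2, gp_coeff_top, mul_one]
  have h := fact_split n
  have h2 : ((n.factorial * ∏ t ∈ Ioc n (n + n), t : ℕ) : ℚ) = ((2 * n).factorial : ℚ) := by
    exact_mod_cast congrArg (Nat.cast : ℕ → ℚ) h
  push_cast at h2
  have hne : ((2 * n).factorial : ℚ) ≠ 0 := by exact_mod_cast (Nat.factorial_pos _).ne'
  field_simp
  linarith [h2]

private lemma Tval (p m n : ℕ) (hmn : m ≤ n) :
    ∑ x ∈ Icc 1 p, (Pp p m).eval (x : ℚ) * (Pp p n).eval (x : ℚ)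
      = ((n.factorial : ℚ) / ((2 * n).factorial : ℚ)) * (-1 : ℚ) ^ n * (n.factorial : ℚ)
          * (Pp p m).coeff n * ∑ x ∈ Icc 1 p, (gp p n).eval ((x + n : ℕ) : ℚ) := by
  have hPn : ∀ x : ℕ, (Pp p n).eval (x : ℚ)
      = ((n.factorial : ℚ) / ((2 * n).factorial : ℚ))
          * (fwdDiff 1)^[n] (fun y : ℕ => (gp p n).eval (y : ℚ)) x := by
    intro x
    rw [Pp, Polynomial.eval_mul, Polynomial.eval_C, dq_iter_eval]
  calc ∑ x ∈ Icc 1 p, (Pp p m).eval (x : ℚ) * (Pp p n).eval (x : ℚ)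
      = ((n.factorial : ℚ) / ((2 * n).factorial : ℚ)) *
          ∑ x ∈ Icc 1 p, (fun y : ℕ => (Pp p m).eval (y : ℚ)) x
            * (fwdDiff 1)^[n] (fun y : ℕ => (gp p n).eval (y : ℚ)) x := by
        rw [Finset.mul_sum]
        refine Finset.sum_congr rfl fun x _ => ?_
        rw [hPn x]; ring
    _ = ((n.factorial : ℚ) / ((2 * n).factorial : ℚ)) * ((-1 : ℚ) ^ n *
          ∑ x ∈ Icc 1 p, (fwdDiff 1)^[n] (fun y : ℕ => (Pp p m).eval (y : ℚ)) x
            * (gp p n).eval ((x + n : ℕ) : ℚ)) := by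
        congr 1
        exact sbp p n _ _ (fun x hx1 hx2 => gp_zero_low p n x hx1 hx2)
          (fun x hx1 hx2 => gp_zero_high p n x hx1 (by omega))
    _ = ((n.factorial : ℚ) / ((2 * n).factorial : ℚ)) * (-1 : ℚ) ^ n * (n.factorial : ℚ)
          * (Pp p m).coeff n * ∑ x ∈ Icc 1 p, (gp p n).eval ((x + n : ℕ) : ℚ) := by
        have hdeg : (Pp p m).natDegree ≤ 0 + n := by
          simpa using le_trans (Pp_natDegree p m) hmn
        obtain ⟨hd0, hc0⟩ := dq_iter n (Pp p m) 0 hdeg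
        have hp0 : (∏ t ∈ Ioc 0 (0 + n), (t : ℚ)) = (n.factorial : ℚ) := by
          rw [zero_add, ← prod_Ioc0 n, Nat.cast_prod]
        have hconst : ∀ x : ℕ, (fwdDiff 1)^[n] (fun y : ℕ => (Pp p m).eval (y : ℚ)) x
            = (n.factorial : ℚ) * (Pp p m).coeff n := by
          intro x
          rw [dq_iter_eval]
          conv_lhs => rw [Polynomial.eq_C_of_natDegree_le_zero hd0]
          rw [Polynomial.eval_C, hc0, hp0, zero_add]
        rw [Finset.sum_congr rfl (fun x _ => by rw [hconst x]), ← Finset.mul_sum]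
        ring



private lemma prod_Icc_eq_range (n : ℕ) (F : ℕ → ℚ) :
    ∏ j ∈ Icc 1 n, F j = ∏ t ∈ range n, F (n - t) := by
  rw [← Finset.Ico_add_one_right_eq_Icc, Finset.prod_Ico_eq_prod_range,
    show n + 1 - 1 = n from rfl, ← Finset.prod_range_reflect (fun i => F (1 + i)) n]
  refine Finset.prod_congr rfl fun t ht => ?_
  simp only [mem_range] at ht
  congr 1
  omega

private lemma asc_prod (n x : ℕ) :
    ∏ t ∈ range n, ((x : ℚ) + t) = (x.ascFactorial n : ℚ) := by
  induction n with
  | zero => simp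
  | succ n ih =>
      rw [Finset.prod_range_succ, ih, Nat.ascFactorial_succ]
      push_cast
      ring

private lemma desc_prod (n y : ℕ) :
    ∏ t ∈ range n, ((y : ℚ) - t) = (y.descFactorial n : ℚ) := by
  induction n with
  | zero => simp
  | succ n ih =>
      rw [Finset.prod_range_succ, ih, Nat.descFactorial_succ]
      rcases le_or_gt n y with h | h
      · push_cast [Nat.cast_sub h]
        ring
      · rw [Nat.descFactorial_eq_zero_iff_lt.2 h]
        simp [Nat.sub_eq_zero_of_le (by omega : y ≤ n)]

private lemma gp_eval_shift (p n x : ℕ) (hxp : x ≤ p) :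
    (gp p n).eval ((x + n : ℕ) : ℚ)
      = (-1 : ℚ) ^ n * (x.ascFactorial n : ℚ) * ((p - x).descFactorial n : ℚ) := by
  rw [gp, Polynomial.eval_mul, Polynomial.eval_prod, Polynomial.eval_prod]
  simp only [Polynomial.eval_sub, Polynomial.eval_X, Polynomial.eval_C]
  have h1 : ∏ j ∈ Icc 1 n, (((x + n : ℕ) : ℚ) - (j : ℚ)) = (x.ascFactorial n : ℚ) := by
    rw [prod_Icc_eq_range n (fun j => ((x + n : ℕ) : ℚ) - (j : ℚ)), ← asc_prod n x]
    refine Finset.prod_congr rfl fun t ht => ?_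
    simp only [mem_range] at ht
    push_cast [Nat.cast_sub (show n - t ≤ n by omega)]
    have : ((n - t : ℕ) : ℚ) = (n : ℚ) - t := by
      push_cast [Nat.cast_sub (show t ≤ n by omega)]; ring
    rw [this]; ring
  have h2 : ∏ j ∈ Icc 1 n, (((x + n : ℕ) : ℚ) - ((p : ℚ) + (j : ℚ)))
      = (-1 : ℚ) ^ n * ((p - x).descFactorial n : ℚ) := by
    rw [prod_Icc_eq_range n (fun j => ((x + n : ℕ) : ℚ) - ((p : ℚ) + (j : ℚ)))]
    have step : ∀ t ∈ range n, ((x + n : ℕ) : ℚ) - ((p : ℚ) + ((n - t : ℕ) : ℚ))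
        = (-1) * (((p - x : ℕ) : ℚ) - (t : ℚ)) := by
      intro t ht
      simp only [mem_range] at ht
      have e1 : ((n - t : ℕ) : ℚ) = (n : ℚ) - t := by
        push_cast [Nat.cast_sub (show t ≤ n by omega)]; ring
      have e2 : ((p - x : ℕ) : ℚ) = (p : ℚ) - x := by
        push_cast [Nat.cast_sub hxp]; ring
      rw [e1, e2]
      push_cast
      ring
    rw [Finset.prod_congr rfl step, Finset.prod_mul_distrib, Finset.prod_const, card_range,
      desc_prod]
  rw [h1, h2]
  ring

private lemma Sg_eval (p n : ℕ) :
    ∑ x ∈ Icc 1 p, (gp p n).eval ((x + n : ℕ) : ℚ)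
      = (-1 : ℚ) ^ n
          * ((∑ x ∈ Icc 1 p, x.ascFactorial n * (p - x).descFactorial n : ℕ) : ℚ) := by
  rw [Finset.sum_congr rfl (fun x hx => gp_eval_shift p n x (Finset.mem_Icc.1 hx).2),
    Nat.cast_sum, Finset.mul_sum]
  refine Finset.sum_congr rfl fun x _ => ?_
  push_cast
  ring

private lemma hockey_s8 (n m : ℕ) :
    ∑ b ∈ range (m + 1), b.choose n = (m + 1).choose (n + 1) := by
  rcases le_or_gt n m with h | h
  · rw [← Nat.sum_Icc_choose m n]
    refine (Finset.sum_subset (fun b hb => ?_) (fun b hb hb2 => ?_)).symm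
    · simp only [mem_Icc, mem_range] at *; omega
    · simp only [mem_Icc, mem_range] at hb hb2
      exact Nat.choose_eq_zero_of_lt (by omega)
  · rw [Nat.choose_eq_zero_of_lt (by omega)]
    refine Finset.sum_eq_zero fun b hb => ?_
    simp only [mem_range] at hb
    exact Nat.choose_eq_zero_of_lt (by omega)

private lemma GG (n : ℕ) : ∀ r m : ℕ,
    ∑ a ∈ range (m + 1), (a + r).choose r * (m - a).choose n
      = (m + r + 1).choose (n + r + 1) := by
  intro r
  induction r with
  | zero =>
      intro m
      simp only [Nat.add_zero, Nat.choose_zero_right, one_mul]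
      rw [show ∑ a ∈ range (m + 1), (m - a).choose n
            = ∑ a ∈ range (m + 1), (fun b => b.choose n) (m + 1 - 1 - a) from
          Finset.sum_congr rfl fun a ha => by congr 1 <;> omega,
        Finset.sum_range_reflect (fun b => b.choose n) (m + 1), hockey_s8]
  | succ r ih =>
      intro m
      induction m with
      | zero =>
          simp only [Nat.zero_add, Finset.sum_range_one, Nat.zero_sub, Nat.choose_self]
          cases n with
          | zero => simp
          | succ n =>
              simp [Nat.choose_eq_zero_of_lt (show r + 1 + 1 < n + 1 + (r + 1) + 1 by omega)]
      | succ m ihm =>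
          have pascal : ∀ a : ℕ, (a + (r + 1)).choose (r + 1)
              = (a + r).choose r + (a + r).choose (r + 1) := by
            intro a
            rw [show a + (r + 1) = (a + r) + 1 by omega]
            exact Nat.choose_succ_succ _ _
          calc ∑ a ∈ range (m + 1 + 1), (a + (r + 1)).choose (r + 1) * (m + 1 - a).choose n
              = (∑ a ∈ range (m + 1 + 1), (a + r).choose r * (m + 1 - a).choose n)
                + ∑ a ∈ range (m + 1 + 1), (a + r).choose (r + 1) * (m + 1 - a).choose n := by
                rw [← Finset.sum_add_distrib]
                refine Finset.sum_congr rfl fun a _ => ?_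
                rw [pascal a, Nat.add_mul]
            _ = (m + 1 + r + 1).choose (n + r + 1)
                + ∑ a ∈ range (m + 1 + 1), (a + r).choose (r + 1) * (m + 1 - a).choose n := by
                rw [ih (m + 1)]
            _ = (m + 1 + r + 1).choose (n + r + 1) + (m + (r + 1) + 1).choose (n + (r + 1) + 1) := by
                congr 1
                rw [Finset.sum_range_succ']
                have h0 : (0 + r).choose (r + 1) * (m + 1 - 0).choose n = 0 := by
                  rw [show (0 + r) = r by omega, Nat.choose_succ_self, Nat.zero_mul]
                rw [h0, Nat.add_zero]
                rw [show ∑ a ∈ range (m + 1), (a + 1 + r).choose (r + 1) * (m + 1 - (a + 1)).choose n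
                      = ∑ a ∈ range (m + 1), (a + (r + 1)).choose (r + 1) * (m - a).choose n from
                    Finset.sum_congr rfl fun a ha => by congr 2 <;> omega,
                  ihm]
            _ = (m + 1 + (r + 1) + 1).choose (n + (r + 1) + 1) := by
                rw [show m + 1 + (r + 1) + 1 = (m + 1 + r + 1) + 1 by omega,
                  show n + (r + 1) + 1 = (n + r + 1) + 1 by omega,
                  Nat.choose_succ_succ]
                congr 2
                omega

private lemma NN (p n : ℕ) :
    (∑ x ∈ Icc 1 p, x.ascFactorial n * (p - x).descFactorial n)
      = n.factorial * n.factorial * (p + n).choose (2 * n + 1) := by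
  cases p with
  | zero => simp [Nat.choose_eq_zero_of_lt (show n < 2 * n + 1 by omega)]
  | succ m =>
      rw [← Finset.Ico_add_one_right_eq_Icc, Finset.sum_Ico_eq_sum_range]
      rw [show m + 1 + 1 - 1 = m + 1 by omega]
      have term : ∀ a : ℕ, a < m + 1 →
          (1 + a).ascFactorial n * (m + 1 - (1 + a)).descFactorial n
            = n.factorial * n.factorial * ((a + n).choose n * (m - a).choose n) := by
        intro a ha
        rw [show 1 + a = a + 1 by omega, Nat.ascFactorial_eq_factorial_mul_choose,
          show m + 1 - (a + 1) = m - a by omega, Nat.descFactorial_eq_factorial_mul_choose]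
        ring
      rw [Finset.sum_congr rfl (fun a ha => term a (Finset.mem_range.1 ha)), ← Finset.mul_sum]
      have : ∑ a ∈ range (m + 1), (a + n).choose n * (m - a).choose n
          = (m + n + 1).choose (2 * n + 1) := by
        rw [GG n n m]
        congr 1
        omega
      rw [this, show m + 1 + n = m + n + 1 by omega]



private lemma Tzero (p : ℕ) (m n : ℕ) (hmn : m ≠ n) :
    ∑ x ∈ Icc 1 p, (Pp p m).eval (x : ℚ) * (Pp p n).eval (x : ℚ) = 0 := by
  rcases lt_or_gt_of_ne hmn with h | h
  · rw [Tval p m n (le_of_lt h),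
      Polynomial.coeff_eq_zero_of_natDegree_lt (lt_of_le_of_lt (Pp_natDegree p m) h)]
    ring
  · have hT := Tval p n m (le_of_lt h)
    rw [Polynomial.coeff_eq_zero_of_natDegree_lt (lt_of_le_of_lt (Pp_natDegree p n) h)] at hT
    calc ∑ x ∈ Icc 1 p, (Pp p m).eval (x : ℚ) * (Pp p n).eval (x : ℚ)
        = ∑ x ∈ Icc 1 p, (Pp p n).eval (x : ℚ) * (Pp p m).eval (x : ℚ) :=
          Finset.sum_congr rfl fun x _ => mul_comm _ _
      _ = 0 := by rw [hT]; ring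

private lemma Tdiag (p n : ℕ) :
    ∑ x ∈ Icc 1 p, (Pp p n).eval (x : ℚ) * (Pp p n).eval (x : ℚ)
      = (n.factorial : ℚ) ^ 4 * ((p + n).choose (2 * n + 1) : ℚ)
          / ((2 * n).factorial : ℚ) := by
  rw [Tval p n n le_rfl, Pp_coeff_top, Sg_eval, NN]
  have h2 : ((-1 : ℚ)) ^ (n * 2) = 1 := Even.neg_one_pow ⟨n, by ring⟩
  have hne : ((2 * n).factorial : ℚ) ≠ 0 := by exact_mod_cast (Nat.factorial_pos _).ne'
  field_simp
  rw [← pow_mul, h2]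
  push_cast
  ring

private lemma detval (p k : ℕ) :
    Matrix.det (Matrix.of fun i j : Fin k => Spow p ((i : ℕ) + (j : ℕ)))
      = ∏ n ∈ range k,
          (n.factorial : ℚ) ^ 4 * ((p + n).choose (2 * n + 1) : ℚ)
            / ((2 * n).factorial : ℚ) := by
  set M : Matrix (Fin k) (Fin k) ℚ :=
    Matrix.of fun i j : Fin k => Spow p ((i : ℕ) + (j : ℕ)) with hM
  set U : Matrix (Fin k) (Fin k) ℚ := Matrix.of fun m i : Fin k => (Pp p (m : ℕ)).coeff i with hU
  have hUtri : U.BlockTriangular OrderDual.toDual := by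
    intro i j hij
    have hij' : (i : ℕ) < (j : ℕ) := hij
    exact Polynomial.coeff_eq_zero_of_natDegree_lt (lt_of_le_of_lt (Pp_natDegree p i) hij')
  have hUdet : U.det = 1 := by
    rw [Matrix.det_of_lowerTriangular U hUtri]
    refine Finset.prod_eq_one fun m _ => ?_
    exact Pp_coeff_top p (m : ℕ)
  have evalP : ∀ (m : Fin k) (x : ℕ),
      (Pp p (m : ℕ)).eval (x : ℚ) = ∑ i : Fin k, U m i * (x : ℚ) ^ (i : ℕ) := by
    intro m x
    rw [Polynomial.eval_eq_sum_range' (lt_of_le_of_lt (Pp_natDegree p m) m.isLt) ((x : ℚ)),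
      ← Fin.sum_univ_eq_sum_range (fun i => (Pp p (m : ℕ)).coeff i * (x : ℚ) ^ i) k]
    rfl
  have entry : ∀ m n : Fin k, (U * M * Uᵀ) m n
      = ∑ x ∈ Icc 1 p, (Pp p (m : ℕ)).eval (x : ℚ) * (Pp p (n : ℕ)).eval (x : ℚ) := by
    intro m n
    rw [Matrix.mul_apply]
    have h1 : ∀ j : Fin k, (U * M) m j
        = ∑ x ∈ Icc 1 p, (Pp p (m : ℕ)).eval (x : ℚ) * (x : ℚ) ^ (j : ℕ) := by
      intro j
      rw [Matrix.mul_apply]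
      calc ∑ i : Fin k, U m i * M i j
          = ∑ i : Fin k, ∑ x ∈ Icc 1 p, U m i * ((x : ℚ) ^ (i : ℕ) * (x : ℚ) ^ (j : ℕ)) := by
            refine Finset.sum_congr rfl fun i _ => ?_
            have hMij : M i j = ∑ x ∈ Icc 1 p, (x : ℚ) ^ (i : ℕ) * (x : ℚ) ^ (j : ℕ) := by
              show Spow p ((i : ℕ) + (j : ℕ)) = _
              rw [Spow]
              exact Finset.sum_congr rfl fun x _ => pow_add _ _ _
            rw [hMij, Finset.mul_sum]
        _ = ∑ x ∈ Icc 1 p, ∑ i : Fin k, U m i * ((x : ℚ) ^ (i : ℕ) * (x : ℚ) ^ (j : ℕ)) :=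
            Finset.sum_comm
        _ = ∑ x ∈ Icc 1 p, (Pp p (m : ℕ)).eval (x : ℚ) * (x : ℚ) ^ (j : ℕ) := by
            refine Finset.sum_congr rfl fun x _ => ?_
            rw [evalP m x, Finset.sum_mul]
            exact Finset.sum_congr rfl fun i _ => by ring
    calc ∑ j : Fin k, (U * M) m j * Uᵀ j n
        = ∑ j : Fin k, ∑ x ∈ Icc 1 p,
            (Pp p (m : ℕ)).eval (x : ℚ) * (x : ℚ) ^ (j : ℕ) * U n j := by
          refine Finset.sum_congr rfl fun j _ => ?_
          rw [Matrix.transpose_apply, h1 j, Finset.sum_mul]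
      _ = ∑ x ∈ Icc 1 p, ∑ j : Fin k,
            (Pp p (m : ℕ)).eval (x : ℚ) * (x : ℚ) ^ (j : ℕ) * U n j := Finset.sum_comm
      _ = ∑ x ∈ Icc 1 p, (Pp p (m : ℕ)).eval (x : ℚ) * (Pp p (n : ℕ)).eval (x : ℚ) := by
          refine Finset.sum_congr rfl fun x _ => ?_
          rw [evalP n x, Finset.mul_sum]
          exact Finset.sum_congr rfl fun j _ => by ring
  have hdiag : U * M * Uᵀ = Matrix.diagonal (fun n : Fin k =>
      ((n : ℕ).factorial : ℚ) ^ 4 * ((p + (n : ℕ)).choose (2 * (n : ℕ) + 1) : ℚ)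
        / ((2 * (n : ℕ)).factorial : ℚ)) := by
    ext m n
    rcases eq_or_ne m n with rfl | hmn
    · rw [Matrix.diagonal_apply_eq, entry, Tdiag]
    · rw [Matrix.diagonal_apply_ne _ hmn, entry, Tzero p _ _ (fun h => hmn (Fin.ext h))]
  have := congrArg Matrix.det hdiag
  rw [Matrix.det_mul, Matrix.det_mul, Matrix.det_transpose, hUdet, one_mul, mul_one,
    Matrix.det_diagonal] at this
  rw [this, ← Fin.prod_univ_eq_prod_range]

private lemma Vpos (m : ℕ) : (0 : ℚ) < (V m : ℚ) := by
  have : 0 < V m := Finset.prod_pos fun i _ => Nat.factorial_pos i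
  exact_mod_cast this

private lemma Vsucc (m : ℕ) : V (m + 1) = V m * (m + 1).factorial := by
  rw [V, V, Finset.prod_range_succ]

private lemma Vk_prod (k : ℕ) (hk : 1 ≤ k) :
    (V (k - 1) : ℚ) = ∏ n ∈ range k, (n.factorial : ℚ) := by
  rw [V, show k - 1 + 1 = k by omega, Nat.cast_prod]

private lemma V2k_aux : ∀ j : ℕ,
    V (2 * j + 1) = ∏ n ∈ range (j + 1), ((2 * n).factorial * (2 * n + 1).factorial) := by
  intro j
  induction j with
  | zero => simp [V]
  | succ j ih =>
      rw [show 2 * (j + 1) + 1 = (2 * j + 2) + 1 by omega, Vsucc,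
        show 2 * j + 2 = (2 * j + 1) + 1 by omega, Vsucc, ih,
        Finset.prod_range_succ (fun n => (2 * n).factorial * (2 * n + 1).factorial) (j + 1),
        show 2 * (j + 1) = 2 * j + 1 + 1 by omega]
      ring

private lemma V2k (k : ℕ) (hk : 1 ≤ k) :
    (V (2 * k - 1) : ℚ) = ∏ n ∈ range k, (((2 * n).factorial : ℚ) * ((2 * n + 1).factorial : ℚ)) := by
  obtain ⟨j, rfl⟩ : ∃ j, k = j + 1 := ⟨k - 1, by omega⟩
  rw [show 2 * (j + 1) - 1 = 2 * j + 1 by omega, V2k_aux j, Nat.cast_prod]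
  exact Finset.prod_congr rfl fun n _ => by push_cast; ring

private lemma hval_descF (p n : ℕ) :
    (n.factorial : ℚ) ^ 4 * ((p + n).choose (2 * n + 1) : ℚ) / ((2 * n).factorial : ℚ)
      = (n.factorial : ℚ) ^ 4 / (((2 * n).factorial : ℚ) * ((2 * n + 1).factorial : ℚ))
          * (((p + n).descFactorial (2 * n + 1) : ℕ) : ℚ) := by
  have h := Nat.descFactorial_eq_factorial_mul_choose (p + n) (2 * n + 1)
  have h2 : (((p + n).descFactorial (2 * n + 1) : ℕ) : ℚ)
      = ((2 * n + 1).factorial : ℚ) * ((p + n).choose (2 * n + 1) : ℚ) := by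
    exact_mod_cast congrArg (Nat.cast : ℕ → ℚ) h
  have hne1 : ((2 * n).factorial : ℚ) ≠ 0 := by exact_mod_cast (Nat.factorial_pos _).ne'
  have hne2 : ((2 * n + 1).factorial : ℚ) ≠ 0 := by exact_mod_cast (Nat.factorial_pos _).ne'
  rw [h2]
  field_simp

private lemma detval' (p k : ℕ) (hk : 1 ≤ k) :
    Matrix.det (Matrix.of fun i j : Fin k => Spow p ((i : ℕ) + (j : ℕ)))
      = ((V (k - 1) : ℚ) ^ 4 / (V (2 * k - 1) : ℚ))
          * ∏ n ∈ range k, (((p + n).descFactorial (2 * n + 1) : ℕ) : ℚ) := by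
  rw [detval p k, Finset.prod_congr rfl (fun n _ => hval_descF p n),
    Finset.prod_mul_distrib, Finset.prod_div_distrib, Finset.prod_pow,
    ← Vk_prod k hk, ← V2k k hk]

private lemma prodIcc (F : ℤ → ℚ) : ∀ k : ℕ,
    ∏ m ∈ Finset.Icc (-(k : ℤ) + 1) ((k : ℤ) - 1), F m ^ (k - m.natAbs)
      = ∏ n ∈ range k, ∏ i ∈ range (2 * n + 1), F ((n : ℤ) - (i : ℤ)) := by
  intro k
  induction k with
  | zero =>
      rw [show (-(0:ℕ) + 1 : ℤ) = 1 by simp, show ((0:ℕ) - 1 : ℤ) = -1 by simp,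
        Finset.Icc_eq_empty (by omega)]
      simp
  | succ k ih =>
      rw [Finset.prod_range_succ, ← ih,
        show (-(k + 1 : ℕ) + 1 : ℤ) = -(k : ℤ) by push_cast; ring,
        show ((k + 1 : ℕ) - 1 : ℤ) = (k : ℤ) by push_cast; ring]
      have step1 : ∏ m ∈ Finset.Icc (-(k : ℤ)) (k : ℤ), F m ^ ((k + 1) - m.natAbs)
          = (∏ m ∈ Finset.Icc (-(k : ℤ)) (k : ℤ), F m ^ (k - m.natAbs))
              * ∏ m ∈ Finset.Icc (-(k : ℤ)) (k : ℤ), F m := by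
        rw [← Finset.prod_mul_distrib]
        refine Finset.prod_congr rfl fun m hm => ?_
        simp only [Finset.mem_Icc] at hm
        rw [show (k + 1) - m.natAbs = (k - m.natAbs) + 1 by omega, pow_succ]
      have step2 : ∏ m ∈ Finset.Icc (-(k : ℤ)) (k : ℤ), F m ^ (k - m.natAbs)
          = ∏ m ∈ Finset.Icc (-(k : ℤ) + 1) ((k : ℤ) - 1), F m ^ (k - m.natAbs) := by
        symm
        refine Finset.prod_subset (fun m hm => ?_) (fun m hm hm2 => ?_)
        · simp only [Finset.mem_Icc] at *; omega
        · simp only [Finset.mem_Icc] at hm hm2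
          rw [show k - m.natAbs = 0 by omega, pow_zero]
      have step3 : ∏ m ∈ Finset.Icc (-(k : ℤ)) (k : ℤ), F m
          = ∏ i ∈ range (2 * k + 1), F ((k : ℤ) - (i : ℤ)) := by
        refine Finset.prod_bij' (i := fun m _ => ((k : ℤ) - m).toNat)
          (j := fun i _ => (k : ℤ) - (i : ℤ)) ?_ ?_ ?_ ?_ ?_
        · intro m hm
          simp only [Finset.mem_Icc] at hm
          simp only [Finset.mem_range]
          omega
        · intro i hi
          simp only [Finset.mem_range] at hi
          simp only [Finset.mem_Icc]
          omega
        · intro m hm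
          simp only [Finset.mem_Icc] at hm
          omega
        · intro i hi
          simp only [Finset.mem_range] at hi
          omega
        · intro m hm
          simp only [Finset.mem_Icc] at hm
          congr 1
          omega
      rw [show ((k:ℕ) + 1 : ℕ) = k + 1 from rfl]
      rw [step1, step2, step3]

private lemma descF_eq_double (p k : ℕ) :
    ∏ n ∈ range k, (((p + n).descFactorial (2 * n + 1) : ℕ) : ℚ)
      = ∏ n ∈ range k, ∏ i ∈ range (2 * n + 1), ((p : ℚ) + Int.cast ((n : ℤ) - (i : ℤ))) := by
  refine Finset.prod_congr rfl fun n _ => ?_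
  rw [← desc_prod (2 * n + 1) (p + n)]
  refine Finset.prod_congr rfl fun i _ => ?_
  push_cast
  ring

private lemma V_plus (p : ℕ) (hp : 1 ≤ p) : ∀ k,
    V (p + k - 1) = V (p - 1) * ∏ n ∈ range k, (p + n).factorial := by
  intro k
  induction k with
  | zero => simp
  | succ k ih =>
      rw [show p + (k + 1) - 1 = (p + k - 1) + 1 by omega, Vsucc, ih, Finset.prod_range_succ,
        show p + k - 1 + 1 = p + k by omega]
      ring

private lemma V_minus (p : ℕ) : ∀ k, k + 1 ≤ p →
    V (p - 1) = V (p - k - 1) * ∏ n ∈ range k, (p - n - 1).factorial := by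
  intro k
  induction k with
  | zero => intro _; simp
  | succ k ih =>
      intro hp
      have h : V (p - k - 1) = V (p - (k + 1) - 1) * (p - k - 1).factorial := by
        rw [show p - k - 1 = (p - (k + 1) - 1) + 1 by omega, Vsucc,
          show p - (k + 1) - 1 + 1 = p - k - 1 by omega]
      rw [ih (by omega), h, Finset.prod_range_succ]
      ring

private lemma descF_fact (p n : ℕ) (h : n + 1 ≤ p) :
    (p + n).descFactorial (2 * n + 1) * (p - n - 1).factorial = (p + n).factorial := by
  have h2 := Nat.factorial_mul_descFactorial (show 2 * n + 1 ≤ p + n by omega)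
  rw [show p + n - (2 * n + 1) = p - n - 1 by omega] at h2
  rw [mul_comm]
  exact h2

private lemma nat_key (p k : ℕ) (hp : k + 1 ≤ p) :
    V (p - 1) * V (p - 1) * ∏ n ∈ range k, (p + n).descFactorial (2 * n + 1)
      = V (p + k - 1) * V (p - k - 1) := by
  have h1 := V_plus p (by omega) k
  have h2 := V_minus p k hp
  calc V (p - 1) * V (p - 1) * ∏ n ∈ range k, (p + n).descFactorial (2 * n + 1)
      = V (p - 1) * (V (p - k - 1) * ∏ n ∈ range k, (p - n - 1).factorial)
          * ∏ n ∈ range k, (p + n).descFactorial (2 * n + 1) := by rw [← h2]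
    _ = V (p - 1) * V (p - k - 1)
          * ∏ n ∈ range k, ((p + n).descFactorial (2 * n + 1) * (p - n - 1).factorial) := by
        rw [Finset.prod_mul_distrib]; ring
    _ = V (p - 1) * V (p - k - 1) * ∏ n ∈ range k, (p + n).factorial := by
        rw [Finset.prod_congr rfl fun n hn =>
          descF_fact p n (by simp only [Finset.mem_range] at hn; omega)]
    _ = V (p + k - 1) * V (p - k - 1) := by rw [h1]; ring

/-- Zavrotsky's determinant evaluation: for `p ≥ 0` and `k ≥ 1`,
`det(S_p^{i+j})_{0≤i,j≤k-1} = (V_{k-1}^4 / V_{2k-1}) · ∏_{m=-(k-1)}^{k-1} (p+m)^{k-|m|}`;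
in particular, for `p ≥ k+1` it equals `V_{p+k-1} V_{p-k-1} V_{k-1}^4 / (V_{p-1}^2 V_{2k-1})`. -/
theorem hankel_powerSum_det (p k : ℕ) (hk : 1 ≤ k) :
    (Matrix.det (Matrix.of fun i j : Fin k => Spow p ((i : ℕ) + (j : ℕ))) =
        ((V (k - 1) : ℚ) ^ 4 / (V (2 * k - 1) : ℚ)) *
          ∏ m ∈ Finset.Icc (-(k : ℤ) + 1) ((k : ℤ) - 1),
            ((p : ℚ) + (m : ℚ)) ^ (k - m.natAbs)) ∧
      (k + 1 ≤ p →
        Matrix.det (Matrix.of fun i j : Fin k => Spow p ((i : ℕ) + (j : ℕ))) =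
          (V (p + k - 1) : ℚ) * (V (p - k - 1) : ℚ) * (V (k - 1) : ℚ) ^ 4 /
            ((V (p - 1) : ℚ) ^ 2 * (V (2 * k - 1) : ℚ))) := by
  constructor
  · rw [detval' p k hk, prodIcc (fun m => (p : ℚ) + (m : ℚ)) k, ← descF_eq_double p k]
  · intro hp
    rw [detval' p k hk]
    have hcast : (V (p - 1) : ℚ) * (V (p - 1) : ℚ)
          * ∏ n ∈ range k, (((p + n).descFactorial (2 * n + 1) : ℕ) : ℚ)
        = (V (p + k - 1) : ℚ) * (V (p - k - 1) : ℚ) := by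
      exact_mod_cast congrArg (Nat.cast : ℕ → ℚ) (nat_key p k hp)
    have h2k : (V (2 * k - 1) : ℚ) ≠ 0 := (Vpos _).ne'
    have hp1 : (V (p - 1) : ℚ) ≠ 0 := (Vpos _).ne'
    rw [div_mul_eq_mul_div, div_eq_div_iff h2k (mul_ne_zero (pow_ne_zero 2 hp1) h2k)]
    linear_combination ((V (k - 1) : ℚ) ^ 4 * (V (2 * k - 1) : ℚ)) * hcast
end

section
/- The k by k Hilbert determinant det( (1/(i+j+1))_{0≤i,j≤k-1} ) equals V_{k-1}^4 / V_{2k-1}, where V_n = 1!·2!···n!. -/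
open Matrix Finset

theorem cauchy_det : ∀ (n : ℕ) (x y : Fin n → ℚ), (∀ i j, x i + y j ≠ 0) →
    Matrix.det (Matrix.of fun i j => 1 / (x i + y j)) =
      (∏ i, ∏ j ∈ Finset.Ioi i, ((x j - x i) * (y j - y i))) / (∏ i, ∏ j, (x i + y j)) := by
  intro n
  induction n with
  | zero => intro x y h; simp [Matrix.det_isEmpty]
  | succ n IH =>
    intro x y h
    set A : Matrix (Fin (n+1)) (Fin (n+1)) ℚ := Matrix.of fun i j => 1 / (x i + y j) with hA
    -- Step 1: row operation, subtract row 0 from every other row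
    set B : Matrix (Fin (n+1)) (Fin (n+1)) ℚ := Matrix.of fun i j =>
      if i = 0 then 1 / (x 0 + y j) else (x 0 - x i) / ((x i + y j) * (x 0 + y j)) with hB
    have hAB : det A = det B := by
      apply Matrix.det_eq_of_forall_row_eq_smul_add_const
        (fun i => if i = 0 then (0:ℚ) else 1) 0 (by simp)
      intro i j
      by_cases hi : i = 0
      · simp [hA, hB, hi]
      · have h1 := h i j; have h2 := h 0 j
        simp only [hA, hB, Matrix.of_apply, if_neg hi, eq_self_iff_true, if_true]
        field_simp
        ring
    -- Step 2: factor rows and columns out of B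
    set C : Matrix (Fin (n+1)) (Fin (n+1)) ℚ := Matrix.of fun i j =>
      if i = 0 then (1:ℚ) else 1 / (x i + y j) with hC
    have hBC : det B = (∏ j, 1 / (x 0 + y j)) *
        ((∏ i, (if i = 0 then (1:ℚ) else x 0 - x i)) * det C) := by
      rw [← Matrix.det_mul_column (fun i => if i = 0 then (1:ℚ) else x 0 - x i) C,
        ← Matrix.det_mul_row (fun j => 1 / (x 0 + y j))]
      congr 1
      ext i j
      by_cases hi : i = 0
      · simp [hB, hC, hi]
      · have h1 := h i j; have h2 := h 0 j
        simp only [hB, hC, Matrix.of_apply, if_neg hi]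
        field_simp
    -- Step 3: column operation on C, subtract column 0 from every other column
    set D : Matrix (Fin (n+1)) (Fin (n+1)) ℚ := Matrix.of fun i j =>
      if i = 0 then (if j = 0 then (1:ℚ) else 0)
      else (if j = 0 then 1 / (x i + y 0) else (y 0 - y j) / ((x i + y j) * (x i + y 0))) with hD
    have hCD : det C = det D := by
      rw [← Matrix.det_transpose C, ← Matrix.det_transpose D]
      apply Matrix.det_eq_of_forall_row_eq_smul_add_const
        (fun j => if j = 0 then (0:ℚ) else 1) 0 (by simp)
      intro j i
      by_cases hj : j = 0
      · simp [hC, hD, hj]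
      · by_cases hi : i = 0
        · simp [hC, hD, hi, hj]
        · have h1 := h i j; have h2 := h i 0
          simp only [hC, hD, Matrix.transpose_apply, Matrix.of_apply, if_neg hi, if_neg hj,
            eq_self_iff_true, if_true]
          field_simp
          ring
    -- Step 4: factor rows and columns out of D
    set E : Matrix (Fin (n+1)) (Fin (n+1)) ℚ := Matrix.of fun i j =>
      if i = 0 then (if j = 0 then (1:ℚ) else 0)
      else (if j = 0 then (1:ℚ) else 1 / (x i + y j)) with hE
    have hDE : det D = (∏ j, (if j = 0 then (1:ℚ) else y 0 - y j)) *
        ((∏ i, (if i = 0 then (1:ℚ) else 1 / (x i + y 0))) * det E) := by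
      rw [← Matrix.det_mul_column (fun i => if i = 0 then (1:ℚ) else 1 / (x i + y 0)) E,
        ← Matrix.det_mul_row (fun j => if j = 0 then (1:ℚ) else y 0 - y j)]
      congr 1
      ext i j
      by_cases hi : i = 0
      · by_cases hj : j = 0 <;> simp [hD, hE, hi, hj]
      · by_cases hj : j = 0
        · simp [hD, hE, hi, hj]
        · have h1 := h i j; have h2 := h i 0
          simp only [hD, hE, Matrix.of_apply, if_neg hi, if_neg hj]
          field_simp
    -- Step 5: expand det E along row 0
    have hEdet : det E = det (Matrix.of fun i j : Fin n =>
        1 / (x i.succ + y j.succ)) := by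
      rw [Matrix.det_succ_row_zero]
      rw [Finset.sum_eq_single 0]
      · have h1 : ((-1:ℚ)) ^ ((0 : Fin (n+1)) : ℕ) * E 0 0 = 1 := by simp [hE]
        rw [h1, one_mul]
        have h2 : E.submatrix Fin.succ (Fin.succAbove 0) =
            Matrix.of fun i j : Fin n => 1 / (x i.succ + y j.succ) := by
          ext i j
          simp [hE, Fin.succ_ne_zero, Fin.succAbove_zero]
        rw [h2]
      · intro j _ hj
        simp [hE, hj]
      · simp
    -- assemble
    have hshift : ∀ i j : Fin n, (x ∘ Fin.succ) i + (y ∘ Fin.succ) j ≠ 0 := fun i j => h _ _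
    have hIH := IH (x ∘ Fin.succ) (y ∘ Fin.succ) hshift
    simp only [Function.comp] at hIH
    rw [hAB, hBC, hCD, hDE, hEdet, hIH]
    -- simplify the `if` products
    have hpu : ∀ f : Fin (n+1) → ℚ, (∏ i, (if i = 0 then (1:ℚ) else f i)) =
        ∏ i : Fin n, f i.succ := by
      intro f
      rw [Fin.prod_univ_succ]
      simp [Fin.succ_ne_zero]
    rw [hpu, hpu, hpu]
    -- split the target products at index 0
    rw [show (∏ i : Fin (n+1), ∏ j ∈ Finset.Ioi i, ((x j - x i) * (y j - y i))) =
        (∏ j : Fin n, ((x j.succ - x 0) * (y j.succ - y 0))) *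
          ∏ i : Fin n, ∏ j ∈ Finset.Ioi i,
            ((x j.succ - x i.succ) * (y j.succ - y i.succ)) by
      rw [Fin.prod_univ_succ, Fin.prod_Ioi_zero]
      congr 1
      exact Finset.prod_congr rfl fun i _ => Fin.prod_Ioi_succ _ i]
    rw [show (∏ i : Fin (n+1), ∏ j : Fin (n+1), (x i + y j)) =
        ((x 0 + y 0) * ∏ j : Fin n, (x 0 + y j.succ)) *
          ((∏ i : Fin n, (x i.succ + y 0)) *
            ∏ i : Fin n, ∏ j : Fin n, (x i.succ + y j.succ)) by
      rw [Fin.prod_univ_succ, Fin.prod_univ_succ]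
      rw [show (∏ i : Fin n, ∏ j : Fin (n+1), (x i.succ + y j)) =
          ∏ i : Fin n, ((x i.succ + y 0) * ∏ j : Fin n, (x i.succ + y j.succ)) from
        Finset.prod_congr rfl fun i _ => Fin.prod_univ_succ _]
      rw [Finset.prod_mul_distrib]]
    rw [show (∏ j : Fin (n+1), 1 / (x 0 + y j)) =
        ((x 0 + y 0) * ∏ j : Fin n, (x 0 + y j.succ))⁻¹ by
      rw [Fin.prod_univ_succ, mul_inv, ← Finset.prod_inv_distrib]
      simp [one_div]]
    have hsign : (∏ i : Fin n, (x 0 - x i.succ)) * (∏ i : Fin n, (y 0 - y i.succ)) =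
        ∏ i : Fin n, ((x i.succ - x 0) * (y i.succ - y 0)) := by
      rw [← Finset.prod_mul_distrib]
      exact Finset.prod_congr rfl fun i _ => by ring
    have hne0 : x 0 + y 0 ≠ 0 := h 0 0
    have hne1 : (∏ j : Fin n, (x 0 + y j.succ)) ≠ 0 :=
      Finset.prod_ne_zero_iff.2 fun j _ => h 0 j.succ
    have hne2 : (∏ i : Fin n, (x i.succ + y 0)) ≠ 0 :=
      Finset.prod_ne_zero_iff.2 fun i _ => h i.succ 0
    have hne3 : (∏ i : Fin n, ∏ j : Fin n, (x i.succ + y j.succ)) ≠ 0 :=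
      Finset.prod_ne_zero_iff.2 fun i _ => Finset.prod_ne_zero_iff.2 fun j _ => h i.succ j.succ
    rw [show (∏ i : Fin n, 1 / (x i.succ + y 0)) = (∏ i : Fin n, (x i.succ + y 0))⁻¹ by
      simp only [one_div, ← Finset.prod_inv_distrib]]
    field_simp
    rw [← hsign]
    ring

lemma V_succ (n : ℕ) : V (n + 1) = V n * Nat.factorial (n + 1) := by
  rw [V, V, Finset.prod_range_succ]

lemma fact_mul_prod (a : ℕ) : ∀ b : ℕ,
    Nat.factorial a * ∏ j ∈ Finset.range b, (a + j + 1) = Nat.factorial (a + b) := by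
  intro b
  induction b with
  | zero => simp
  | succ b ih =>
    rw [Finset.prod_range_succ, ← mul_assoc, ih, ← Nat.add_assoc]
    rw [show a + b + 1 = (a + b) + 1 by ring, Nat.factorial_succ]
    ring

lemma prod_diff_eq_V : ∀ m : ℕ,
    (∏ i : Fin (m + 1), ∏ j ∈ Finset.Ioi i, ((j : ℕ) - (i : ℕ))) = V m := by
  intro m
  induction m with
  | zero => simp [V]
  | succ m ih =>
    rw [Fin.prod_univ_succ, Fin.prod_Ioi_zero]
    have h2 : (∏ i : Fin (m+1), ∏ j ∈ Finset.Ioi i.succ, ((j : ℕ) - ((i.succ : Fin (m+2)) : ℕ)))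
        = V m := by
      rw [← ih]
      apply Finset.prod_congr rfl
      intro i _
      rw [Fin.prod_Ioi_succ]
      apply Finset.prod_congr rfl
      intro j _
      simp [Fin.val_succ]
    rw [h2]
    have h3 : (∏ j : Fin (m+1), ((j.succ : ℕ) - ((0 : Fin (m+2)) : ℕ)))
        = Nat.factorial (m+1) := by
      simp only [Fin.val_zero, Nat.sub_zero, Fin.val_succ]
      rw [Fin.prod_univ_eq_prod_range (fun x => x + 1) (m+1)]
      exact Finset.prod_range_add_one_eq_factorial (m+1)
    rw [h3, V_succ]
    ring

lemma hilb_denom : ∀ m : ℕ,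
    (∏ i : Fin (m+1), ∏ j : Fin (m+1), ((i : ℕ) + (j : ℕ) + 1)) * V m ^ 2 = V (2 * m + 1) := by
  intro m
  induction m with
  | zero => simp [V]
  | succ m ih =>
    have hsplit : (∏ i : Fin (m+2), ∏ j : Fin (m+2), ((i : ℕ) + (j : ℕ) + 1)) =
        (∏ i : Fin (m+1), ∏ j : Fin (m+1), ((i : ℕ) + (j : ℕ) + 1)) *
          ((∏ i ∈ Finset.range (m+1), ((m+1) + i + 1)) *
            ∏ j ∈ Finset.range (m+2), ((m+1) + j + 1)) := by
      rw [Fin.prod_univ_castSucc]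
      rw [show (∏ i : Fin (m+1), ∏ j : Fin (m+2),
          (((i.castSucc : Fin (m+2)) : ℕ) + (j : ℕ) + 1)) =
          ∏ i : Fin (m+1), ((∏ j : Fin (m+1), ((i : ℕ) + (j : ℕ) + 1)) * ((i:ℕ) + (m+1) + 1)) by
        apply Finset.prod_congr rfl
        intro i _
        rw [Fin.prod_univ_castSucc]
        simp]
      rw [Finset.prod_mul_distrib]
      rw [Fin.prod_univ_eq_prod_range (fun i => (i + (m+1) + 1)) (m+1)]
      rw [show (∏ j : Fin (m+2), (((Fin.last (m+1) : Fin (m+2)) : ℕ) + (j : ℕ) + 1)) =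
          ∏ j ∈ Finset.range (m+2), ((m+1) + j + 1) by
        rw [show (∏ j : Fin (m+2), (((Fin.last (m+1) : Fin (m+2)) : ℕ) + (j : ℕ) + 1)) =
            ∏ j : Fin (m+2), ((m+1) + (j:ℕ) + 1) from Finset.prod_congr rfl (by simp)]
        exact Fin.prod_univ_eq_prod_range (fun j => ((m+1) + j + 1)) (m+2)]
      rw [show (∏ i ∈ Finset.range (m+1), (i + (m+1) + 1)) =
          ∏ i ∈ Finset.range (m+1), ((m+1) + i + 1) by
        apply Finset.prod_congr rfl; intro i _; ring]
      ring
    have key1 : Nat.factorial (m+1) * (∏ i ∈ Finset.range (m+1), ((m+1) + i + 1)) =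
        Nat.factorial (2*m+2) := by
      rw [fact_mul_prod]; congr 1; ring
    have key2 : Nat.factorial (m+1) * (∏ j ∈ Finset.range (m+2), ((m+1) + j + 1)) =
        Nat.factorial (2*m+3) := by
      rw [fact_mul_prod]; congr 1; ring
    rw [hsplit, V_succ]
    rw [show 2 * (m+1) + 1 = (2*m+1+1)+1 by ring, V_succ, V_succ]
    rw [show 2*m+1+1 = 2*m+2 by ring, show 2*m+1+1+1 = 2*m+3 by ring]
    rw [← ih, ← key1, ← key2]
    ring

/-- The `k` by `k` Hilbert determinant `det(1/(i+j+1))` equals `V_{k-1}^4 / V_{2k-1}`. -/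
theorem hilbert_det (k : ℕ) (hk : 0 < k) :
    Matrix.det (Matrix.of fun i j : Fin k =>
        (1 : ℚ) / ((i : ℕ) + (j : ℕ) + 1 : ℚ)) =
      (V (k - 1) : ℚ) ^ 4 / (V (2 * k - 1) : ℚ) := by
  obtain ⟨m, rfl⟩ : ∃ m, k = m + 1 := ⟨k - 1, by omega⟩
  set x : Fin (m+1) → ℚ := fun i => ((i : ℕ) : ℚ) with hx
  set y : Fin (m+1) → ℚ := fun j => ((j : ℕ) : ℚ) + 1 with hy
  have h : ∀ i j, x i + y j ≠ 0 := by
    intro i j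
    simp only [hx, hy]
    positivity
  have hc := cauchy_det (m+1) x y h
  rw [show (Matrix.of fun i j : Fin (m+1) => (1 : ℚ) / ((i : ℕ) + (j : ℕ) + 1 : ℚ)) =
      Matrix.of (fun i j => 1 / (x i + y j)) by
    ext i j
    simp only [hx, hy, Matrix.of_apply]
    ring_nf]
  rw [hc]
  -- numerator
  have hnum : (∏ i : Fin (m+1), ∏ j ∈ Finset.Ioi i, ((x j - x i) * (y j - y i)))
      = ((V m : ℚ)) ^ 2 := by
    have step : ∀ i : Fin (m+1), ∀ j ∈ Finset.Ioi i,
        (x j - x i) * (y j - y i) = ((((j:ℕ) - (i:ℕ) : ℕ)) : ℚ) ^ 2 := by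
      intro i j hj
      have hlt : i < j := Finset.mem_Ioi.mp hj
      have hij : (i : ℕ) ≤ (j : ℕ) := le_of_lt hlt
      rw [Nat.cast_sub hij]
      simp only [hx, hy]
      ring
    rw [Finset.prod_congr rfl fun i _ => Finset.prod_congr rfl (step i)]
    simp only [Finset.prod_pow]
    rw [show (∏ i : Fin (m+1), ∏ j ∈ Finset.Ioi i, ((((j:ℕ) - (i:ℕ) : ℕ)) : ℚ))
        = ((∏ i : Fin (m+1), ∏ j ∈ Finset.Ioi i, ((j:ℕ) - (i:ℕ)) : ℕ) : ℚ) by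
      push_cast
      rfl]
    rw [prod_diff_eq_V m]
  rw [hnum]
  -- denominator
  have hden : (∏ i : Fin (m+1), ∏ j : Fin (m+1), (x i + y j))
      = ((∏ i : Fin (m+1), ∏ j : Fin (m+1), ((i:ℕ) + (j:ℕ) + 1) : ℕ) : ℚ) := by
    push_cast
    apply Finset.prod_congr rfl
    intro i _
    apply Finset.prod_congr rfl
    intro j _
    simp only [hx, hy]
    ring
  rw [hden]
  have hg := hilb_denom m
  have hgQ : ((∏ i : Fin (m+1), ∏ j : Fin (m+1), ((i:ℕ) + (j:ℕ) + 1) : ℕ) : ℚ) * (V m : ℚ)^2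
      = (V (2*m+1) : ℚ) := by exact_mod_cast congrArg (Nat.cast : ℕ → ℚ) hg
  have hgne : ((∏ i : Fin (m+1), ∏ j : Fin (m+1), ((i:ℕ) + (j:ℕ) + 1) : ℕ) : ℚ) ≠ 0 := by
    have : 0 < ∏ i : Fin (m+1), ∏ j : Fin (m+1), ((i:ℕ) + (j:ℕ) + 1) :=
      Finset.prod_pos fun i _ => Finset.prod_pos fun j _ => by omega
    exact_mod_cast this.ne'
  have hVne : (V (2*m+1) : ℚ) ≠ 0 := by
    have : 0 < V (2*m+1) := Finset.prod_pos fun i _ => Nat.factorial_pos i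
    exact_mod_cast this.ne'
  rw [show m + 1 - 1 = m by omega, show 2 * (m+1) - 1 = 2*m+1 by omega]
  rw [div_eq_div_iff hgne hVne, ← hgQ]
  ring
end
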